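/- arXiv:cs/0605139 — 7 statements merged into one kernel-verified Lean document; each statement's English description precedes it below -/
import Mathlib

section
/- Let n be a positive integer and f a Boolean function of n variables. Then AI(f) = ⌈n/2⌉ if and only if both matrices V(1_f) and V(0_f) have rank equal to ∑_{i=0}^{⌈n/2⌉−1} C(n,i) over F_2. -/
/-- Hamming weight of a point of `F_2^n`. -/
def wtB {n : ℕ} (X : Fin n → ZMod 2) : ℕ :=
  (Finset.univ.filter (fun i => X i = 1)).card

/-- Coefficient of the monomial `∏_{i ∈ S} x_i` in the algebraic normal form of `f`. -/
def anfCoeff {n : ℕ} (f : (Fin n → ZMod 2) → ZMod 2) (S : Finset (Fin n)) : ZMod 2 :=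
  ∑ x ∈ Finset.univ.filter (fun x : Fin n → ZMod 2 => ∀ i, x i = 1 → i ∈ S), f x

/-- Algebraic degree of a Boolean function (degree of its ANF). -/
def degB {n : ℕ} (f : (Fin n → ZMod 2) → ZMod 2) : ℕ :=
  (Finset.univ.filter (fun S : Finset (Fin n) => anfCoeff f S ≠ 0)).sup Finset.card

/-- `g` is an annihilator of `f` : `g` is nonzero and `f · g = 0`. -/
def IsAnnihilator {n : ℕ} (f g : (Fin n → ZMod 2) → ZMod 2) : Prop :=
  g ≠ 0 ∧ ∀ x, f x * g x = 0

/-- Algebraic immunity: minimal degree of an annihilator of `f` or of `f ⊕ 1`. -/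
noncomputable def AI {n : ℕ} (f : (Fin n → ZMod 2) → ZMod 2) : ℕ :=
  sInf {d | ∃ g, (IsAnnihilator f g ∨ IsAnnihilator (fun x => f x + 1) g) ∧ degB g = d}

/-- Matrix whose rows (indexed by the set `T`) are the evaluation vectors `v(X)`, `X ∈ T`,
of all monomials of degree at most `D`. -/
def VSet {n : ℕ} (D : ℕ) (T : Set (Fin n → ZMod 2)) :
    Matrix T {S : Finset (Fin n) // S.card ≤ D} (ZMod 2) :=
  fun x S => ∏ i ∈ S.1, (x : Fin n → ZMod 2) i

/-- Matrix whose rows (listed according to the enumeration `Y`) are the evaluation vectors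
`v(Y r)` of all monomials of degree at most `D`. -/
def VEnum {n : ℕ} (D : ℕ) {N : ℕ} (Y : Fin N → (Fin n → ZMod 2)) :
    Matrix (Fin N) {S : Finset (Fin n) // S.card ≤ D} (ZMod 2) :=
  fun r S => ∏ i ∈ S.1, Y r i
namespace BFaux

variable {n : ℕ}

/-- support of a boolean point -/
def supp (x : Fin n → ZMod 2) : Finset (Fin n) := Finset.univ.filter (fun i => x i = 1)

/-- point from a support -/
def pt (U : Finset (Fin n)) : Fin n → ZMod 2 := fun i => if i ∈ U then 1 else 0

lemma zmod2_cases (a : ZMod 2) : a = 0 ∨ a = 1 := by fin_cases a <;> [exact Or.inl rfl; exact Or.inr rfl]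

lemma mem_supp {x : Fin n → ZMod 2} {i : Fin n} : i ∈ supp x ↔ x i = 1 := by
  simp [supp]

lemma supp_pt (U : Finset (Fin n)) : supp (pt U) = U := by
  ext i; by_cases h : i ∈ U <;> simp [mem_supp, pt, h]

lemma pt_supp (x : Fin n → ZMod 2) : pt (supp x) = x := by
  funext i
  rcases zmod2_cases (x i) with h | h <;> simp [pt, mem_supp, h]

/-- equivalence to finsets -/
def suppEquiv : (Fin n → ZMod 2) ≃ Finset (Fin n) where
  toFun := supp
  invFun := pt
  left_inv := pt_supp
  right_inv := supp_pt

end BFaux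

namespace BFaux
variable {n : ℕ}

lemma count_lemma (A B : Finset (Fin n)) :
    ((((Finset.univ : Finset (Finset (Fin n))).filter fun S => A ⊆ S ∧ S ⊆ B).card : ZMod 2))
      = if A = B then 1 else 0 := by
  by_cases hAB : A ⊆ B
  · have he : ((Finset.univ : Finset (Finset (Fin n))).filter fun S => A ⊆ S ∧ S ⊆ B)
        = Finset.Icc A B := by
      ext S; simp [Finset.mem_Icc, Finset.le_iff_subset]
    rw [he, Finset.card_Icc_finset hAB]
    by_cases h : A = B
    · simp [h]
    · have hlt : A.card < B.card := Finset.card_lt_card (hAB.ssubset_of_ne h)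
      have hm : B.card - A.card ≠ 0 := by omega
      push_cast
      rw [if_neg h]
      have : (2 : ZMod 2) = 0 := by decide
      rw [this, zero_pow hm]
  · have h : A ≠ B := fun h => hAB (h ▸ subset_refl A)
    have he : ((Finset.univ : Finset (Finset (Fin n))).filter fun S => A ⊆ S ∧ S ⊆ B)
        = ∅ := by
      ext S; simp only [Finset.mem_filter, Finset.mem_univ, true_and, Finset.notMem_empty,
        iff_false]
      rintro ⟨h1, h2⟩; exact hAB (h1.trans h2)
    rw [he, if_neg h]; simp

lemma sum_indicator (A B : Finset (Fin n)) :
    ∑ S : Finset (Fin n), (if A ⊆ S then (1 : ZMod 2) else 0) * (if S ⊆ B then 1 else 0)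
      = if A = B then 1 else 0 := by
  rw [← count_lemma A B]
  rw [Finset.card_filter]
  push_cast
  apply Finset.sum_congr rfl
  intro S _
  by_cases h1 : A ⊆ S <;> by_cases h2 : S ⊆ B <;> simp [h1, h2]

lemma anfCoeff_eq (f : (Fin n → ZMod 2) → ZMod 2) (S : Finset (Fin n)) :
    anfCoeff f S = ∑ U ∈ S.powerset, f (pt U) := by
  unfold anfCoeff
  apply Finset.sum_nbij' (i := supp) (j := pt)
  · intro x hx
    simp only [Finset.mem_filter, Finset.mem_univ, true_and] at hx
    simp only [Finset.mem_powerset]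
    intro i hi; exact hx i (mem_supp.mp hi)
  · intro U hU
    simp only [Finset.mem_powerset] at hU
    simp only [Finset.mem_filter, Finset.mem_univ, true_and]
    intro i hi
    by_cases h : i ∈ U
    · exact hU h
    · simp [pt, h] at hi
  · intro x _; exact pt_supp x
  · intro U _; exact supp_pt U
  · intro x _; rw [pt_supp]

lemma mono_eq (S : Finset (Fin n)) (x : Fin n → ZMod 2) :
    ∏ i ∈ S, x i = if S ⊆ supp x then 1 else 0 := by
  by_cases h : S ⊆ supp x
  · rw [if_pos h]
    exact Finset.prod_eq_one fun i hi => mem_supp.mp (h hi)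
  · rw [if_neg h]
    obtain ⟨i, hiS, hix⟩ := Finset.not_subset.mp h
    apply Finset.prod_eq_zero hiS
    rcases zmod2_cases (x i) with h0 | h1
    · exact h0
    · exact absurd (mem_supp.mpr h1) hix

end BFaux

namespace BFaux
variable {n : ℕ}

lemma expand_step (g : Finset (Fin n) → ZMod 2) (S B : Finset (Fin n)) :
    (∑ U ∈ S.powerset, g U) * (if S ⊆ B then (1 : ZMod 2) else 0)
      = ∑ U : Finset (Fin n), g U * ((if U ⊆ S then 1 else 0) * (if S ⊆ B then 1 else 0)) := by
  rw [Finset.sum_mul]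
  calc ∑ U ∈ S.powerset, g U * (if S ⊆ B then (1:ZMod 2) else 0)
      = ∑ U ∈ S.powerset, g U * ((if U ⊆ S then 1 else 0) * (if S ⊆ B then 1 else 0)) := by
        apply Finset.sum_congr rfl
        intro U hU
        rw [Finset.mem_powerset] at hU
        rw [if_pos hU, one_mul]
    _ = ∑ U : Finset (Fin n), g U * ((if U ⊆ S then 1 else 0) * (if S ⊆ B then 1 else 0)) := by
        apply Finset.sum_subset (Finset.subset_univ _)
        intro U _ hU
        rw [Finset.mem_powerset] at hU
        rw [if_neg hU, zero_mul, mul_zero]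

lemma anf_inversion (f : (Fin n → ZMod 2) → ZMod 2) (x : Fin n → ZMod 2) :
    ∑ S : Finset (Fin n), anfCoeff f S * ∏ i ∈ S, x i = f x := by
  calc ∑ S : Finset (Fin n), anfCoeff f S * ∏ i ∈ S, x i
      = ∑ S : Finset (Fin n), ∑ U : Finset (Fin n),
          f (pt U) * ((if U ⊆ S then 1 else 0) * (if S ⊆ supp x then 1 else 0)) := by
        apply Finset.sum_congr rfl
        intro S _
        rw [anfCoeff_eq, mono_eq]
        exact expand_step (fun U => f (pt U)) S (supp x)
    _ = ∑ U : Finset (Fin n), ∑ S : Finset (Fin n),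
          f (pt U) * ((if U ⊆ S then 1 else 0) * (if S ⊆ supp x then 1 else 0)) :=
        Finset.sum_comm
    _ = ∑ U : Finset (Fin n), f (pt U) * (if U = supp x then 1 else 0) := by
        apply Finset.sum_congr rfl
        intro U _
        rw [← Finset.mul_sum, sum_indicator]
    _ = f x := by
        simp only [mul_ite, mul_one, mul_zero, Finset.sum_ite_eq', Finset.mem_univ, if_true]
        rw [pt_supp]

lemma anfCoeff_sum (a : Finset (Fin n) → ZMod 2) (S : Finset (Fin n)) :
    anfCoeff (fun x => ∑ T : Finset (Fin n), a T * ∏ i ∈ T, x i) S = a S := by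
  rw [anfCoeff_eq]
  calc ∑ U ∈ S.powerset, ∑ T : Finset (Fin n), a T * ∏ i ∈ T, pt U i
      = ∑ U : Finset (Fin n), ∑ T : Finset (Fin n),
          a T * ((if T ⊆ U then 1 else 0) * (if U ⊆ S then 1 else 0)) := by
        rw [← Finset.sum_subset (Finset.subset_univ S.powerset)]
        · apply Finset.sum_congr rfl
          intro U hU
          rw [Finset.mem_powerset] at hU
          apply Finset.sum_congr rfl
          intro T _
          rw [mono_eq, supp_pt, if_pos hU, mul_one]
        · intro U _ hU
          rw [Finset.mem_powerset] at hU
          apply Finset.sum_eq_zero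
          intro T _
          rw [if_neg hU, mul_zero, mul_zero]
    _ = ∑ T : Finset (Fin n), ∑ U : Finset (Fin n),
          a T * ((if T ⊆ U then 1 else 0) * (if U ⊆ S then 1 else 0)) :=
        Finset.sum_comm
    _ = ∑ T : Finset (Fin n), a T * (if T = S then 1 else 0) := by
        apply Finset.sum_congr rfl
        intro T _
        rw [← Finset.mul_sum, sum_indicator]
    _ = a S := by
        simp only [mul_ite, mul_one, mul_zero, Finset.sum_ite_eq', Finset.mem_univ, if_true]

end BFaux

namespace BFaux
variable {n : ℕ}

lemma anfCoeff_zero (S : Finset (Fin n)) : anfCoeff (0 : (Fin n → ZMod 2) → ZMod 2) S = 0 := by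
  simp [anfCoeff]

lemma exists_anfCoeff_ne_zero {g : (Fin n → ZMod 2) → ZMod 2} (hg : g ≠ 0) :
    ∃ S, anfCoeff g S ≠ 0 := by
  by_contra h
  push_neg at h
  apply hg
  funext x
  rw [← anf_inversion g x]
  apply Finset.sum_eq_zero
  intro S _
  rw [h S, zero_mul]

lemma degB_le_iff (g : (Fin n → ZMod 2) → ZMod 2) (k : ℕ) :
    degB g ≤ k ↔ ∀ S, anfCoeff g S ≠ 0 → S.card ≤ k := by
  unfold degB
  rw [Finset.sup_le_iff]
  constructor
  · intro h S hS; exact h S (by simp [hS])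
  · intro h S hS; exact h S (by simpa using hS)

lemma exists_ann_iff (D : ℕ) (T : Set (Fin n → ZMod 2)) :
    (∃ g : (Fin n → ZMod 2) → ZMod 2, g ≠ 0 ∧ (∀ x ∈ T, g x = 0) ∧ degB g ≤ D) ↔
    ∃ c : {S : Finset (Fin n) // S.card ≤ D} → ZMod 2, c ≠ 0 ∧ (VSet D T).mulVec c = 0 := by
  constructor
  · rintro ⟨g, hg0, hgT, hgD⟩
    refine ⟨fun S => anfCoeff g S.1, ?_, ?_⟩
    · obtain ⟨S, hS⟩ := exists_anfCoeff_ne_zero hg0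
      have hSD : S.card ≤ D := (degB_le_iff g D).mp hgD S hS
      intro hc
      exact hS (congrFun hc ⟨S, hSD⟩)
    · funext x
      have e1 := Finset.sum_subtype (p := fun S : Finset (Fin n) => S.card ≤ D) (F := by infer_instance)
        (Finset.univ.filter fun S : Finset (Fin n) => S.card ≤ D)
        (fun S => by simp)
        (fun S => anfCoeff g S * ∏ i ∈ S, (x : Fin n → ZMod 2) i)
      have e2 : ∑ S ∈ Finset.univ.filter (fun S : Finset (Fin n) => S.card ≤ D),
            anfCoeff g S * ∏ i ∈ S, (x : Fin n → ZMod 2) i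
          = ∑ S : Finset (Fin n), anfCoeff g S * ∏ i ∈ S, (x : Fin n → ZMod 2) i :=
        Finset.sum_filter_of_ne (fun S _ hne =>
          (degB_le_iff g D).mp hgD S (fun h => hne (by rw [h, zero_mul])))
      have e3 : (VSet D T).mulVec (fun S => anfCoeff g S.1) x
          = ∑ S : {S : Finset (Fin n) // S.card ≤ D},
              VSet D T x S * anfCoeff g S.1 := rfl
      rw [Pi.zero_apply, e3]
      calc ∑ S : {S : Finset (Fin n) // S.card ≤ D}, VSet D T x S * anfCoeff g S.1
          = ∑ S : {S : Finset (Fin n) // S.card ≤ D},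
              anfCoeff g S.1 * ∏ i ∈ S.1, (x : Fin n → ZMod 2) i := by
            apply Finset.sum_congr rfl
            intro S _
            rw [mul_comm]
            rfl
        _ = ∑ S : Finset (Fin n), anfCoeff g S * ∏ i ∈ S, (x : Fin n → ZMod 2) i := by
            rw [← e1, e2]
        _ = g x := anf_inversion g x
        _ = 0 := hgT x.1 x.2
  · rintro ⟨c, hc0, hcv⟩
    classical
    have hfun : (fun x : Fin n → ZMod 2 =>
          ∑ S : {S : Finset (Fin n) // S.card ≤ D}, c S * ∏ i ∈ S.1, x i)
        = fun x => ∑ S : Finset (Fin n),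
            (if h : S.card ≤ D then c ⟨S, h⟩ else 0) * ∏ i ∈ S, x i := by
      funext x
      have e1 := Finset.sum_subtype (p := fun S : Finset (Fin n) => S.card ≤ D) (F := by infer_instance)
        (Finset.univ.filter fun S : Finset (Fin n) => S.card ≤ D)
        (fun S => by simp)
        (fun S => (if h : S.card ≤ D then c ⟨S, h⟩ else 0) * ∏ i ∈ S, x i)
      have e2 : ∑ S ∈ Finset.univ.filter (fun S : Finset (Fin n) => S.card ≤ D),
            (if h : S.card ≤ D then c ⟨S, h⟩ else 0) * ∏ i ∈ S, x i
          = ∑ S : Finset (Fin n), (if h : S.card ≤ D then c ⟨S, h⟩ else 0) * ∏ i ∈ S, x i :=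
        Finset.sum_filter_of_ne (fun S _ hne => by
          by_contra hcard
          exact hne (by rw [dif_neg hcard, zero_mul]))
      rw [← e2, e1]
      apply Finset.sum_congr rfl
      intro S _
      rw [dif_pos S.2]
    set g : (Fin n → ZMod 2) → ZMod 2 :=
      fun x => ∑ S : {S : Finset (Fin n) // S.card ≤ D}, c S * ∏ i ∈ S.1, x i with hgdef
    have hcoeff : ∀ S : Finset (Fin n),
        anfCoeff g S = if h : S.card ≤ D then c ⟨S, h⟩ else 0 := by
      intro S
      rw [hfun]
      exact anfCoeff_sum _ S
    refine ⟨g, ?_, ?_, ?_⟩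
    · obtain ⟨S₀, hS₀⟩ : ∃ S₀, c S₀ ≠ 0 := by
        by_contra h; push_neg at h; exact hc0 (funext h)
      intro h
      apply hS₀
      have h2 := hcoeff S₀.1
      rw [h, anfCoeff_zero, dif_pos S₀.2] at h2
      rw [← h2]
    · intro x hx
      have h0 : (VSet D T).mulVec c ⟨x, hx⟩ = 0 := by rw [hcv]; rfl
      have h1 : (VSet D T).mulVec c ⟨x, hx⟩
          = ∑ S : {S : Finset (Fin n) // S.card ≤ D}, VSet D T ⟨x, hx⟩ S * c S := rfl
      rw [hgdef]
      rw [h1] at h0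
      rw [← h0]
      apply Finset.sum_congr rfl
      intro S _
      rw [mul_comm]
      rfl
    · rw [degB_le_iff]
      intro S hS
      rw [hcoeff S] at hS
      by_contra hcard
      exact hS (dif_neg hcard)

end BFaux

namespace BFaux
variable {n : ℕ}

lemma rank_eq_iff (D : ℕ) (T : Set (Fin n → ZMod 2)) :
    (VSet D T).rank = Fintype.card {S : Finset (Fin n) // S.card ≤ D} ↔
      ∀ c, (VSet D T).mulVec c = 0 → c = 0 := by
  have hdim : Module.finrank (ZMod 2) ({S : Finset (Fin n) // S.card ≤ D} → ZMod 2)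
      = Fintype.card {S : Finset (Fin n) // S.card ≤ D} :=
    Module.finrank_fintype_fun_eq_card _
  have hadd := LinearMap.finrank_range_add_finrank_ker (VSet D T).mulVecLin
  rw [hdim] at hadd
  have hker : (LinearMap.ker (VSet D T).mulVecLin = ⊥) ↔
      ∀ c, (VSet D T).mulVec c = 0 → c = 0 := by
    rw [LinearMap.ker_eq_bot']
    constructor
    · intro h c hc; exact h c (by rwa [Matrix.mulVecLin_apply])
    · intro h c hc; exact h c (by rwa [Matrix.mulVecLin_apply] at hc)
  rw [← hker]
  unfold Matrix.rank
  constructor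
  · intro h
    have hk : Module.finrank (ZMod 2) (LinearMap.ker (VSet D T).mulVecLin) = 0 := by omega
    exact Submodule.finrank_eq_zero.mp hk
  · intro h
    rw [h, finrank_bot] at hadd
    omega

lemma card_cols (D : ℕ) : Fintype.card {S : Finset (Fin n) // S.card ≤ D}
    = ∑ i ∈ Finset.range (D + 1), n.choose i := by
  rw [Fintype.card_subtype]
  have hsplit : (Finset.univ.filter fun S : Finset (Fin n) => S.card ≤ D)
      = (Finset.range (D + 1)).biUnion
          (fun i => Finset.univ.filter fun S : Finset (Fin n) => S.card = i) := by
    ext S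
    simp only [Finset.mem_filter, Finset.mem_univ, true_and, Finset.mem_biUnion,
      Finset.mem_range]
    constructor
    · intro h; exact ⟨S.card, by omega, rfl⟩
    · rintro ⟨i, hi, rfl⟩; omega
  rw [hsplit, Finset.card_biUnion]
  · apply Finset.sum_congr rfl
    intro i _
    have : (Finset.univ.filter fun S : Finset (Fin n) => S.card = i).card
        = Fintype.card {S : Finset (Fin n) // S.card = i} := (Fintype.card_subtype _).symm
    rw [this, Fintype.card_finset_len, Fintype.card_fin]
  · intro i _ j _ hij
    simp only [Finset.disjoint_left, Finset.mem_filter, Finset.mem_univ, true_and]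
    rintro S rfl h2
    exact hij h2

end BFaux

namespace BFaux
variable {n : ℕ}

lemma choose_sum_big (hn : 0 < n) :
    2 ^ (n - 1) < ∑ i ∈ Finset.range ((n + 1) / 2 + 1), n.choose i := by
  set k := (n + 1) / 2 with hk
  have hk1 : k ≤ n := by omega
  have hnk : n - k ≤ k := by omega
  have htot : ∑ i ∈ Finset.range (n + 1), n.choose i = 2 ^ n := Nat.sum_range_choose n
  have hsplit : ∑ i ∈ Finset.range (n + 1), n.choose i
      = ∑ i ∈ Finset.range (k + 1), n.choose i
        + ∑ i ∈ Finset.Ico (k + 1) (n + 1), n.choose i := by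
    rw [Finset.range_eq_Ico, Finset.range_eq_Ico]
    exact (Finset.sum_Ico_consecutive (fun i => n.choose i) (by omega : 0 ≤ k + 1) (by omega : k + 1 ≤ n + 1)).symm
  have htail : ∑ i ∈ Finset.Ico (k + 1) (n + 1), n.choose i
      = ∑ j ∈ Finset.range (n - k), n.choose j := by
    apply Finset.sum_nbij' (i := fun i => n - i) (j := fun j => n - j)
    · intro a ha
      rw [Finset.mem_Ico] at ha
      rw [Finset.mem_range]
      omega
    · intro a ha
      rw [Finset.mem_range] at ha
      rw [Finset.mem_Ico]
      omega
    · intro a ha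
      rw [Finset.mem_Ico] at ha
      omega
    · intro a ha
      rw [Finset.mem_range] at ha
      omega
    · intro a ha
      rw [Finset.mem_Ico] at ha
      rw [Nat.choose_symm (by omega)]
  have hsub : ∑ j ∈ Finset.range (n - k), n.choose j + n.choose k
      ≤ ∑ i ∈ Finset.range (k + 1), n.choose i := by
    have hknotin : k ∉ Finset.range (n - k) := by
      rw [Finset.mem_range]; omega
    have hins : ∑ j ∈ insert k (Finset.range (n - k)), n.choose j
        = n.choose k + ∑ j ∈ Finset.range (n - k), n.choose j :=
      Finset.sum_insert hknotin
    have hss : insert k (Finset.range (n - k)) ⊆ Finset.range (k + 1) := by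
      intro a ha
      rw [Finset.mem_insert, Finset.mem_range] at ha
      rw [Finset.mem_range]
      omega
    have h2 : ∑ j ∈ insert k (Finset.range (n - k)), n.choose j
        ≤ ∑ i ∈ Finset.range (k + 1), n.choose i := Finset.sum_le_sum_of_subset hss
    omega
  have hck : 0 < n.choose k := Nat.choose_pos hk1
  have hpow : 2 ^ n = 2 * 2 ^ (n - 1) := by
    rw [← pow_succ']
    congr 1
    omega
  omega

lemma cm_aux (hn : 0 < n) (T : Set (Fin n → ZMod 2)) [Fintype T]
    (hT : Fintype.card T ≤ 2 ^ (n - 1)) :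
    ∃ g : (Fin n → ZMod 2) → ZMod 2,
      g ≠ 0 ∧ (∀ x ∈ T, g x = 0) ∧ degB g ≤ (n + 1) / 2 := by
  set k := (n + 1) / 2 with hk
  rw [exists_ann_iff]
  have hninj : ¬ Function.Injective (VSet k T).mulVecLin := by
    intro hinj
    have hle := LinearMap.finrank_le_finrank_of_injective hinj
    rw [Module.finrank_fintype_fun_eq_card, Module.finrank_fintype_fun_eq_card,
      card_cols] at hle
    have hbig := choose_sum_big hn
    rw [← hk] at hbig
    omega
  rw [← LinearMap.ker_eq_bot] at hninj
  obtain ⟨c, hc, hc0⟩ := Submodule.ne_bot_iff _ |>.mp hninj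
  exact ⟨c, hc0, by rwa [LinearMap.mem_ker, Matrix.mulVecLin_apply] at hc⟩

end BFaux

namespace BFaux
variable {n : ℕ}

lemma card_split (f : (Fin n → ZMod 2) → ZMod 2) :
    Fintype.card {x : Fin n → ZMod 2 | f x = 1} + Fintype.card {x : Fin n → ZMod 2 | f x = 0}
      = 2 ^ n := by
  classical
  have h1 : Fintype.card {x : Fin n → ZMod 2 | f x = 1}
      = (Finset.univ.filter fun x : Fin n → ZMod 2 => f x = 1).card := Fintype.card_subtype _
  have h0 : Fintype.card {x : Fin n → ZMod 2 | f x = 0}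
      = (Finset.univ.filter fun x : Fin n → ZMod 2 => f x = 0).card := Fintype.card_subtype _
  have hfe : (Finset.univ.filter fun x : Fin n → ZMod 2 => f x = 0)
      = (Finset.univ.filter fun x : Fin n → ZMod 2 => ¬ f x = 1) := by
    apply Finset.filter_congr
    intro x _
    rcases zmod2_cases (f x) with h | h <;> simp [h]
  have htot := Finset.card_filter_add_card_filter_not
    (s := (Finset.univ : Finset (Fin n → ZMod 2))) (p := fun x => f x = 1)
  have hcu : (Finset.univ : Finset (Fin n → ZMod 2)).card = 2 ^ n := by
    rw [Finset.card_univ]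
    rw [Fintype.card_fun]
    simp
  rw [h1, h0, hfe]
  rw [← hcu]
  exact htot

lemma cm (hn : 0 < n) (f : (Fin n → ZMod 2) → ZMod 2) :
    ∃ g, (IsAnnihilator f g ∨ IsAnnihilator (fun x => f x + 1) g) ∧ degB g ≤ (n + 1) / 2 := by
  have hsplit := card_split f
  have hpow : 2 ^ n = 2 * 2 ^ (n - 1) := by
    rw [← pow_succ']
    congr 1
    omega
  by_cases hc : Fintype.card {x : Fin n → ZMod 2 | f x = 1} ≤ 2 ^ (n - 1)
  · obtain ⟨g, hg0, hgv, hgd⟩ := cm_aux hn {x : Fin n → ZMod 2 | f x = 1} hc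
    refine ⟨g, Or.inl ⟨hg0, ?_⟩, hgd⟩
    intro x
    rcases zmod2_cases (f x) with h | h
    · rw [h, zero_mul]
    · rw [h, one_mul]
      exact hgv x h
  · have hc0 : Fintype.card {x : Fin n → ZMod 2 | f x = 0} ≤ 2 ^ (n - 1) := by omega
    obtain ⟨g, hg0, hgv, hgd⟩ := cm_aux hn {x : Fin n → ZMod 2 | f x = 0} hc0
    refine ⟨g, Or.inr ⟨hg0, ?_⟩, hgd⟩
    intro x
    show (f x + 1) * g x = 0
    rcases zmod2_cases (f x) with h | h
    · rw [h, zero_add, one_mul]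
      exact hgv x h
    · rw [h]
      have : (1 : ZMod 2) + 1 = 0 := by decide
      rw [this, zero_mul]

end BFaux

/-- `AI(f) = ⌈n/2⌉` iff `V(1_f)` and `V(0_f)` both have rank
`∑_{i=0}^{⌈n/2⌉-1} C(n,i)` over `F_2`. -/
theorem stmt_0 (n : ℕ) (hn : 0 < n) (f : (Fin n → ZMod 2) → ZMod 2) :
    AI f = (n + 1) / 2 ↔
      ((VSet ((n + 1) / 2 - 1) {x | f x = 1}).rank =
          ∑ i ∈ Finset.range ((n + 1) / 2), n.choose i ∧
        (VSet ((n + 1) / 2 - 1) {x | f x = 0}).rank =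
          ∑ i ∈ Finset.range ((n + 1) / 2), n.choose i) := by
  classical
  set k := (n + 1) / 2 with hk
  have hk1 : 1 ≤ k := by omega
  have hD : k - 1 + 1 = k := by omega
  have hcard : (∑ i ∈ Finset.range k, n.choose i)
      = Fintype.card {S : Finset (Fin n) // S.card ≤ k - 1} := by
    rw [BFaux.card_cols, hD]
  have key : ∀ T : Set (Fin n → ZMod 2),
      ((VSet (k - 1) T).rank = ∑ i ∈ Finset.range k, n.choose i)
        ↔ ¬ ∃ g : (Fin n → ZMod 2) → ZMod 2,
            g ≠ 0 ∧ (∀ x ∈ T, g x = 0) ∧ degB g ≤ k - 1 := by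
    intro T
    rw [hcard, BFaux.rank_eq_iff, BFaux.exists_ann_iff]
    constructor
    · rintro h ⟨c, hc0, hcv⟩
      exact hc0 (h c hcv)
    · intro h c hcv
      by_contra hc0
      exact h ⟨c, hc0, hcv⟩
  have t1 : ∀ g : (Fin n → ZMod 2) → ZMod 2,
      (∀ x, f x * g x = 0) ↔ (∀ x ∈ {x | f x = 1}, g x = 0) := by
    intro g
    constructor
    · intro h x hx
      have h2 := h x
      rw [Set.mem_setOf_eq] at hx
      rwa [hx, one_mul] at h2
    · intro h x
      rcases BFaux.zmod2_cases (f x) with h0 | h1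
      · rw [h0, zero_mul]
      · rw [h1, one_mul]
        exact h x h1
  have t0 : ∀ g : (Fin n → ZMod 2) → ZMod 2,
      (∀ x, (f x + 1) * g x = 0) ↔ (∀ x ∈ {x | f x = 0}, g x = 0) := by
    intro g
    constructor
    · intro h x hx
      have h2 := h x
      rw [Set.mem_setOf_eq] at hx
      rwa [hx, zero_add, one_mul] at h2
    · intro h x
      rcases BFaux.zmod2_cases (f x) with h0 | h1
      · rw [h0, zero_add, one_mul]
        exact h x h0
      · rw [h1]
        have he : (1 : ZMod 2) + 1 = 0 := by decide
        rw [he, zero_mul]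
  set Sset : Set ℕ :=
    {d | ∃ g, (IsAnnihilator f g ∨ IsAnnihilator (fun x => f x + 1) g) ∧ degB g = d}
    with hSset
  have hAIdef : AI f = sInf Sset := rfl
  have hrhs : ((VSet (k - 1) {x | f x = 1}).rank = ∑ i ∈ Finset.range k, n.choose i ∧
        (VSet (k - 1) {x | f x = 0}).rank = ∑ i ∈ Finset.range k, n.choose i)
      ↔ ∀ d ∈ Sset, k ≤ d := by
    rw [key, key]
    constructor
    · rintro ⟨h1, h0⟩ d ⟨g, hor, hdeg⟩
      by_contra hlt
      push_neg at hlt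
      rcases hor with ⟨hg0, hmul⟩ | ⟨hg0, hmul⟩
      · exact h1 ⟨g, hg0, (t1 g).mp hmul, by omega⟩
      · exact h0 ⟨g, hg0, (t0 g).mp hmul, by omega⟩
    · intro h
      constructor
      · rintro ⟨g, hg0, hgv, hgd⟩
        have hmem : degB g ∈ Sset := ⟨g, Or.inl ⟨hg0, (t1 g).mpr hgv⟩, rfl⟩
        have := h _ hmem
        omega
      · rintro ⟨g, hg0, hgv, hgd⟩
        have hmem : degB g ∈ Sset := ⟨g, Or.inr ⟨hg0, (t0 g).mpr hgv⟩, rfl⟩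
        have := h _ hmem
        omega
  rw [hrhs, hAIdef]
  obtain ⟨g₀, hg₀or, hg₀d⟩ := BFaux.cm hn f
  have hmem₀ : degB g₀ ∈ Sset := ⟨g₀, hg₀or, rfl⟩
  constructor
  · intro hAI d hd
    have := Nat.sInf_le hd
    omega
  · intro h
    have h1 : k ≤ degB g₀ := h _ hmem₀
    have h2 : degB g₀ = k := le_antisymm hg₀d h1
    have hkmem : k ∈ Sset := h2 ▸ hmem₀
    exact le_antisymm (Nat.sInf_le hkmem) (le_csInf ⟨_, hkmem⟩ h)
end

section
/- Let n = 2t+1 be an odd positive integer and f a balanced Boolean function of n variables. If f does not have any annihilator of degree less than t+1, then f⊕1 also has no annihilator of degree less than t+1; consequently AI(f) = t+1. -/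
open Finset

namespace Stmt1Aux

variable {n : ℕ}

lemma zmod2_cases (a : ZMod 2) : a = 0 ∨ a = 1 := by revert a; decide

/-- The support (set of coordinates equal to 1) of a point. -/
def suppPt (x : Fin n → ZMod 2) : Finset (Fin n) := Finset.univ.filter (fun i => x i = 1)

/-- The point with the given support. -/
def ptOf (S : Finset (Fin n)) : Fin n → ZMod 2 := fun i => if i ∈ S then 1 else 0

lemma mem_suppPt {x : Fin n → ZMod 2} {i : Fin n} : i ∈ suppPt x ↔ x i = 1 := by
  simp [suppPt]

lemma suppPt_ptOf (S : Finset (Fin n)) : suppPt (ptOf S) = S := by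
  ext i
  rw [mem_suppPt]
  unfold ptOf
  split <;> simp_all

lemma ptOf_suppPt (x : Fin n → ZMod 2) : ptOf (suppPt x) = x := by
  funext i
  rcases zmod2_cases (x i) with h | h <;>
    simp [ptOf, mem_suppPt, h]

/-- Points of `F_2^n` are in bijection with subsets of `Fin n`. -/
def ptEquiv : (Fin n → ZMod 2) ≃ Finset (Fin n) :=
  ⟨suppPt, ptOf, ptOf_suppPt, suppPt_ptOf⟩

lemma sum_points (F : Finset (Fin n) → ZMod 2) :
    ∑ x : Fin n → ZMod 2, F (suppPt x) = ∑ S : Finset (Fin n), F S :=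
  Fintype.sum_equiv ptEquiv _ _ (fun _ => rfl)

lemma prod_eq_ite (x : Fin n → ZMod 2) (A : Finset (Fin n)) :
    ∏ i ∈ A, x i = if A ⊆ suppPt x then 1 else 0 := by
  split
  case isTrue h => exact Finset.prod_eq_one (fun i hi => mem_suppPt.1 (h hi))
  case isFalse h =>
    obtain ⟨i, hiA, hi⟩ := Finset.not_subset.1 h
    have : x i = 0 := (zmod2_cases _).resolve_right (fun e => hi (mem_suppPt.2 e))
    exact Finset.prod_eq_zero hiA this

lemma icc_parity (A B : Finset (Fin n)) :
    ((Finset.Icc A B).card : ZMod 2) = if A = B then 1 else 0 := by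
  by_cases hAB : A ⊆ B
  · rw [Finset.card_Icc_finset hAB]
    by_cases h : A = B
    · simp [h]
    · have hlt : A.card < B.card := Finset.card_lt_card (hAB.ssubset_of_ne h)
      obtain ⟨k, hk⟩ : ∃ k, B.card - A.card = k + 1 := ⟨B.card - A.card - 1, by omega⟩
      rw [if_neg h, hk]
      have h2 : ((2:ℕ) : ZMod 2) = 0 := by decide
      push_cast
      rw [show ((2:ZMod 2)) = 0 from by decide, zero_pow (Nat.succ_ne_zero k)]
  · rw [Finset.Icc_eq_empty (fun hc => hAB hc)]
    rw [if_neg (fun e => hAB (by rw [e]))]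
    simp

lemma anfCoeff_eq (f : (Fin n → ZMod 2) → ZMod 2) (T : Finset (Fin n)) :
    anfCoeff f T = ∑ S ∈ T.powerset, f (ptOf S) := by
  unfold anfCoeff
  rw [Finset.sum_filter]
  have h1 : ∀ x : Fin n → ZMod 2,
      (if (∀ i, x i = 1 → i ∈ T) then f x else 0)
        = (fun S => if S ⊆ T then f (ptOf S) else 0) (suppPt x) := by
    intro x
    have : (∀ i, x i = 1 → i ∈ T) ↔ suppPt x ⊆ T := by
      constructor
      · intro h i hi; exact h i (mem_suppPt.1 hi)
      · intro h i hx; exact h (mem_suppPt.2 hx)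
    simp only [this, ptOf_suppPt]
  rw [Finset.sum_congr rfl (fun x _ => h1 x), sum_points (fun S => if S ⊆ T then f (ptOf S) else 0)]
  rw [← Finset.sum_filter]
  congr 1
  ext S
  simp [Finset.mem_powerset]


lemma filter_subset_powerset (B : Finset (Fin n)) :
    Finset.univ.filter (fun S : Finset (Fin n) => S ⊆ B) = B.powerset := by
  ext S; simp [Finset.mem_powerset]

lemma anf_expand (f : (Fin n → ZMod 2) → ZMod 2) (x : Fin n → ZMod 2) :
    f x = ∑ S : Finset (Fin n), anfCoeff f S * ∏ i ∈ S, x i := by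
  have step1 : ∑ S : Finset (Fin n), anfCoeff f S * ∏ i ∈ S, x i
      = ∑ S ∈ (suppPt x).powerset, ∑ U ∈ S.powerset, f (ptOf U) := by
    have e1 : ∀ S : Finset (Fin n), anfCoeff f S * ∏ i ∈ S, x i
        = if S ⊆ suppPt x then ∑ U ∈ S.powerset, f (ptOf U) else 0 := by
      intro S
      rw [anfCoeff_eq, prod_eq_ite, mul_ite, mul_one, mul_zero]
    rw [Finset.sum_congr rfl (fun S _ => e1 S), ← Finset.sum_filter,
      filter_subset_powerset]
  have step2 : ∑ S ∈ (suppPt x).powerset, ∑ U ∈ S.powerset, f (ptOf U)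
      = ∑ U ∈ (suppPt x).powerset, ∑ S ∈ Finset.Icc U (suppPt x), f (ptOf U) := by
    apply Finset.sum_comm'
    intro S U
    simp only [Finset.mem_powerset, Finset.mem_Icc]
    constructor
    · rintro ⟨h1, h2⟩; exact ⟨⟨h2, h1⟩, h2.trans h1⟩
    · rintro ⟨⟨h1, h2⟩, h3⟩; exact ⟨h2, h1⟩
  rw [step1, step2]
  have step3 : ∀ U ∈ (suppPt x).powerset,
      (∑ _S ∈ Finset.Icc U (suppPt x), f (ptOf U))
        = (if U = suppPt x then 1 else 0) * f (ptOf U) := by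
    intro U _
    rw [Finset.sum_const, nsmul_eq_mul, icc_parity]
  rw [Finset.sum_congr rfl step3]
  simp only [ite_mul, one_mul, zero_mul]
  rw [Finset.sum_ite_eq' (suppPt x).powerset (suppPt x) (fun U => f (ptOf U))]
  rw [if_pos (Finset.mem_powerset.2 (Finset.Subset.refl _)), ptOf_suppPt]

lemma anfCoeff_monomial (A T : Finset (Fin n)) :
    anfCoeff (fun x => ∏ i ∈ A, x i) T = if A = T then 1 else 0 := by
  rw [anfCoeff_eq]
  have h1 : ∀ S ∈ T.powerset, (∏ i ∈ A, ptOf S i) = if A ⊆ S then (1:ZMod 2) else 0 := by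
    intro S _
    rw [prod_eq_ite, suppPt_ptOf]
  rw [Finset.sum_congr rfl h1, Finset.sum_ite, Finset.sum_const, Finset.sum_const,
    smul_zero, add_zero, nsmul_eq_mul, mul_one]
  have h2 : T.powerset.filter (fun S => A ⊆ S) = Finset.Icc A T := by
    ext S
    simp only [Finset.mem_filter, Finset.mem_powerset, Finset.mem_Icc]
    exact ⟨fun ⟨a, b⟩ => ⟨b, a⟩, fun ⟨a, b⟩ => ⟨b, a⟩⟩
  rw [h2, icc_parity]

lemma anfCoeff_sum {ι : Type*} (s : Finset ι) (F : ι → (Fin n → ZMod 2) → ZMod 2)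
    (T : Finset (Fin n)) :
    anfCoeff (fun x => ∑ i ∈ s, F i x) T = ∑ i ∈ s, anfCoeff (F i) T := by
  unfold anfCoeff
  rw [Finset.sum_comm]

lemma anfCoeff_smul (a : ZMod 2) (F : (Fin n → ZMod 2) → ZMod 2) (T : Finset (Fin n)) :
    anfCoeff (fun x => a * F x) T = a * anfCoeff F T := by
  unfold anfCoeff
  rw [Finset.mul_sum]

lemma anfCoeff_zero (T : Finset (Fin n)) :
    anfCoeff (0 : (Fin n → ZMod 2) → ZMod 2) T = 0 := by
  unfold anfCoeff
  simp

/-- The Boolean function given by a degree-`≤ D` coefficient vector. -/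
def polyD (D : ℕ) (c : {S : Finset (Fin n) // S.card ≤ D} → ZMod 2) :
    (Fin n → ZMod 2) → ZMod 2 :=
  fun x => ∑ S : {S : Finset (Fin n) // S.card ≤ D}, c S * ∏ i ∈ S.1, x i

lemma anfCoeff_polyD (D : ℕ) (c : {S : Finset (Fin n) // S.card ≤ D} → ZMod 2)
    (T : Finset (Fin n)) :
    anfCoeff (polyD D c) T = if h : T.card ≤ D then c ⟨T, h⟩ else 0 := by
  unfold polyD
  rw [anfCoeff_sum]
  have h1 : ∀ S : {S : Finset (Fin n) // S.card ≤ D},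
      anfCoeff (fun x => c S * ∏ i ∈ S.1, x i) T = c S * if S.1 = T then 1 else 0 := by
    intro S
    rw [anfCoeff_smul, anfCoeff_monomial]
  rw [Finset.sum_congr rfl (fun S _ => h1 S)]
  split
  case isTrue h =>
    rw [Finset.sum_eq_single (⟨T, h⟩ : {S : Finset (Fin n) // S.card ≤ D})]
    · simp
    · intro S _ hS
      rw [if_neg (fun e => hS (Subtype.ext e)), mul_zero]
    · intro hmem; exact absurd (Finset.mem_univ _) hmem
  case isFalse h =>
    apply Finset.sum_eq_zero
    intro S _
    rw [if_neg (fun e => h (by rw [← e]; exact S.2)), mul_zero]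

lemma degB_le (g : (Fin n → ZMod 2) → ZMod 2) (D : ℕ)
    (h : ∀ S : Finset (Fin n), D < S.card → anfCoeff g S = 0) : degB g ≤ D := by
  apply Finset.sup_le
  intro S hS
  rw [Finset.mem_filter] at hS
  by_contra hc
  exact hS.2 (h S (by omega))

lemma card_le_degB (g : (Fin n → ZMod 2) → ZMod 2) (S : Finset (Fin n))
    (h : anfCoeff g S ≠ 0) : S.card ≤ degB g :=
  Finset.le_sup (Finset.mem_filter.2 ⟨Finset.mem_univ _, h⟩)

lemma degB_polyD (D : ℕ) (c : {S : Finset (Fin n) // S.card ≤ D} → ZMod 2) :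
    degB (polyD D c) ≤ D := by
  apply degB_le
  intro S hS
  rw [anfCoeff_polyD, dif_neg (by omega)]

lemma polyD_sub (D : ℕ) (c c' : {S : Finset (Fin n) // S.card ≤ D} → ZMod 2)
    (x : Fin n → ZMod 2) :
    polyD D (c - c') x = polyD D c x - polyD D c' x := by
  unfold polyD
  rw [← Finset.sum_sub_distrib]
  apply Finset.sum_congr rfl
  intro S _
  rw [Pi.sub_apply, sub_mul]

lemma expand_of_degB_le (g : (Fin n → ZMod 2) → ZMod 2) (D : ℕ) (hg : degB g ≤ D) :
    g = polyD D (fun S => anfCoeff g S.1) := by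
  funext x
  rw [anf_expand g x]
  unfold polyD
  rw [← Finset.sum_subtype (Finset.univ.filter (fun S : Finset (Fin n) => S.card ≤ D))
    (fun S => by simp) (fun S => anfCoeff g S * ∏ i ∈ S, x i)]
  symm
  apply Finset.sum_subset (Finset.filter_subset _ _)
  intro S _ hS
  have : ¬ S.card ≤ D := by
    intro hc
    exact hS (Finset.mem_filter.2 ⟨Finset.mem_univ _, hc⟩)
  have hz : anfCoeff g S = 0 := by
    by_contra hc
    exact this ((card_le_degB g S hc).trans hg)
  rw [hz, zero_mul]


lemma sum_indicator_eq_zero (A : Finset (Fin n)) (hA : A.card < n) :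
    ∑ x : Fin n → ZMod 2, (if A ⊆ suppPt x then (1:ZMod 2) else 0) = 0 := by
  rw [sum_points (fun S => if A ⊆ S then (1:ZMod 2) else 0)]
  rw [← Finset.sum_filter]
  rw [Finset.sum_const, nsmul_eq_mul, mul_one]
  have h1 : Finset.univ.filter (fun S : Finset (Fin n) => A ⊆ S)
      = Finset.Icc A Finset.univ := by
    ext S
    simp [Finset.mem_Icc, Finset.subset_univ]
  rw [h1, icc_parity]
  rw [if_neg]
  intro e
  rw [e, Finset.card_univ, Fintype.card_fin] at hA
  omega

lemma orth (t : ℕ) (hn : n = 2 * t + 1) (g h : (Fin n → ZMod 2) → ZMod 2)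
    (hg : degB g ≤ t) (hh : degB h ≤ t) :
    ∑ x : Fin n → ZMod 2, g x * h x = 0 := by
  have e1 : ∀ x, g x * h x = ∑ S : Finset (Fin n), ∑ T : Finset (Fin n),
      anfCoeff g S * anfCoeff h T * (if S ∪ T ⊆ suppPt x then (1:ZMod 2) else 0) := by
    intro x
    rw [anf_expand g x, anf_expand h x, Finset.sum_mul_sum]
    apply Finset.sum_congr rfl; intro S _
    apply Finset.sum_congr rfl; intro T _
    rw [prod_eq_ite, prod_eq_ite]
    have e2 : (if S ⊆ suppPt x then (1:ZMod 2) else 0) *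
        (if T ⊆ suppPt x then (1:ZMod 2) else 0)
        = if S ∪ T ⊆ suppPt x then 1 else 0 := by
      by_cases hS : S ⊆ suppPt x <;> by_cases hT : T ⊆ suppPt x <;>
        simp [hS, hT, Finset.union_subset_iff]
    rw [mul_mul_mul_comm, e2]
  calc ∑ x : Fin n → ZMod 2, g x * h x
      = ∑ x : Fin n → ZMod 2, ∑ S : Finset (Fin n), ∑ T : Finset (Fin n),
          anfCoeff g S * anfCoeff h T * (if S ∪ T ⊆ suppPt x then (1:ZMod 2) else 0) :=
        Finset.sum_congr rfl (fun x _ => e1 x)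
    _ = ∑ S : Finset (Fin n), ∑ x : Fin n → ZMod 2, ∑ T : Finset (Fin n),
          anfCoeff g S * anfCoeff h T * (if S ∪ T ⊆ suppPt x then (1:ZMod 2) else 0) :=
        Finset.sum_comm
    _ = ∑ S : Finset (Fin n), ∑ T : Finset (Fin n), ∑ x : Fin n → ZMod 2,
          anfCoeff g S * anfCoeff h T * (if S ∪ T ⊆ suppPt x then (1:ZMod 2) else 0) :=
        Finset.sum_congr rfl (fun S _ => Finset.sum_comm)
    _ = 0 := by
        apply Finset.sum_eq_zero; intro S _
        apply Finset.sum_eq_zero; intro T _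
        by_cases hgS : anfCoeff g S = 0
        · simp [hgS]
        by_cases hhT : anfCoeff h T = 0
        · simp [hhT]
        have hS : S.card ≤ t := (card_le_degB g S hgS).trans hg
        have hT : T.card ≤ t := (card_le_degB h T hhT).trans hh
        have hcard : (S ∪ T).card < n := by
          have := Finset.card_union_le S T
          omega
        rw [← Finset.mul_sum, sum_indicator_eq_zero _ hcard, mul_zero]

lemma ann_of_eq_on (f : (Fin n → ZMod 2) → ZMod 2) (D : ℕ)
    (c c' : {S : Finset (Fin n) // S.card ≤ D} → ZMod 2) (hne : c ≠ c')
    (heq : ∀ x, f x = 1 → polyD D c x = polyD D c' x) :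
    ∃ g, IsAnnihilator f g ∧ degB g ≤ D := by
  refine ⟨polyD D (c - c'), ⟨?_, ?_⟩, degB_polyD _ _⟩
  · intro h0
    apply hne
    have hz : ∀ S : {S : Finset (Fin n) // S.card ≤ D}, (c - c') S = 0 := by
      intro S
      have h1 := anfCoeff_polyD D (c - c') S.1
      rw [h0, anfCoeff_zero, dif_pos S.2] at h1
      simpa using h1.symm
    have : c - c' = 0 := funext hz
    exact sub_eq_zero.1 this
  · intro x
    rcases zmod2_cases (f x) with h | h
    · rw [h, zero_mul]
    · rw [h, one_mul, polyD_sub, heq x h, sub_self]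

lemma card_filter_small (t : ℕ) (hn : n = 2 * t + 1) :
    (Finset.univ.filter (fun S : Finset (Fin n) => S.card ≤ t)).card = 2 ^ (n - 1) := by
  have hAB : (Finset.univ.filter (fun S : Finset (Fin n) => S.card ≤ t)).card
      = (Finset.univ.filter (fun S : Finset (Fin n) => ¬ S.card ≤ t)).card := by
    apply Finset.card_bij' (fun S _ => Sᶜ) (fun S _ => Sᶜ)
    · intro S _; exact compl_compl S
    · intro S _; exact compl_compl S
    · intro S hS
      rw [Finset.mem_filter] at hS ⊢
      refine ⟨Finset.mem_univ _, ?_⟩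
      rw [Finset.card_compl, Fintype.card_fin]
      omega
    · intro S hS
      rw [Finset.mem_filter] at hS ⊢
      refine ⟨Finset.mem_univ _, ?_⟩
      have hc := Finset.card_le_univ S
      rw [Fintype.card_fin] at hc
      rw [Finset.card_compl, Fintype.card_fin]
      omega
  have hsum := Finset.card_filter_add_card_filter_not
    (s := (Finset.univ : Finset (Finset (Fin n))))
    (p := fun S : Finset (Fin n) => S.card ≤ t)
  rw [Finset.card_univ, Fintype.card_finset, Fintype.card_fin] at hsum
  have h2 : (2:ℕ) ^ n = 2 * 2 ^ (n - 1) := by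
    subst hn
    rw [show 2 * t + 1 - 1 = 2 * t from rfl, pow_succ, Nat.mul_comm]
  omega

end Stmt1Aux

open Stmt1Aux

/-- for odd `n = 2t+1` and balanced `f`, if `f` has no annihilator of degree
less than `t+1`, then neither has `f ⊕ 1`; consequently `AI(f) = t+1`. -/
theorem stmt_1 (n t : ℕ) (hn : n = 2 * t + 1) (f : (Fin n → ZMod 2) → ZMod 2)
    (hbal : Nat.card {x : Fin n → ZMod 2 // f x = 1} = 2 ^ (n - 1))
    (hann : ∀ g, IsAnnihilator f g → t + 1 ≤ degB g) :
    (∀ g, IsAnnihilator (fun x => f x + 1) g → t + 1 ≤ degB g) ∧ AI f = t + 1 := by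
  classical
  have hcard_small : Fintype.card {S : Finset (Fin n) // S.card ≤ t} = 2 ^ (n - 1) := by
    rw [Fintype.card_subtype, card_filter_small t hn]
  have hcardT : Fintype.card {x : Fin n → ZMod 2 // f x = 1} = 2 ^ (n - 1) := by
    rw [← Nat.card_eq_fintype_card, hbal]
  have key_inj : Function.Injective
      (fun (c : {S : Finset (Fin n) // S.card ≤ t} → ZMod 2)
        (y : {x : Fin n → ZMod 2 // f x = 1}) => polyD t c y.1) := by
    intro c c' hcc
    by_contra hne
    obtain ⟨g, hg, hgd⟩ := ann_of_eq_on f t c c' hne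
      (fun x hx => congrFun hcc ⟨x, hx⟩)
    have := hann g hg
    omega
  have key_surj : Function.Surjective
      (fun (c : {S : Finset (Fin n) // S.card ≤ t} → ZMod 2)
        (y : {x : Fin n → ZMod 2 // f x = 1}) => polyD t c y.1) := by
    have hc : Fintype.card ({S : Finset (Fin n) // S.card ≤ t} → ZMod 2)
        = Fintype.card ({x : Fin n → ZMod 2 // f x = 1} → ZMod 2) := by
      rw [Fintype.card_fun, Fintype.card_fun, hcard_small, hcardT]
    exact ((Fintype.bijective_iff_injective_and_card _).2 ⟨key_inj, hc⟩).surjective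
  have claim1 : ∀ g, IsAnnihilator (fun x => f x + 1) g → t + 1 ≤ degB g := by
    rintro g ⟨hg0, hgann⟩
    by_contra hlt
    have hgt : degB g ≤ t := by omega
    have hg_supp : ∀ x, f x ≠ 1 → g x = 0 := by
      intro x hx
      have h0 : f x = 0 := (zmod2_cases _).resolve_right hx
      simpa [h0] using hgann x
    obtain ⟨x0, hx0⟩ : ∃ x, g x ≠ 0 := by
      by_contra hall
      push_neg at hall
      exact hg0 (funext fun x => hall x)
    have hgx0 : g x0 = 1 := (zmod2_cases _).resolve_left hx0
    have hfx0 : f x0 = 1 := by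
      by_contra hx
      rw [hg_supp x0 hx] at hgx0
      exact absurd hgx0 (by decide)
    obtain ⟨c, hc⟩ := key_surj (fun y => if y.1 = x0 then 1 else 0)
    have hht : degB (polyD t c) ≤ t := degB_polyD t c
    have horth := orth t hn g (polyD t c) hgt hht
    have hterm : ∀ x : Fin n → ZMod 2, g x * polyD t c x = if x = x0 then 1 else 0 := by
      intro x
      by_cases hfx : f x = 1
      · have h2 : polyD t c x = if x = x0 then 1 else 0 := congrFun hc ⟨x, hfx⟩
        rw [h2]
        by_cases hxx : x = x0
        · rw [if_pos hxx, hxx, hgx0, one_mul]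
        · rw [if_neg hxx, mul_zero]
      · rw [hg_supp x hfx, zero_mul, if_neg]
        rintro rfl
        exact hfx hfx0
    rw [Finset.sum_congr rfl (fun x _ => hterm x)] at horth
    rw [Finset.sum_ite_eq' Finset.univ x0 (fun _ => (1:ZMod 2))] at horth
    rw [if_pos (Finset.mem_univ _)] at horth
    exact absurd horth (by decide)
  refine ⟨claim1, ?_⟩
  have hexists : ∃ g, IsAnnihilator f g ∧ degB g = t + 1 := by
    have hbig : 2 ^ (n - 1) < Fintype.card {S : Finset (Fin n) // S.card ≤ t + 1} := by
      rw [Fintype.card_subtype]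
      have hss : Finset.univ.filter (fun S : Finset (Fin n) => S.card ≤ t)
          ⊂ Finset.univ.filter (fun S : Finset (Fin n) => S.card ≤ t + 1) := by
        rw [Finset.ssubset_def]
        constructor
        · intro S hS
          rw [Finset.mem_filter] at hS ⊢
          exact ⟨hS.1, by omega⟩
        · intro hsub
          obtain ⟨S, -, hScard⟩ := Finset.exists_subset_card_eq (s := (Finset.univ : Finset (Fin n)))
            (n := t + 1) (by rw [Finset.card_univ, Fintype.card_fin]; omega)
          have h1 : S ∈ Finset.univ.filter (fun S : Finset (Fin n) => S.card ≤ t + 1) :=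
            Finset.mem_filter.2 ⟨Finset.mem_univ _, by omega⟩
          have h2 := hsub h1
          rw [Finset.mem_filter] at h2
          omega
      have hlt := Finset.card_lt_card hss
      rw [card_filter_small t hn] at hlt
      exact hlt
    have hni : ¬ Function.Injective
        (fun (c : {S : Finset (Fin n) // S.card ≤ t + 1} → ZMod 2)
          (y : {x : Fin n → ZMod 2 // f x = 1}) => polyD (t + 1) c y.1) := by
      intro hinj
      have hle := Fintype.card_le_of_injective _ hinj
      rw [Fintype.card_fun, Fintype.card_fun, hcardT, ZMod.card] at hle
      exact absurd hle (not_le.2 (Nat.pow_lt_pow_right one_lt_two hbig))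
    obtain ⟨c, c', heq, hne⟩ := Function.not_injective_iff.1 hni
    obtain ⟨g, hg, hgd⟩ := ann_of_eq_on f (t + 1) c c' hne
      (fun x hx => congrFun heq ⟨x, hx⟩)
    exact ⟨g, hg, le_antisymm hgd (hann g hg)⟩
  obtain ⟨g, hg, hdeg⟩ := hexists
  have mem : t + 1 ∈ {d | ∃ g, (IsAnnihilator f g ∨ IsAnnihilator (fun x => f x + 1) g)
      ∧ degB g = d} := ⟨g, Or.inl hg, hdeg⟩
  unfold AI
  apply le_antisymm
  · exact Nat.sInf_le mem
  · apply le_csInf ⟨_, mem⟩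
    rintro d ⟨g', hg', rfl⟩
    rcases hg' with h | h
    · exact hann g' h
    · exact claim1 g' h
end

section
/- Let n = 2t+1 be an odd positive integer and f a Boolean function of n variables. Then AI(f) = t+1 if and only if f is balanced and the 2^{n−1} × 2^{n−1} matrix V(1_f) over F_2 is invertible. -/
/-! ### Auxiliary material -/

open Finset

namespace Stmt2Aux

variable {n : ℕ}

/-- support of a point -/
def suppB {n : ℕ} (x : Fin n → ZMod 2) : Finset (Fin n) := univ.filter (fun i => x i = 1)

lemma zmod2_cases (a : ZMod 2) : a = 0 ∨ a = 1 := by revert a; decide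

lemma mem_suppB {x : Fin n → ZMod 2} {i : Fin n} : i ∈ suppB x ↔ x i = 1 := by
  simp [suppB]

lemma suppB_inj {x y : Fin n → ZMod 2} (h : suppB x = suppB y) : x = y := by
  funext i
  have hx := @mem_suppB n x i
  have hy := @mem_suppB n y i
  rw [h] at hx
  rcases zmod2_cases (x i) with h1 | h1 <;> rcases zmod2_cases (y i) with h2 | h2 <;>
    simp [h1, h2] at * <;> tauto

lemma prod_mono_eq (S : Finset (Fin n)) (x : Fin n → ZMod 2) :
    (∏ i ∈ S, x i) = if S ⊆ suppB x then 1 else 0 := by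
  split_ifs with h
  · exact Finset.prod_eq_one fun i hi => mem_suppB.mp (h hi)
  · obtain ⟨i, hi, hxi⟩ : ∃ i ∈ S, i ∉ suppB x := by
      by_contra hc; push_neg at hc; exact h hc
    refine Finset.prod_eq_zero hi ?_
    rcases zmod2_cases (x i) with h1 | h1
    · exact h1
    · exact absurd (mem_suppB.mpr h1) hxi

/-- the Boolean function associated to a full coefficient vector -/
def Gfun {n : ℕ} (c : Finset (Fin n) → ZMod 2) : (Fin n → ZMod 2) → ZMod 2 :=
  fun x => ∑ S : Finset (Fin n), c S * ∏ i ∈ S, x i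

lemma anfCoeff_eq (f : (Fin n → ZMod 2) → ZMod 2) (S : Finset (Fin n)) :
    anfCoeff f S = ∑ x ∈ univ.filter (fun x : Fin n → ZMod 2 => suppB x ⊆ S), f x := by
  unfold anfCoeff
  apply Finset.sum_congr _ (fun _ _ => rfl)
  apply Finset.filter_congr
  intro x _
  constructor
  · intro h i hi; exact h i (mem_suppB.mp hi)
  · intro h i hi; exact h (mem_suppB.mpr hi)

lemma pow_two_zmod (k : ℕ) : ((2 ^ k : ℕ) : ZMod 2) = if k = 0 then 1 else 0 := by
  have h2 : ((2 : ℕ) : ZMod 2) = 0 := by decide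
  cases k with
  | zero => simp
  | succ m =>
    rw [pow_succ, Nat.cast_mul, h2, mul_zero]
    simp

lemma icc_count (A T : Finset (Fin n)) :
    (((T.powerset).filter (fun S => A ⊆ S)).card : ZMod 2) = if A = T then 1 else 0 := by
  have hf : (T.powerset).filter (fun S => A ⊆ S) = Finset.Icc A T := by
    ext S
    simp [Finset.mem_Icc, Finset.mem_powerset, and_comm, Finset.le_iff_subset]
  rw [hf]
  by_cases hAT : A ⊆ T
  · rw [Finset.card_Icc_finset hAT, pow_two_zmod]
    by_cases hEq : A = T
    · simp [hEq]
    · have : T.card - A.card ≠ 0 := by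
        have hlt : A.card < T.card :=
          Finset.card_lt_card (lt_of_le_of_ne hAT hEq)
        omega
      simp [hEq, this]
  · rw [Finset.Icc_eq_empty (by simpa [Finset.le_iff_subset] using hAT)]
    have : A ≠ T := fun h => hAT (h ▸ le_refl _)
    simp [this]

lemma Gfun_anf (f : (Fin n → ZMod 2) → ZMod 2) : Gfun (anfCoeff f) = f := by
  funext x
  unfold Gfun
  simp only [prod_mono_eq, mul_ite, mul_one, mul_zero]
  rw [← Finset.sum_filter]
  have hp : univ.filter (fun S : Finset (Fin n) => S ⊆ suppB x) = (suppB x).powerset := by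
    ext S; simp [Finset.mem_powerset]
  rw [hp]
  simp only [anfCoeff_eq]
  simp only [Finset.sum_filter]
  rw [Finset.sum_comm]
  have key : ∀ y : Fin n → ZMod 2,
      (∑ S ∈ (suppB x).powerset, if suppB y ⊆ S then f y else 0)
        = if suppB y = suppB x then f y else 0 := by
    intro y
    rw [← Finset.sum_filter, Finset.sum_const, nsmul_eq_mul, icc_count]
    split_ifs <;> ring
  rw [Finset.sum_congr rfl (fun y _ => key y)]
  rw [Finset.sum_eq_single x]
  · simp
  · intro y _ hy
    rw [if_neg (fun h => hy (suppB_inj h))]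
  · intro h; exact absurd (Finset.mem_univ x) h

lemma suppB_bij : Function.Bijective (suppB : (Fin n → ZMod 2) → Finset (Fin n)) := by
  rw [Fintype.bijective_iff_injective_and_card]
  refine ⟨fun x y h => suppB_inj h, ?_⟩
  simp [Fintype.card_finset]

lemma sum_mono (U : Finset (Fin n)) :
    (∑ x : Fin n → ZMod 2, ∏ i ∈ U, x i) = if U = univ then 1 else 0 := by
  simp only [prod_mono_eq]
  rw [Fintype.sum_bijective suppB suppB_bij _
    (fun S => if U ⊆ S then (1 : ZMod 2) else 0) (fun x => rfl)]
  rw [← Finset.sum_filter, Finset.sum_const, nsmul_eq_mul, mul_one, ← Finset.powerset_univ,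
    icc_count]

lemma Gfun_bij : Function.Bijective (Gfun : (Finset (Fin n) → ZMod 2) → _) := by
  rw [Fintype.bijective_iff_surjective_and_card]
  refine ⟨fun f => ⟨anfCoeff f, Gfun_anf f⟩, ?_⟩
  simp [Fintype.card_finset]

lemma anf_Gfun (c : Finset (Fin n) → ZMod 2) : anfCoeff (Gfun c) = c :=
  Gfun_bij.injective (Gfun_anf (Gfun c))

/-- extend a coefficient vector on low-degree monomials by zero -/
def extC {n t : ℕ} (c : {S : Finset (Fin n) // S.card ≤ t} → ZMod 2) :
    Finset (Fin n) → ZMod 2 :=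
  fun S => if h : S.card ≤ t then c ⟨S, h⟩ else 0

lemma Gfun_extC {t : ℕ} (c : {S : Finset (Fin n) // S.card ≤ t} → ZMod 2)
    (x : Fin n → ZMod 2) :
    Gfun (extC c) x = ∑ S : {S : Finset (Fin n) // S.card ≤ t}, c S * ∏ i ∈ S.1, x i := by
  unfold Gfun
  rw [← Finset.sum_filter_add_sum_filter_not univ (fun S : Finset (Fin n) => S.card ≤ t)
      (fun S => extC c S * ∏ i ∈ S, x i)]
  have h2 : ∑ S ∈ univ.filter (fun S : Finset (Fin n) => ¬ S.card ≤ t),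
      extC c S * ∏ i ∈ S, x i = 0 := by
    apply Finset.sum_eq_zero
    intro S hS
    rw [Finset.mem_filter] at hS
    simp [extC, hS.2]
  rw [h2, add_zero,
    Finset.sum_subtype (p := fun S : Finset (Fin n) => S.card ≤ t)
      (univ.filter (fun S : Finset (Fin n) => S.card ≤ t)) (by simp)
      (fun S => extC c S * ∏ i ∈ S, x i)]
  apply Finset.sum_congr rfl
  intro S _
  simp [extC, S.2]

lemma mulVecLin_eq {t : ℕ} (T : Set (Fin n → ZMod 2))
    (c : {S : Finset (Fin n) // S.card ≤ t} → ZMod 2) (x : T) :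
    (VSet t T).mulVecLin c x = Gfun (extC c) ↑x := by
  rw [Gfun_extC]
  simp only [Matrix.mulVecLin_apply, Matrix.mulVec, dotProduct, VSet]
  exact Finset.sum_congr rfl (fun S _ => mul_comm _ _)

lemma degB_extC {t : ℕ} (c : {S : Finset (Fin n) // S.card ≤ t} → ZMod 2) :
    degB (Gfun (extC c)) ≤ t := by
  apply Finset.sup_le
  intro S hS
  rw [Finset.mem_filter, anf_Gfun] at hS
  by_contra h
  exact hS.2 (dif_neg h)

lemma anfCoeff_vanish {g : (Fin n → ZMod 2) → ZMod 2} {t : ℕ} (h : degB g ≤ t)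
    {S : Finset (Fin n)} (hS : ¬ S.card ≤ t) : anfCoeff g S = 0 := by
  by_contra hc
  exact hS (le_trans (Finset.le_sup (Finset.mem_filter.mpr ⟨Finset.mem_univ _, hc⟩)) h)

lemma rep_of_degB_le {g : (Fin n → ZMod 2) → ZMod 2} {t : ℕ} (h : degB g ≤ t) :
    Gfun (extC (fun S : {S : Finset (Fin n) // S.card ≤ t} => anfCoeff g S.1)) = g := by
  have : extC (fun S : {S : Finset (Fin n) // S.card ≤ t} => anfCoeff g S.1) = anfCoeff g := by
    funext S
    unfold extC
    split_ifs with hc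
    · rfl
    · exact (anfCoeff_vanish h hc).symm
  rw [this, Gfun_anf]

lemma GextC_eq_zero {t : ℕ} {c : {S : Finset (Fin n) // S.card ≤ t} → ZMod 2}
    (h : Gfun (extC c) = 0) : c = 0 := by
  have h0 : Gfun (extC (0 : {S : Finset (Fin n) // S.card ≤ t} → ZMod 2)) = 0 := by
    funext x
    simp [Gfun, extC]
  have hext := Gfun_bij.injective (h.trans h0.symm)
  funext S
  have := congrFun hext S.1
  simpa [extC, S.2] using this

lemma isotropy {t : ℕ} (hn : n = 2 * t + 1)
    (c d : {S : Finset (Fin n) // S.card ≤ t} → ZMod 2) :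
    (∑ x : Fin n → ZMod 2, Gfun (extC c) x * Gfun (extC d) x) = 0 := by
  simp only [Gfun_extC, Finset.sum_mul_sum]
  rw [Finset.sum_comm]
  apply Finset.sum_eq_zero
  intro S _
  rw [Finset.sum_comm]
  apply Finset.sum_eq_zero
  intro T _
  have hm : ∀ x : Fin n → ZMod 2,
      c S * (∏ i ∈ S.1, x i) * (d T * ∏ i ∈ T.1, x i)
        = (c S * d T) * ∏ i ∈ S.1 ∪ T.1, x i := by
    intro x
    simp only [prod_mono_eq]
    by_cases h3 : S.1 ∪ T.1 ⊆ suppB x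
    · obtain ⟨h1, h2⟩ := Finset.union_subset_iff.mp h3
      rw [if_pos h3, if_pos h1, if_pos h2]
      ring
    · rw [if_neg h3, Finset.union_subset_iff] at *
      by_cases h1 : S.1 ⊆ suppB x
      · rw [if_pos h1, if_neg (fun h => h3 ⟨h1, h⟩)]; ring
      · rw [if_neg h1]; ring
  rw [Finset.sum_congr rfl (fun x _ => hm x), ← Finset.mul_sum, sum_mono, if_neg, mul_zero]
  intro hU
  have h1 : (S.1 ∪ T.1).card ≤ 2 * t := by
    have hS := S.2
    have hT := T.2
    have := Finset.card_union_le S.1 T.1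
    omega
  have h2 : (univ : Finset (Fin n)).card = n := by simp
  rw [hU] at h1
  omega

/-- cardinality of the space of monomials of degree at most `t`, `n = 2t+1` -/
lemma card_M {t : ℕ} (hn : n = 2 * t + 1) :
    Fintype.card {S : Finset (Fin n) // S.card ≤ t} = 2 ^ (2 * t) := by
  have e : {S : Finset (Fin n) // S.card ≤ t} ≃ {S : Finset (Fin n) // ¬ S.card ≤ t} := by
    refine ⟨fun S => ⟨S.1ᶜ, ?_⟩, fun S => ⟨S.1ᶜ, ?_⟩, fun S => ?_, fun S => ?_⟩
    · have h1 := S.2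
      have h2 : S.1.card ≤ n := by
        simpa using Finset.card_le_univ S.1
      rw [Finset.card_compl]
      simp only [Fintype.card_fin]
      omega
    · have h1 := S.2
      have h2 : S.1.card ≤ n := by
        simpa using Finset.card_le_univ S.1
      rw [Finset.card_compl]
      simp only [Fintype.card_fin]
      omega
    · ext i; simp
    · ext i; simp
  have hcompl := Fintype.card_subtype_compl (fun S : Finset (Fin n) => S.card ≤ t)
  have hcongr := Fintype.card_congr e
  have hle : Fintype.card {S : Finset (Fin n) // S.card ≤ t}
      ≤ Fintype.card (Finset (Fin n)) := Fintype.card_subtype_le _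
  have hfull : Fintype.card (Finset (Fin n)) = 2 ^ n := by
    simp [Fintype.card_finset]
  rw [hcompl, hfull] at hcongr
  rw [hfull] at hle
  have hpow : 2 ^ n = 2 * 2 ^ (2 * t) := by
    rw [hn, pow_succ]
    ring
  omega

lemma ann_iff_vanish (f g : (Fin n → ZMod 2) → ZMod 2) :
    IsAnnihilator f g ↔ g ≠ 0 ∧ ∀ x, f x = 1 → g x = 0 := by
  unfold IsAnnihilator
  refine and_congr_right fun _ => ⟨fun h x hx => ?_, fun h x => ?_⟩
  · have := h x
    rwa [hx, one_mul] at this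
  · rcases zmod2_cases (f x) with h1 | h1
    · rw [h1, zero_mul]
    · rw [h1, one_mul]
      exact h x h1

lemma annC_iff_vanish (f g : (Fin n → ZMod 2) → ZMod 2) :
    IsAnnihilator (fun x => f x + 1) g ↔ g ≠ 0 ∧ ∀ x, f x = 0 → g x = 0 := by
  rw [ann_iff_vanish]
  refine and_congr_right fun _ => ⟨fun h x hx => ?_, fun h x hx => ?_⟩
  · exact h x (by rw [hx, zero_add])
  · apply h x
    rcases zmod2_cases (f x) with h1 | h1
    · exact h1
    · rw [h1] at hx
      exact absurd hx (by decide)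


lemma vanish_iff_not_inj {t : ℕ} (T : Set (Fin n → ZMod 2)) :
    (∃ g : (Fin n → ZMod 2) → ZMod 2, g ≠ 0 ∧ (∀ x ∈ T, g x = 0) ∧ degB g ≤ t) ↔
      ¬ Function.Injective (Matrix.mulVecLin (VSet t T)) := by
  constructor
  · rintro ⟨g, hg0, hgv, hgd⟩ hinj
    set c := fun S : {S : Finset (Fin n) // S.card ≤ t} => anfCoeff g S.1 with hcdef
    have hrep : Gfun (extC c) = g := rep_of_degB_le hgd
    have hLc : Matrix.mulVecLin (VSet t T) c = 0 := by
      funext x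
      rw [mulVecLin_eq, hrep]
      exact hgv x x.2
    have hc0 : c = 0 := hinj (hLc.trans (map_zero _).symm)
    apply hg0
    rw [← hrep, hc0]
    funext x
    simp [Gfun, extC]
  · intro hninj
    rw [Function.not_injective_iff] at hninj
    obtain ⟨a, b, hab, hne⟩ := hninj
    set c := a - b with hcdef
    have hc0 : c ≠ 0 := sub_ne_zero.mpr hne
    have hLc : Matrix.mulVecLin (VSet t T) c = 0 := by
      rw [hcdef, map_sub, hab, sub_self]
    refine ⟨Gfun (extC c), fun h => hc0 (GextC_eq_zero h), ?_, degB_extC c⟩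
    intro x hx
    have h1 := congrFun hLc ⟨x, hx⟩
    rw [mulVecLin_eq] at h1
    simpa using h1

lemma card_le_of_inj {t : ℕ} (T : Set (Fin n → ZMod 2)) [Fintype ↥T]
    (hinj : Function.Injective (Matrix.mulVecLin (VSet t T))) :
    Fintype.card {S : Finset (Fin n) // S.card ≤ t} ≤ Fintype.card ↥T := by
  have h := Fintype.card_le_of_injective _ hinj
  simp only [Fintype.card_fun] at h
  have h2 : Fintype.card (ZMod 2) = 2 := by decide
  rw [h2] at h
  exact (Nat.pow_le_pow_iff_right (by omega)).mp h

lemma card_M_lt {t : ℕ} (hn : n = 2 * t + 1) :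
    Fintype.card {S : Finset (Fin n) // S.card ≤ t}
      < Fintype.card {S : Finset (Fin n) // S.card ≤ t + 1} := by
  obtain ⟨S0, _, hS0⟩ := Finset.exists_subset_card_eq
    (s := (univ : Finset (Fin n))) (n := t + 1) (by simp [hn]; omega)
  refine Fintype.card_lt_of_injective_of_notMem
    (fun S : {S : Finset (Fin n) // S.card ≤ t} =>
      (⟨S.1, le_trans S.2 (Nat.le_succ t)⟩ : {S : Finset (Fin n) // S.card ≤ t + 1}))
    ?_ (b := ⟨S0, le_of_eq hS0⟩) ?_
  · intro S S' h
    have h2 : S.1 = S'.1 := congrArg (fun W : {S : Finset (Fin n) // S.card ≤ t + 1} => W.1) h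
    exact Subtype.ext h2
  · rintro ⟨S, hS⟩
    have hc := congrArg (fun W : {S : Finset (Fin n) // S.card ≤ t + 1} => W.1.card) hS
    simp only at hc
    rw [hS0] at hc
    have := S.2
    omega

lemma exists_high_ann {t : ℕ} (hn : n = 2 * t + 1) (T : Set (Fin n → ZMod 2)) [Fintype ↥T]
    (hcard : Fintype.card ↥T ≤ 2 ^ (2 * t)) :
    ∃ g : (Fin n → ZMod 2) → ZMod 2, g ≠ 0 ∧ (∀ x ∈ T, g x = 0) ∧ degB g ≤ t + 1 := by
  rw [vanish_iff_not_inj]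
  intro hinj
  have h1 := card_le_of_inj T hinj
  have h2 := card_M_lt hn
  have h3 := card_M hn
  omega

lemma zmod2_ne_one_iff (a : ZMod 2) : a = 0 ↔ ¬ a = 1 := by revert a; decide

lemma card_split (f : (Fin n → ZMod 2) → ZMod 2) :
    Fintype.card {x : Fin n → ZMod 2 // f x = 1}
      + Fintype.card {x : Fin n → ZMod 2 // f x = 0} = 2 ^ n := by
  have h0 : Fintype.card {x : Fin n → ZMod 2 // f x = 0}
      = Fintype.card {x : Fin n → ZMod 2 // ¬ f x = 1} :=
    Fintype.card_congr (Equiv.subtypeEquivRight (fun x => zmod2_ne_one_iff (f x)))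
  rw [h0, Fintype.card_subtype_compl]
  have hle := Fintype.card_subtype_le (fun x : Fin n → ZMod 2 => f x = 1)
  have hful : Fintype.card (Fin n → ZMod 2) = 2 ^ n := by
    simp [Fintype.card_fun]
  omega

end Stmt2Aux

open Stmt2Aux

/-- for odd `n = 2t+1`, `AI(f) = t+1` iff `f` is balanced and the
`2^{n-1} × 2^{n-1}` matrix `V(1_f)` over `F_2` is invertible. -/
theorem stmt_2 (n t : ℕ) (hn : n = 2 * t + 1) (f : (Fin n → ZMod 2) → ZMod 2) :
    AI f = t + 1 ↔
      (Nat.card {x : Fin n → ZMod 2 // f x = 1} = 2 ^ (n - 1) ∧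
        Function.Bijective (Matrix.mulVecLin (VSet t {x | f x = 1}))) := by
  have hn1 : n - 1 = 2 * t := by omega
  set T1 : Set (Fin n → ZMod 2) := {x | f x = 1} with hT1
  set T0 : Set (Fin n → ZMod 2) := {x | f x = 0} with hT0
  have hNat : Nat.card {x : Fin n → ZMod 2 // f x = 1} = Fintype.card ↥T1 := by
    rw [Nat.card_eq_fintype_card]
    exact Fintype.card_congr (Equiv.subtypeEquivRight fun x => Iff.rfl)
  have hsplit : Fintype.card ↥T1 + Fintype.card ↥T0 = 2 ^ n := by
    have hcs := card_split f
    have e1 : Fintype.card ↥T1 = Fintype.card {x : Fin n → ZMod 2 // f x = 1} :=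
      Fintype.card_congr (Equiv.subtypeEquivRight fun x => Iff.rfl)
    have e0 : Fintype.card ↥T0 = Fintype.card {x : Fin n → ZMod 2 // f x = 0} :=
      Fintype.card_congr (Equiv.subtypeEquivRight fun x => Iff.rfl)
    omega
  have hMcard := card_M (n := n) (t := t) hn
  constructor
  · intro hAI
    have hlow : ∀ g : (Fin n → ZMod 2) → ZMod 2,
        (IsAnnihilator f g ∨ IsAnnihilator (fun x => f x + 1) g) → t + 1 ≤ degB g := by
      intro g hg
      have hle : AI f ≤ degB g := Nat.sInf_le ⟨g, hg, rfl⟩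
      omega
    have hinj1 : Function.Injective (Matrix.mulVecLin (VSet t T1)) := by
      by_contra hni
      obtain ⟨g, hg0, hgv, hgd⟩ := (vanish_iff_not_inj T1).mpr hni
      have hann : IsAnnihilator f g := (ann_iff_vanish f g).mpr ⟨hg0, fun x hx => hgv x hx⟩
      have := hlow g (Or.inl hann)
      omega
    have hinj0 : Function.Injective (Matrix.mulVecLin (VSet t T0)) := by
      by_contra hni
      obtain ⟨g, hg0, hgv, hgd⟩ := (vanish_iff_not_inj T0).mpr hni
      have hann : IsAnnihilator (fun x => f x + 1) g :=
        (annC_iff_vanish f g).mpr ⟨hg0, fun x hx => hgv x hx⟩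
      have := hlow g (Or.inr hann)
      omega
    have hc1 := card_le_of_inj T1 hinj1
    have hc0 := card_le_of_inj T0 hinj0
    have hpow : (2:ℕ) ^ n = 2 * 2 ^ (2 * t) := by rw [hn, pow_succ]; ring
    have hT1card : Fintype.card ↥T1 = 2 ^ (2 * t) := by omega
    refine ⟨by rw [hNat, hT1card, hn1], ?_⟩
    rw [Fintype.bijective_iff_injective_and_card]
    refine ⟨hinj1, ?_⟩
    simp only [Fintype.card_fun]
    rw [hT1card, hMcard]
  · rintro ⟨hbal, hbij⟩
    have hT1card : Fintype.card ↥T1 = 2 ^ (2 * t) := by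
      rw [← hNat, hbal, hn1]
    have hlb : ∀ g : (Fin n → ZMod 2) → ZMod 2,
        (IsAnnihilator f g ∨ IsAnnihilator (fun x => f x + 1) g) → t + 1 ≤ degB g := by
      intro g hg
      by_contra hdlt
      have hdeg : degB g ≤ t := by omega
      rcases hg with hg | hg
      · obtain ⟨hg0, hgv⟩ := (ann_iff_vanish f g).mp hg
        exact (vanish_iff_not_inj T1).mp ⟨g, hg0, fun x hx => hgv x hx, hdeg⟩ hbij.injective
      · obtain ⟨hg0, hgv⟩ := (annC_iff_vanish f g).mp hg
        apply hg0
        set c := fun S : {S : Finset (Fin n) // S.card ≤ t} => anfCoeff g S.1 with hc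
        have hrep : Gfun (extC c) = g := rep_of_degB_le hdeg
        have hTzero : ∀ x0 : ↥T1, g ↑x0 = 0 := by
          intro x0
          obtain ⟨d, hd⟩ := hbij.surjective (fun y : ↥T1 => if y = x0 then 1 else 0)
          have hiso := isotropy hn c d
          have hsum : (∑ x : Fin n → ZMod 2, Gfun (extC c) x * Gfun (extC d) x) = g ↑x0 := by
            rw [hrep]
            rw [← Finset.sum_filter_add_sum_filter_not univ (fun x : Fin n → ZMod 2 => f x = 1)
              (fun x => g x * Gfun (extC d) x)]
            have hz : (∑ x ∈ univ.filter (fun x : Fin n → ZMod 2 => ¬ f x = 1),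
                g x * Gfun (extC d) x) = 0 := by
              apply Finset.sum_eq_zero
              intro x hx
              rw [Finset.mem_filter] at hx
              rw [hgv x ((zmod2_ne_one_iff (f x)).mpr hx.2), zero_mul]
            rw [hz, add_zero]
            rw [Finset.sum_subtype (p := fun x : Fin n → ZMod 2 => x ∈ T1)
              (univ.filter (fun x : Fin n → ZMod 2 => f x = 1))
              (by intro x; simp [hT1, Set.mem_setOf_eq])
              (fun x => g x * Gfun (extC d) x)]
            have hterm : ∀ y : ↥T1,
                g ↑y * Gfun (extC d) ↑y = if y = x0 then g ↑y else 0 := by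
              intro y
              have h2 := congrFun hd y
              rw [mulVecLin_eq] at h2
              rw [h2, mul_ite, mul_one, mul_zero]
            rw [Finset.sum_congr rfl (fun y _ => hterm y),
              Finset.sum_ite_eq' univ x0 (fun y => g ↑y), if_pos (Finset.mem_univ x0)]
          exact hsum.symm.trans hiso
        funext x
        rcases zmod2_cases (f x) with h1 | h1
        · exact hgv x h1
        · exact hTzero ⟨x, h1⟩
    obtain ⟨g, hg0, hgv, hgd⟩ := exists_high_ann hn T1 (le_of_eq hT1card)
    have hann : IsAnnihilator f g := (ann_iff_vanish f g).mpr ⟨hg0, fun x hx => hgv x hx⟩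
    have hge := hlb g (Or.inl hann)
    have hdg : degB g = t + 1 := by omega
    apply le_antisymm
    · exact Nat.sInf_le ⟨g, Or.inl hann, hdg⟩
    · apply le_csInf
      · exact ⟨t + 1, ⟨g, Or.inl hann, hdg⟩⟩
      · rintro d ⟨g', hg', hdg'⟩
        exact hdg' ▸ hlb g' hg'
end

section
/- Let n = 2t+1 be an odd positive integer, a ∈ F_2, and let f be the Boolean function of n variables defined by f(X) = a if wt(X) ≤ t and f(X) = a⊕1 if wt(X) > t, where wt(X) is the number of coordinates of X equal to 1. Then AI(f) = t+1. -/
namespace S3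
variable {n : ℕ}

lemma z2 (a : ZMod 2) : a = 0 ∨ a = 1 := by revert a; decide

def suppF (x : Fin n → ZMod 2) : Finset (Fin n) := Finset.univ.filter (fun i => x i = 1)

def ofSet (B : Finset (Fin n)) : Fin n → ZMod 2 := fun i => if i ∈ B then 1 else 0

lemma mem_suppF {x : Fin n → ZMod 2} {i : Fin n} : i ∈ suppF x ↔ x i = 1 := by
  simp [suppF]

lemma suppF_ofSet (B : Finset (Fin n)) : suppF (ofSet B) = B := by
  ext i
  simp only [mem_suppF, ofSet]
  split <;> simp_all

lemma ofSet_suppF (x : Fin n → ZMod 2) : ofSet (suppF x) = x := by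
  funext i
  simp only [ofSet, mem_suppF]
  rcases z2 (x i) with h | h <;> simp [h]

lemma count_subset_powerset (D A : Finset (Fin n)) (h : D ⊆ A) :
    ((A.powerset).filter (fun C => D ⊆ C)).card = 2 ^ (A.card - D.card) := by
  have : 2 ^ (A.card - D.card) = (A \ D).powerset.card := by
    rw [Finset.card_powerset, Finset.card_sdiff_of_subset h]
  rw [this]
  apply Finset.card_bij (fun C _ => C \ D)
  · intro C hC
    simp only [Finset.mem_filter, Finset.mem_powerset] at hC ⊢
    exact Finset.sdiff_subset_sdiff hC.1 (le_refl D)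
  · intro C hC C' hC' he
    simp only [Finset.mem_filter, Finset.mem_powerset] at hC hC'
    rw [← Finset.sdiff_union_of_subset hC.2, ← Finset.sdiff_union_of_subset hC'.2, he]
  · intro E hE
    simp only [Finset.mem_powerset] at hE
    refine ⟨E ∪ D, ?_, ?_⟩
    · simp only [Finset.mem_filter, Finset.mem_powerset]
      exact ⟨Finset.union_subset (hE.trans (Finset.sdiff_subset)) h, Finset.subset_union_right⟩
    · rw [Finset.union_sdiff_right]
      exact (Finset.sdiff_eq_self_of_disjoint (Finset.disjoint_of_subset_left hE Finset.sdiff_disjoint)).symm ▸ rfl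

lemma two_pow_zmod (k : ℕ) : ((2 ^ k : ℕ) : ZMod 2) = if k = 0 then 1 else 0 := by
  cases k with
  | zero => rfl
  | succ m =>
    have h2 : ((2 : ℕ) : ZMod 2) = 0 := by decide
    push_cast
    simp [pow_succ, h2]
    exact Or.inr (by decide)


lemma anfCoeff_eq (g : (Fin n → ZMod 2) → ZMod 2) (S : Finset (Fin n)) :
    anfCoeff g S = ∑ B ∈ S.powerset, g (ofSet B) := by
  unfold anfCoeff
  apply Finset.sum_nbij' (fun x => suppF x) (fun B => ofSet B)
  · intro x hx
    simp only [Finset.mem_filter, Finset.mem_univ, true_and] at hx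
    simp only [Finset.mem_powerset]
    intro i hi
    exact hx i (mem_suppF.1 hi)
  · intro B hB
    simp only [Finset.mem_powerset] at hB
    simp only [Finset.mem_filter, Finset.mem_univ, true_and]
    intro i hi
    apply hB
    by_contra hc
    simp [ofSet, hc] at hi
  · intro x _; exact ofSet_suppF x
  · intro B _; exact suppF_ofSet B
  · intro x _; rw [ofSet_suppF]

lemma sum_coeff_powerset (g : (Fin n → ZMod 2) → ZMod 2) (A : Finset (Fin n)) :
    ∑ S ∈ A.powerset, anfCoeff g S = g (ofSet A) := by
  simp only [anfCoeff_eq]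
  rw [Finset.sum_comm' (t' := A.powerset)
      (s' := fun B => (A.powerset).filter (fun S => B ⊆ S))]
  · rw [Finset.sum_congr rfl (fun B hB => Finset.sum_const _)]
    have hcard : ∀ B ∈ A.powerset,
        ((A.powerset.filter (fun S => B ⊆ S)).card • g (ofSet B))
          = (if B = A then g (ofSet A) else 0) := by
      intro B hB
      rw [Finset.mem_powerset] at hB
      rw [count_subset_powerset B A hB, nsmul_eq_mul, two_pow_zmod]
      by_cases h : B = A
      · subst h; simp
      · have hlt : B.card < A.card := Finset.card_lt_card (HasSubset.Subset.ssubset_of_ne hB h)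
        have hne : A.card - B.card ≠ 0 := by omega
        simp [hne, h]
    rw [Finset.sum_congr rfl hcard, Finset.sum_ite_eq' A.powerset A,
      if_pos (Finset.mem_powerset.2 (le_refl A))]
  · intro S B
    simp only [Finset.mem_powerset, Finset.mem_filter]
    constructor
    · rintro ⟨h1, h2⟩; exact ⟨⟨h1, h2⟩, h2.trans h1⟩
    · rintro ⟨⟨h1, h2⟩, _⟩; exact ⟨h1, h2⟩


lemma mobius (g : (Fin n → ZMod 2) → ZMod 2) (x : Fin n → ZMod 2) :
    ∑ S ∈ (suppF x).powerset, anfCoeff g S = g x := by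
  rw [sum_coeff_powerset, ofSet_suppF]

lemma eq_zero_of_coeffs {g : (Fin n → ZMod 2) → ZMod 2} (h : ∀ S, anfCoeff g S = 0) :
    g = 0 := by
  funext x
  rw [← mobius g x, Finset.sum_congr rfl (fun S _ => h S)]
  simp

lemma coeff_zero_of_deg {g : (Fin n → ZMod 2) → ZMod 2} {t : ℕ} (h : degB g ≤ t)
    {S : Finset (Fin n)} (hS : t < S.card) : anfCoeff g S = 0 := by
  by_contra hc
  have : S.card ≤ degB g :=
    Finset.le_sup (f := Finset.card) (by simp [hc])
  omega

lemma degB_le {g : (Fin n → ZMod 2) → ZMod 2} {t : ℕ}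
    (h : ∀ S : Finset (Fin n), anfCoeff g S ≠ 0 → S.card ≤ t) : degB g ≤ t := by
  apply Finset.sup_le
  intro S hS
  simp only [Finset.mem_filter] at hS
  exact h S hS.2

lemma wtB_eq (x : Fin n → ZMod 2) : wtB x = (suppF x).card := rfl

lemma vanish_low {t : ℕ} {g : (Fin n → ZMod 2) → ZMod 2} (hd : degB g ≤ t)
    (hv : ∀ x, wtB x ≤ t → g x = 0) : g = 0 := by
  apply eq_zero_of_coeffs
  intro S
  by_cases hS : S.card ≤ t
  · rw [anfCoeff_eq]
    apply Finset.sum_eq_zero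
    intro B hB
    apply hv
    rw [wtB_eq, suppF_ofSet]
    exact le_trans (Finset.card_le_card (Finset.mem_powerset.1 hB)) hS
  · exact coeff_zero_of_deg hd (by omega)


lemma suppF_compl (x : Fin n → ZMod 2) : suppF (fun i => x i + 1) = (suppF x)ᶜ := by
  ext i
  simp only [mem_suppF, Finset.mem_compl]
  rcases z2 (x i) with h | h <;> simp [h]

lemma ofSet_compl (B : Finset (Fin n)) (i : Fin n) : ofSet Bᶜ i = ofSet B i + 1 := by
  simp only [ofSet, Finset.mem_compl]
  by_cases h : i ∈ B <;> simp [h] <;> decide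

lemma union_compl_eq_univ_iff (S T : Finset (Fin n)) : Sᶜ ∪ T = Finset.univ ↔ S ⊆ T := by
  constructor
  · intro h i hi
    have : i ∈ Sᶜ ∪ T := h ▸ Finset.mem_univ i
    rcases Finset.mem_union.1 this with h' | h'
    · exact absurd hi (Finset.mem_compl.1 h')
    · exact h'
  · intro h
    ext i
    simp only [Finset.mem_union, Finset.mem_compl, Finset.mem_univ, iff_true]
    by_cases hi : i ∈ S
    · exact Or.inr (h hi)
    · exact Or.inl hi

lemma coeff_compl (g : (Fin n → ZMod 2) → ZMod 2) (S : Finset (Fin n)) :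
    anfCoeff (fun x => g (fun i => x i + 1)) S
      = ∑ T ∈ Finset.univ.powerset.filter (fun T => S ⊆ T), anfCoeff g T := by
  rw [anfCoeff_eq]
  have step1 : ∑ B ∈ S.powerset, g (fun i => ofSet B i + 1)
      = ∑ C ∈ Finset.univ.powerset.filter (fun C => Sᶜ ⊆ C), g (ofSet C) := by
    apply Finset.sum_nbij' (fun B => Bᶜ) (fun C => Cᶜ)
    · intro B hB
      simp only [Finset.mem_powerset] at hB
      simp only [Finset.mem_filter, Finset.mem_powerset]
      exact ⟨Finset.subset_univ _, Finset.compl_subset_compl.2 hB⟩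
    · intro C hC
      simp only [Finset.mem_filter, Finset.mem_powerset] at hC
      simp only [Finset.mem_powerset]
      rw [← compl_compl S]
      exact Finset.compl_subset_compl.2 hC.2
    · intro B _; exact compl_compl B
    · intro C _; exact compl_compl C
    · intro B _
      congr 1
      funext i
      rw [ofSet_compl]
  rw [step1]
  have step2 : ∀ C ∈ Finset.univ.powerset.filter (fun C => Sᶜ ⊆ C),
      g (ofSet C) = ∑ T ∈ C.powerset, anfCoeff g T := by
    intro C _
    rw [sum_coeff_powerset]
  rw [Finset.sum_congr rfl step2]
  rw [Finset.sum_comm' (t' := Finset.univ.powerset)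
      (s' := fun T => Finset.univ.powerset.filter (fun C => Sᶜ ∪ T ⊆ C))]
  · have key : ∀ T ∈ (Finset.univ.powerset : Finset (Finset (Fin n))),
        (∑ _C ∈ Finset.univ.powerset.filter (fun C => Sᶜ ∪ T ⊆ C), anfCoeff g T)
          = if S ⊆ T then anfCoeff g T else 0 := by
      intro T _
      rw [Finset.sum_const, count_subset_powerset _ _ (Finset.subset_univ _),
        nsmul_eq_mul, two_pow_zmod]
      have hcu : (Finset.univ : Finset (Fin n)).card = n := by
        simp
      by_cases h : S ⊆ T
      · have : Sᶜ ∪ T = Finset.univ := (union_compl_eq_univ_iff S T).2 h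
        rw [this]
        simp [h]
      · have hne : Sᶜ ∪ T ≠ Finset.univ := fun hc => h ((union_compl_eq_univ_iff S T).1 hc)
        have hlt : (Sᶜ ∪ T).card < (Finset.univ : Finset (Fin n)).card :=
          Finset.card_lt_card (HasSubset.Subset.ssubset_of_ne (Finset.subset_univ _) hne)
        have h0 : n - (Sᶜ ∪ T).card ≠ 0 := by omega
        simp [hcu, h0, h]
    rw [Finset.sum_congr rfl key, ← Finset.sum_filter]
  · intro C T
    simp only [Finset.mem_filter, Finset.mem_powerset, Finset.union_subset_iff]
    constructor
    · rintro ⟨⟨_, h2⟩, h3⟩; exact ⟨⟨Finset.subset_univ _, h2, h3⟩, Finset.subset_univ _⟩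
    · rintro ⟨⟨_, h2, h3⟩, _⟩; exact ⟨⟨Finset.subset_univ _, h2⟩, h3⟩

lemma wtB_compl (x : Fin n → ZMod 2) : wtB (fun i => x i + 1) = n - wtB x := by
  rw [wtB_eq, wtB_eq, suppF_compl, Finset.card_compl, Fintype.card_fin]

lemma vanish_high {t : ℕ} (hn : n = 2 * t + 1) {g : (Fin n → ZMod 2) → ZMod 2}
    (hd : degB g ≤ t) (hv : ∀ x, t < wtB x → g x = 0) : g = 0 := by
  set g' : (Fin n → ZMod 2) → ZMod 2 := fun x => g (fun i => x i + 1) with hg'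
  have hwt : ∀ x : Fin n → ZMod 2, wtB x ≤ n := by
    intro x
    rw [wtB_eq]
    simpa using Finset.card_le_univ (suppF x)
  have hv' : ∀ x, wtB x ≤ t → g' x = 0 := by
    intro x hx
    apply hv
    rw [wtB_compl]
    have := hwt x
    omega
  have hd' : degB g' ≤ t := by
    apply degB_le
    intro S hS
    by_contra hc
    apply hS
    rw [hg', coeff_compl]
    apply Finset.sum_eq_zero
    intro T hT
    simp only [Finset.mem_filter] at hT
    have : S.card ≤ T.card := Finset.card_le_card hT.2
    exact coeff_zero_of_deg hd (by omega)
  have hz : g' = 0 := vanish_low hd' hv'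
  funext x
  have h2 : g x = g' (fun i => x i + 1) := by
    simp only [hg']
    congr 1
    funext i
    have hc : ∀ a : ZMod 2, a + 1 + 1 = a := by decide
    exact (hc (x i)).symm
  rw [h2, hz]
  rfl


lemma gW_val (F : Finset (Fin n)) (x : Fin n → ZMod 2) :
    (∏ i ∈ F, (x i + 1)) = if ∀ i ∈ F, x i = 0 then 1 else 0 := by
  by_cases h : ∀ i ∈ F, x i = 0
  · rw [if_pos h]
    apply Finset.prod_eq_one
    intro i hi
    rw [h i hi, zero_add]
  · rw [if_neg h]
    push_neg at h
    obtain ⟨i, hi, hxi⟩ := h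
    have hx1 : x i = 1 := (z2 (x i)).resolve_left hxi
    apply Finset.prod_eq_zero hi
    rw [hx1]; decide

lemma ofSet_eq_zero {B : Finset (Fin n)} {i : Fin n} : ofSet B i = 0 ↔ i ∉ B := by
  by_cases h : i ∈ B <;> simp [ofSet, h]

lemma gW_coeff (F S : Finset (Fin n)) :
    anfCoeff (fun x => ∏ i ∈ F, (x i + 1)) S = if S ⊆ F then 1 else 0 := by
  rw [anfCoeff_eq]
  have hterm : ∀ B ∈ S.powerset,
      (∏ i ∈ F, (ofSet B i + 1)) = if (∀ i ∈ F, ofSet B i = 0) then (1 : ZMod 2) else 0 :=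
    fun B _ => gW_val F (ofSet B)
  rw [Finset.sum_congr rfl hterm, Finset.sum_boole]
  have hfilter : S.powerset.filter (fun B => ∀ i ∈ F, ofSet B i = 0) = (S \ F).powerset := by
    ext B
    simp only [Finset.mem_filter, Finset.mem_powerset, ofSet_eq_zero, Finset.subset_sdiff,
      Finset.disjoint_right]
  rw [hfilter, Finset.card_powerset, two_pow_zmod]
  by_cases h : S ⊆ F
  · rw [if_pos h, if_pos]
    rw [Finset.card_eq_zero, Finset.sdiff_eq_empty_iff_subset]
    exact h
  · rw [if_neg h, if_neg]
    rw [Finset.card_eq_zero, Finset.sdiff_eq_empty_iff_subset]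
    exact h

lemma gW_deg (F : Finset (Fin n)) : degB (fun x => ∏ i ∈ F, (x i + 1)) = F.card := by
  apply le_antisymm
  · apply degB_le
    intro S hS
    rw [gW_coeff] at hS
    by_cases h : S ⊆ F
    · exact Finset.card_le_card h
    · simp [h] at hS
  · apply Finset.le_sup (f := Finset.card)
    simp [gW_coeff]

lemma gW_ne_zero (F : Finset (Fin n)) : (fun x : Fin n → ZMod 2 => ∏ i ∈ F, (x i + 1)) ≠ 0 := by
  intro h
  have := congrFun h (fun _ => 0)
  rw [gW_val] at this
  simp at this

lemma gW_vanish_high {t : ℕ} (hn : n = 2 * t + 1) (F : Finset (Fin n)) (hF : F.card = t + 1)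
    (x : Fin n → ZMod 2) (hx : t < wtB x) : (∏ i ∈ F, (x i + 1)) = 0 := by
  rw [gW_val]
  rw [if_neg]
  intro h
  have hsub : suppF x ⊆ Fᶜ := by
    intro i hi
    rw [Finset.mem_compl]
    intro hiF
    have hx1 : x i = 1 := mem_suppF.1 hi
    rw [h i hiF] at hx1
    exact absurd hx1 (by decide)
  have := Finset.card_le_card hsub
  rw [Finset.card_compl, Fintype.card_fin, hF] at this
  rw [wtB_eq] at hx
  omega

lemma mul_eq_zero_of_one {u v : ZMod 2} (h : u * v = 0) (hu : u = 1) : v = 0 := by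
  rw [hu, one_mul] at h
  exact h

end S3

theorem stmt_3 (n t : ℕ) (hn : n = 2 * t + 1) (a : ZMod 2) :
    AI (fun X : Fin n → ZMod 2 => if wtB X ≤ t then a else a + 1) = t + 1 := by
  classical
  set f : (Fin n → ZMod 2) → ZMod 2 := fun X => if wtB X ≤ t then a else a + 1 with hf
  have hfval : ∀ x, f x = if wtB x ≤ t then a else a + 1 := fun x => rfl
  obtain ⟨F, -, hFcard⟩ : ∃ F ⊆ (Finset.univ : Finset (Fin n)), F.card = t + 1 := by
    apply Finset.exists_subset_card_eq
    simp only [Finset.card_univ, Fintype.card_fin, hn]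
    omega
  set g : (Fin n → ZMod 2) → ZMod 2 := fun x => ∏ i ∈ F, (x i + 1) with hg
  have hgdeg : degB g = t + 1 := by rw [hg, S3.gW_deg, hFcard]
  have hgne : g ≠ 0 := S3.gW_ne_zero F
  have hgvan : ∀ x, t < wtB x → g x = 0 := fun x hx => S3.gW_vanish_high hn F hFcard x hx
  have hmem : (t + 1) ∈
      {d | ∃ g, (IsAnnihilator f g ∨ IsAnnihilator (fun x => f x + 1) g) ∧ degB g = d} := by
    refine ⟨g, ?_, hgdeg⟩
    rcases S3.z2 a with ha | ha
    · left
      refine ⟨hgne, fun x => ?_⟩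
      by_cases hx : wtB x ≤ t
      · rw [hfval x, if_pos hx, ha, zero_mul]
      · rw [hgvan x (by omega), mul_zero]
    · right
      refine ⟨hgne, fun x => ?_⟩
      by_cases hx : wtB x ≤ t
      · show (f x + 1) * g x = 0
        rw [hfval x, if_pos hx, ha]
        have h11 : (1 + 1 : ZMod 2) = 0 := by decide
        rw [h11, zero_mul]
      · show (f x + 1) * g x = 0
        rw [hgvan x (by omega), mul_zero]
  have hlb : ∀ d ∈
      {d | ∃ g, (IsAnnihilator f g ∨ IsAnnihilator (fun x => f x + 1) g) ∧ degB g = d},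
      t + 1 ≤ d := by
    rintro d ⟨g0, hg0, hdeg⟩
    by_contra hlt
    have hd : degB g0 ≤ t := by omega
    rcases hg0 with ⟨hne, hmul⟩ | ⟨hne, hmul⟩
    · rcases S3.z2 a with ha | ha
      · apply hne
        apply S3.vanish_high hn hd
        intro x hx
        have hfx : f x = 1 := by rw [hfval x, if_neg (by omega), ha, zero_add]
        exact S3.mul_eq_zero_of_one (hmul x) hfx
      · apply hne
        apply S3.vanish_low hd
        intro x hx
        have hfx : f x = 1 := by rw [hfval x, if_pos hx, ha]
        exact S3.mul_eq_zero_of_one (hmul x) hfx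
    · rcases S3.z2 a with ha | ha
      · apply hne
        apply S3.vanish_low hd
        intro x hx
        have hfx : f x + 1 = 1 := by rw [hfval x, if_pos hx, ha, zero_add]
        exact S3.mul_eq_zero_of_one (hmul x) hfx
      · apply hne
        apply S3.vanish_high hn hd
        intro x hx
        have hfx : f x + 1 = 1 := by
          rw [hfval x, if_neg (by omega), ha]
          decide
        exact S3.mul_eq_zero_of_one (hmul x) hfx
  unfold AI
  exact le_antisymm (Nat.sInf_le hmem) (le_csInf ⟨_, hmem⟩ hlb)
end

section
/- Let n = 2t+1 be an odd positive integer, let F be a Boolean function of n variables with AI(F) = t+1, enumerate 1_F = {Y_1,…,Y_{2^{n−1}}} and 0_F = {Z_1,…,Z_{2^{n−1}}}, and set W = V(0_F)·V(1_F)^{−1}, a 2^{n−1} × 2^{n−1} invertible matrix over F_2. Let 1 ≤ k ≤ 2^{n−1}, 1 ≤ i_1 < … < i_k ≤ 2^{n−1} and 1 ≤ j_1 < … < j_k ≤ 2^{n−1}, and suppose the k × k submatrix of W with rows i_1,…,i_k and columns j_1,…,j_k is invertible. Then the Boolean function f obtained from F by flipping the values at the points Z_{i_1},…,Z_{i_k},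 Y_{j_1},…,Y_{j_k} (i.e., f(X) = F(X)⊕1 on these points and f(X) = F(X) elsewhere) satisfies AI(f) = t+1. -/
namespace Stmt6

lemma zmod2_em (a : ZMod 2) : a = 0 ∨ a = 1 := by revert a; decide

variable {n : ℕ}

def suppB (x : Fin n → ZMod 2) : Finset (Fin n) := Finset.univ.filter (fun i => x i = 1)

def ptOf (A : Finset (Fin n)) : Fin n → ZMod 2 := fun i => if i ∈ A then 1 else 0

lemma mem_suppB {x : Fin n → ZMod 2} {i : Fin n} : i ∈ suppB x ↔ x i = 1 := by
  simp [suppB]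

lemma ptOf_eq_one {A : Finset (Fin n)} {i : Fin n} : ptOf A i = 1 ↔ i ∈ A := by
  unfold ptOf; split <;> simp_all

lemma suppB_ptOf (A : Finset (Fin n)) : suppB (ptOf A) = A := by
  ext i; simp [mem_suppB, ptOf_eq_one]

lemma ptOf_suppB (x : Fin n → ZMod 2) : ptOf (suppB x) = x := by
  funext i
  rcases zmod2_em (x i) with h | h <;>
    simp [ptOf, mem_suppB, h]

def ptEquiv : (Fin n → ZMod 2) ≃ Finset (Fin n) :=
  ⟨suppB, ptOf, ptOf_suppB, suppB_ptOf⟩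

lemma prod_eq_ite (x : Fin n → ZMod 2) (T : Finset (Fin n)) :
    (∏ i ∈ T, x i) = if T ⊆ suppB x then 1 else 0 := by
  split_ifs with h
  · exact Finset.prod_eq_one fun i hi => mem_suppB.1 (h hi)
  · obtain ⟨i, hiT, hix⟩ := Finset.not_subset.1 h
    refine Finset.prod_eq_zero hiT ?_
    rcases zmod2_em (x i) with h0 | h1
    · exact h0
    · exact absurd (mem_suppB.2 h1) hix

lemma countC (A B : Finset (Fin n)) :
    (∑ S : Finset (Fin n), if A ⊆ S ∧ S ⊆ B then (1 : ZMod 2) else 0)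
      = if A = B then 1 else 0 := by
  have h1 : (∑ S : Finset (Fin n), if A ⊆ S ∧ S ⊆ B then (1 : ZMod 2) else 0)
      = ((Finset.univ.filter (fun S : Finset (Fin n) => A ⊆ S ∧ S ⊆ B)).card : ZMod 2) := by
    rw [← Finset.sum_filter]; simp
  have h2 : Finset.univ.filter (fun S : Finset (Fin n) => A ⊆ S ∧ S ⊆ B) = Finset.Icc A B := by
    ext S; simp [Finset.mem_Icc, Finset.le_iff_subset]
  rw [h1, h2]
  by_cases hAB : A ⊆ B
  · by_cases hA : A = B
    · subst hA; rw [if_pos rfl, Finset.card_Icc_finset (Finset.Subset.refl A)]; simp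
    · rw [if_neg hA, Finset.card_Icc_finset hAB]
      have hlt : A.card < B.card := Finset.card_lt_card (Finset.ssubset_iff_subset_ne.2 ⟨hAB, hA⟩)
      have : B.card - A.card ≠ 0 := by omega
      rw [Nat.cast_pow, (by decide : ((2:ℕ) : ZMod 2) = 0), zero_pow this]
  · have : Finset.Icc A B = ∅ := Finset.Icc_eq_empty (by simpa [Finset.le_iff_subset] using hAB)
    rw [this, if_neg (by rintro rfl; exact hAB (Finset.Subset.refl A))]
    simp

lemma anfCoeff_mono (T S : Finset (Fin n)) :
    anfCoeff (fun x => ∏ i ∈ T, x i) S = if S = T then 1 else 0 := by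
  unfold anfCoeff
  rw [Finset.sum_filter, ← Equiv.sum_comp (ptEquiv (n := n)).symm]
  have step : ∀ A : Finset (Fin n),
      (if (∀ i, ptEquiv.symm A i = 1 → i ∈ S) then ∏ i ∈ T, ptEquiv.symm A i else 0)
        = if T ⊆ A ∧ A ⊆ S then (1 : ZMod 2) else 0 := by
    intro A
    have h1 : (∀ i, ptEquiv.symm A i = 1 → i ∈ S) ↔ A ⊆ S := by
      constructor
      · intro h i hiA; exact h i (ptOf_eq_one.2 hiA)
      · intro h i hi; exact h (ptOf_eq_one.1 hi)
    have h2 : (∏ i ∈ T, ptEquiv.symm A i) = if T ⊆ A then (1 : ZMod 2) else 0 := by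
      rw [show (ptEquiv.symm A : Fin n → ZMod 2) = ptOf A from rfl, prod_eq_ite, suppB_ptOf]
    rw [h2]
    by_cases hAS : A ⊆ S <;> by_cases hTA : T ⊆ A <;> simp [h1, hAS, hTA]
  calc (∑ A : Finset (Fin n),
      if (∀ i, ptEquiv.symm A i = 1 → i ∈ S) then ∏ i ∈ T, ptEquiv.symm A i else 0)
      = ∑ A : Finset (Fin n), if T ⊆ A ∧ A ⊆ S then (1 : ZMod 2) else 0 :=
        Finset.sum_congr rfl fun A _ => step A
    _ = if T = S then 1 else 0 := countC T S
    _ = if S = T then 1 else 0 := by simp [eq_comm]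

lemma anfCoeff_sum (𝒮 : Finset (Finset (Fin n))) (c : Finset (Fin n) → ZMod 2)
    (T : Finset (Fin n)) :
    anfCoeff (fun x => ∑ S ∈ 𝒮, c S * ∏ i ∈ S, x i) T = if T ∈ 𝒮 then c T else 0 := by
  unfold anfCoeff
  rw [Finset.sum_comm]
  have : ∀ S ∈ 𝒮, (∑ x ∈ Finset.univ.filter
        (fun x : Fin n → ZMod 2 => ∀ i, x i = 1 → i ∈ T), c S * ∏ i ∈ S, x i)
      = if T = S then c S else 0 := by
    intro S _
    rw [← Finset.mul_sum]
    have : (∑ x ∈ Finset.univ.filter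
        (fun x : Fin n → ZMod 2 => ∀ i, x i = 1 → i ∈ T), ∏ i ∈ S, x i)
        = anfCoeff (fun x => ∏ i ∈ S, x i) T := rfl
    rw [this, anfCoeff_mono]
    split_ifs <;> simp
  rw [Finset.sum_congr rfl this, Finset.sum_ite_eq]

lemma anf_expansion (f : (Fin n → ZMod 2) → ZMod 2) (x : Fin n → ZMod 2) :
    f x = ∑ S : Finset (Fin n), anfCoeff f S * ∏ i ∈ S, x i := by
  unfold anfCoeff
  calc f x = ∑ y : Fin n → ZMod 2, f y * (if y = x then 1 else 0) := by
        rw [Finset.sum_eq_single x] <;> simp_all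
    _ = ∑ y : Fin n → ZMod 2, f y *
          (∑ S : Finset (Fin n), if suppB y ⊆ S ∧ S ⊆ suppB x then (1 : ZMod 2) else 0) := by
        refine Finset.sum_congr rfl fun y _ => ?_
        rw [countC]
        congr 1
        by_cases h : y = x
        · subst h; simp
        · rw [if_neg h, if_neg (fun hs => h (by rw [← ptOf_suppB y, hs, ptOf_suppB]))]
    _ = ∑ S : Finset (Fin n), ∑ y : Fin n → ZMod 2,
          f y * (if suppB y ⊆ S ∧ S ⊆ suppB x then 1 else 0) := by
        rw [Finset.sum_comm]
        exact Finset.sum_congr rfl fun y _ => Finset.mul_sum _ _ _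
    _ = ∑ S : Finset (Fin n), anfCoeff f S * ∏ i ∈ S, x i := by
        refine Finset.sum_congr rfl fun S _ => ?_
        unfold anfCoeff
        rw [prod_eq_ite, Finset.sum_filter, Finset.sum_mul]
        refine Finset.sum_congr rfl fun y _ => ?_
        have hsub : (∀ i, y i = 1 → i ∈ S) ↔ suppB y ⊆ S := by
          simp [Finset.subset_iff, mem_suppB]
        by_cases h1 : suppB y ⊆ S <;> by_cases h2 : S ⊆ suppB x <;>
          simp [hsub, h1, h2]

def polyOf (D : ℕ) (c : {S : Finset (Fin n) // S.card ≤ D} → ZMod 2) :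
    (Fin n → ZMod 2) → ZMod 2 :=
  fun x => ∑ S : {S : Finset (Fin n) // S.card ≤ D}, c S * ∏ i ∈ S.1, x i

lemma polyOf_eq_sum_filter (D : ℕ) (c : {S : Finset (Fin n) // S.card ≤ D} → ZMod 2)
    (x : Fin n → ZMod 2) :
    polyOf D c x = ∑ S ∈ Finset.univ.filter (fun S : Finset (Fin n) => S.card ≤ D),
      (if h : S.card ≤ D then c ⟨S, h⟩ else 0) * ∏ i ∈ S, x i := by
  rw [Finset.sum_subtype (p := fun S : Finset (Fin n) => S.card ≤ D)
    (Finset.univ.filter (fun S : Finset (Fin n) => S.card ≤ D))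
    (by simp) (fun S => (if h : S.card ≤ D then c ⟨S, h⟩ else 0) * ∏ i ∈ S, x i)]
  exact Finset.sum_congr rfl fun S _ => by rw [dif_pos S.2]

lemma anfCoeff_polyOf (D : ℕ) (c : {S : Finset (Fin n) // S.card ≤ D} → ZMod 2)
    (T : Finset (Fin n)) :
    anfCoeff (polyOf D c) T = if h : T.card ≤ D then c ⟨T, h⟩ else 0 := by
  have : polyOf D c = fun x => ∑ S ∈ Finset.univ.filter (fun S : Finset (Fin n) => S.card ≤ D),
      (if h : S.card ≤ D then c ⟨S, h⟩ else 0) * ∏ i ∈ S, x i :=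
    funext fun x => polyOf_eq_sum_filter D c x
  rw [this, anfCoeff_sum]
  by_cases h : T.card ≤ D <;> simp [h]

lemma degB_polyOf (D : ℕ) (c : {S : Finset (Fin n) // S.card ≤ D} → ZMod 2) :
    degB (polyOf D c) ≤ D := by
  refine Finset.sup_le fun S hS => ?_
  have := (Finset.mem_filter.1 hS).2
  rw [anfCoeff_polyOf] at this
  by_contra h
  exact this (dif_neg (by omega))

lemma polyOf_ne_zero (D : ℕ) (c : {S : Finset (Fin n) // S.card ≤ D} → ZMod 2)
    (hc : c ≠ 0) : polyOf D c ≠ 0 := by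
  intro h
  refine hc (funext fun S => ?_)
  have h1 := anfCoeff_polyOf D c S.1
  rw [h, dif_pos S.2] at h1
  have h0 : anfCoeff (0 : (Fin n → ZMod 2) → ZMod 2) S.1 = 0 := by
    unfold anfCoeff; simp
  rw [h0] at h1
  simpa using h1.symm

lemma anfCoeff_ne_zero_le {f : (Fin n → ZMod 2) → ZMod 2} {S : Finset (Fin n)}
    (h : anfCoeff f S ≠ 0) : S.card ≤ degB f :=
  Finset.le_sup (Finset.mem_filter.2 ⟨Finset.mem_univ _, h⟩)

lemma eq_polyOf_of_degB_le {D : ℕ} {g : (Fin n → ZMod 2) → ZMod 2} (hg : degB g ≤ D) :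
    g = polyOf D (fun S => anfCoeff g S.1) := by
  funext x
  rw [anf_expansion g x, polyOf_eq_sum_filter,
    ← Finset.sum_filter_add_sum_filter_not Finset.univ (fun S : Finset (Fin n) => S.card ≤ D)]
  have h2 : (∑ S ∈ Finset.univ.filter (fun S : Finset (Fin n) => ¬ S.card ≤ D),
      anfCoeff g S * ∏ i ∈ S, x i) = 0 := by
    refine Finset.sum_eq_zero fun S hS => ?_
    have hSc := (Finset.mem_filter.1 hS).2
    have : anfCoeff g S = 0 := by
      by_contra h
      exact hSc (le_trans (anfCoeff_ne_zero_le h) hg)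
    rw [this, zero_mul]
  rw [h2, add_zero]
  refine Finset.sum_congr rfl fun S hS => ?_
  rw [dif_pos (Finset.mem_filter.1 hS).2]

lemma card_filter_card_le (t : ℕ) :
    (Finset.univ.filter (fun S : Finset (Fin (2 * t + 1)) => S.card ≤ t)).card = 2 ^ (2 * t) := by
  have hcompl : ∀ S : Finset (Fin (2 * t + 1)), S.card ≤ 2 * t + 1 := by
    intro S
    simpa [Fintype.card_fin] using Finset.card_le_univ S
  have key : (Finset.univ.filter (fun S : Finset (Fin (2 * t + 1)) => S.card ≤ t)).card
      = (Finset.univ.filter (fun S : Finset (Fin (2 * t + 1)) => ¬ S.card ≤ t)).card := by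
    refine Finset.card_nbij' (fun S => Sᶜ) (fun S => Sᶜ) ?_ ?_ ?_ ?_
    · intro S hS
      have h1 := (Finset.mem_filter.1 hS).2
      refine Finset.mem_filter.2 ⟨Finset.mem_univ _, ?_⟩
      rw [Finset.card_compl, Fintype.card_fin]
      omega
    · intro S hS
      have h1 := (Finset.mem_filter.1 hS).2
      refine Finset.mem_filter.2 ⟨Finset.mem_univ _, ?_⟩
      rw [Finset.card_compl, Fintype.card_fin]
      have := hcompl S
      omega
    · intro S _; exact compl_compl S
    · intro S _; exact compl_compl S
  have tot := Finset.card_filter_add_card_filter_not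
    (s := (Finset.univ : Finset (Finset (Fin (2 * t + 1)))))
    (fun S : Finset (Fin (2 * t + 1)) => S.card ≤ t)
  have huniv : (Finset.univ : Finset (Finset (Fin (2 * t + 1)))).card = 2 ^ (2 * t + 1) := by
    rw [Finset.card_univ, Fintype.card_finset, Fintype.card_fin]
  have hpow : (2 : ℕ) ^ (2 * t + 1) = 2 ^ (2 * t) + 2 ^ (2 * t) := by
    rw [pow_succ]; omega
  omega

lemma ker_VEnum {t : ℕ} (F : (Fin n → ZMod 2) → ZMod 2) (hF : t + 1 ≤ AI F)
    {N : ℕ} (Y : Fin N → (Fin n → ZMod 2))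
    (hYsurj : ∀ x, F x = 1 → ∃ r, Y r = x)
    (c : {S : Finset (Fin n) // S.card ≤ t} → ZMod 2)
    (hc : (VEnum t Y).mulVec c = 0) : c = 0 := by
  by_contra hc0
  set g := polyOf t c with hg
  have heval : ∀ r, g (Y r) = 0 := by
    intro r
    have := congrFun hc r
    rw [Matrix.mulVec] at this
    simpa [dotProduct, VEnum, polyOf, mul_comm, hg] using this
  have hann : IsAnnihilator F g := by
    refine ⟨polyOf_ne_zero t c hc0, fun x => ?_⟩
    rcases zmod2_em (F x) with h | h
    · rw [h, zero_mul]
    · obtain ⟨r, rfl⟩ := hYsurj x h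
      rw [heval r, mul_zero]
  have hAIle : AI F ≤ degB g := Nat.sInf_le ⟨g, Or.inl hann, rfl⟩
  have hd := degB_polyOf t c
  rw [← hg] at hd
  omega

lemma sum_enum_eq_filter {N : ℕ} (E : Fin N → (Fin n → ZMod 2)) (hinj : Function.Injective E)
    (p : (Fin n → ZMod 2) → Prop) [DecidablePred p] (hran : Set.range E = {x | p x})
    (h : (Fin n → ZMod 2) → ZMod 2) :
    ∑ r, h (E r) = ∑ x ∈ Finset.univ.filter (fun x => p x), h x := by
  rw [← Finset.sum_image (f := h) (g := E) (s := Finset.univ)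
    (fun x _ y _ hxy => hinj hxy)]
  congr 1
  ext x
  have : (∃ r, E r = x) ↔ p x := by
    rw [show (∃ r, E r = x) ↔ x ∈ Set.range E from Iff.rfl, hran]; rfl
  simp [Finset.mem_image, this]

lemma gram_aux {t : ℕ} (hn : n = 2 * t + 1) (F : (Fin n → ZMod 2) → ZMod 2)
    {N : ℕ} (Y Z : Fin N → (Fin n → ZMod 2))
    (hYinj : Function.Injective Y) (hYran : Set.range Y = {x | F x = 1})
    (hZinj : Function.Injective Z) (hZran : Set.range Z = {x | F x = 0})
    (S T : Finset (Fin n)) (hS : S.card ≤ t) (hT : T.card ≤ t) :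
    (∑ r, (∏ i ∈ S, Y r i) * (∏ i ∈ T, Y r i))
      + (∑ r, (∏ i ∈ S, Z r i) * (∏ i ∈ T, Z r i)) = 0 := by
  have hY := sum_enum_eq_filter Y hYinj (fun x => F x = 1) hYran
    (fun x => (∏ i ∈ S, x i) * (∏ i ∈ T, x i))
  have hZ := sum_enum_eq_filter Z hZinj (fun x => F x = 0) hZran
    (fun x => (∏ i ∈ S, x i) * (∏ i ∈ T, x i))
  rw [hY, hZ]
  have hfil : Finset.univ.filter (fun x : Fin n → ZMod 2 => F x = 0)
      = Finset.univ.filter (fun x : Fin n → ZMod 2 => ¬ F x = 1) := by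
    ext x
    rcases zmod2_em (F x) with h | h <;> simp [h]
  rw [hfil, Finset.sum_filter_add_sum_filter_not]
  rw [← Equiv.sum_comp (ptEquiv (n := n)).symm
    (fun x => (∏ i ∈ S, x i) * (∏ i ∈ T, x i))]
  have step : ∀ A : Finset (Fin n),
      (∏ i ∈ S, (ptEquiv.symm A : Fin n → ZMod 2) i) * (∏ i ∈ T, (ptEquiv.symm A : Fin n → ZMod 2) i)
        = if S ∪ T ⊆ A then (1 : ZMod 2) else 0 := by
    intro A
    rw [show (ptEquiv.symm A : Fin n → ZMod 2) = ptOf A from rfl]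
    rw [prod_eq_ite, prod_eq_ite, suppB_ptOf]
    by_cases h1 : S ⊆ A <;> by_cases h2 : T ⊆ A <;>
      simp [h1, h2, Finset.union_subset_iff]
  rw [Finset.sum_congr rfl (fun A _ => step A)]
  have hIcc : (∑ A : Finset (Fin n), if S ∪ T ⊆ A then (1 : ZMod 2) else 0)
      = ((Finset.Icc (S ∪ T) Finset.univ).card : ZMod 2) := by
    rw [← Finset.sum_filter]
    have : Finset.univ.filter (fun A : Finset (Fin n) => S ∪ T ⊆ A)
        = Finset.Icc (S ∪ T) Finset.univ := by
      ext A; simp [Finset.mem_Icc, Finset.le_iff_subset, Finset.subset_univ]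
    rw [this]; simp
  rw [hIcc, Finset.card_Icc_finset (Finset.subset_univ _)]
  have hcard : (Finset.univ : Finset (Fin n)).card - (S ∪ T).card ≠ 0 := by
    have h1 : (S ∪ T).card ≤ S.card + T.card := Finset.card_union_le S T
    have h2 : (Finset.univ : Finset (Fin n)).card = n := by
      rw [Finset.card_univ, Fintype.card_fin]
    omega
  rw [Nat.cast_pow, (by decide : ((2 : ℕ) : ZMod 2) = 0), zero_pow hcard]

lemma exists_low_vanishing {t : ℕ} (hn : n = 2 * t + 1)
    (T : Finset (Fin n → ZMod 2)) (hT : T.card ≤ 2 ^ (2 * t)) :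
    ∃ c : {S : Finset (Fin n) // S.card ≤ t + 1} → ZMod 2,
      c ≠ 0 ∧ ∀ x ∈ T, polyOf (t + 1) c x = 0 := by
  classical
  set φ : ({S : Finset (Fin n) // S.card ≤ t + 1} → ZMod 2) →ₗ[ZMod 2]
      ({x // x ∈ T} → ZMod 2) :=
    { toFun := fun c => fun x => polyOf (t + 1) c x.1
      map_add' := by
        intro a b; funext x; simp [polyOf, add_mul, Finset.sum_add_distrib]
      map_smul' := by
        intro r a; funext x
        simp [polyOf, Finset.mul_sum, mul_assoc, smul_eq_mul] } with hφ
  have hnotinj : ¬ Function.Injective φ := by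
    intro hinj
    have hle := LinearMap.finrank_le_finrank_of_injective hinj
    rw [Module.finrank_fintype_fun_eq_card, Module.finrank_fintype_fun_eq_card] at hle
    have hcard1 : Fintype.card {S : Finset (Fin n) // S.card ≤ t + 1} ≥ 2 ^ (2 * t) + 1 := by
      rw [Fintype.card_subtype]
      have hss : (Finset.univ.filter (fun S : Finset (Fin n) => S.card ≤ t))
          ⊂ (Finset.univ.filter (fun S : Finset (Fin n) => S.card ≤ t + 1)) := by
        refine Finset.ssubset_iff_subset_ne.2 ⟨?_, ?_⟩
        · intro S hS
          have := (Finset.mem_filter.1 hS).2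
          exact Finset.mem_filter.2 ⟨Finset.mem_univ _, by omega⟩
        · obtain ⟨S, _, hScard⟩ := Finset.exists_subset_card_eq
            (s := (Finset.univ : Finset (Fin n))) (n := t + 1)
            (by rw [Finset.card_univ, Fintype.card_fin]; omega)
          intro heq
          have h1 : S ∈ Finset.univ.filter (fun S : Finset (Fin n) => S.card ≤ t + 1) :=
            Finset.mem_filter.2 ⟨Finset.mem_univ _, by omega⟩
          rw [← heq] at h1
          have := (Finset.mem_filter.1 h1).2
          omega
        
      have hlt := Finset.card_lt_card hss
      have hcount : (Finset.univ.filter (fun S : Finset (Fin n) => S.card ≤ t)).card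
          = 2 ^ (2 * t) := by
        subst hn; exact card_filter_card_le t
      omega
    have hcard2 : Fintype.card {x // x ∈ T} = T.card := Fintype.card_coe T
    omega
  obtain ⟨a, b, hab, hne⟩ := Function.not_injective_iff.1 hnotinj
  refine ⟨a - b, sub_ne_zero.2 hne, fun x hx => ?_⟩
  have := congrFun (by rw [map_sub, hab, sub_self] : φ (a - b) = 0) ⟨x, hx⟩
  simpa [hφ] using this

lemma exists_ann {t : ℕ} (hn : n = 2 * t + 1) (f : (Fin n → ZMod 2) → ZMod 2) :
    ∃ g, (IsAnnihilator f g ∨ IsAnnihilator (fun x => f x + 1) g) ∧ degB g ≤ t + 1 := by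
  classical
  set On := Finset.univ.filter (fun x : Fin n → ZMod 2 => f x = 1) with hOn
  set Off := Finset.univ.filter (fun x : Fin n → ZMod 2 => f x = 0) with hOff
  have hsum : On.card + Off.card = 2 ^ n := by
    have h1 : Off = Finset.univ.filter (fun x : Fin n → ZMod 2 => ¬ f x = 1) := by
      ext x; rcases zmod2_em (f x) with h | h <;> simp [hOff, h]
    rw [h1, hOn, Finset.card_filter_add_card_filter_not, Finset.card_univ,
      Fintype.card_fun, Fintype.card_fin]
    rfl
  have hpow : (2 : ℕ) ^ n = 2 ^ (2 * t) + 2 ^ (2 * t) := by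
    subst hn; rw [pow_succ]; omega
  rcases le_or_gt On.card (2 ^ (2 * t)) with hc | hc
  · obtain ⟨c, hc0, hcv⟩ := exists_low_vanishing hn On hc
    refine ⟨polyOf (t + 1) c, Or.inl ⟨polyOf_ne_zero _ _ hc0, fun x => ?_⟩, degB_polyOf _ _⟩
    rcases zmod2_em (f x) with h | h
    · rw [h, zero_mul]
    · rw [hcv x (Finset.mem_filter.2 ⟨Finset.mem_univ _, h⟩), mul_zero]
  · have hcOff : Off.card ≤ 2 ^ (2 * t) := by omega
    obtain ⟨c, hc0, hcv⟩ := exists_low_vanishing hn Off hcOff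
    refine ⟨polyOf (t + 1) c, Or.inr ⟨polyOf_ne_zero _ _ hc0, fun x => ?_⟩, degB_polyOf _ _⟩
    rcases zmod2_em (f x) with h | h
    · rw [hcv x (Finset.mem_filter.2 ⟨Finset.mem_univ _, h⟩), mul_zero]
    · show (f x + 1) * polyOf (t + 1) c x = 0
      rw [h, (by decide : (1 : ZMod 2) + 1 = 0), zero_mul]

end Stmt6

set_option linter.unusedVariables false in
open Matrix in
/-- with `W` the (unique) matrix satisfying `W · V(1_F) = V(0_F)`
(i.e. `W = V(0_F) · V(1_F)⁻¹`), if the `k × k` submatrix of `W` with rows `i₁ < … < i_k` and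
columns `j₁ < … < j_k` is invertible, then the function obtained from `F` by flipping the
values at `Z_{i₁},…,Z_{i_k},Y_{j₁},…,Y_{j_k}` has maximum algebraic immunity `t+1`. -/
theorem stmt_6 (n t : ℕ) (hn : n = 2 * t + 1)
    (F : (Fin n → ZMod 2) → ZMod 2) (hF : AI F = t + 1)
    (Y Z : Fin (2 ^ (n - 1)) → (Fin n → ZMod 2))
    (hYinj : Function.Injective Y) (hYran : Set.range Y = {x | F x = 1})
    (hZinj : Function.Injective Z) (hZran : Set.range Z = {x | F x = 0})
    (W : Matrix (Fin (2 ^ (n - 1))) (Fin (2 ^ (n - 1))) (ZMod 2))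
    (hW : W * VEnum t Y = VEnum t Z)
    (k : ℕ) (hk1 : 1 ≤ k) (hk2 : k ≤ 2 ^ (n - 1))
    (i j : Fin k → Fin (2 ^ (n - 1))) (hi : StrictMono i) (hj : StrictMono j)
    (hsub : IsUnit (W.submatrix i j).det) :
    AI (fun X => if (∃ a, Z (i a) = X) ∨ (∃ a, Y (j a) = X) then F X + 1 else F X)
      = t + 1 := by
  classical
  subst hn
  set f : (Fin (2 * t + 1) → ZMod 2) → ZMod 2 :=
    fun X => if (∃ a, Z (i a) = X) ∨ (∃ a, Y (j a) = X) then F X + 1 else F X with hfdef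
  -- basic values of F
  have hFY : ∀ r, F (Y r) = 1 := fun r => by
    have h : Y r ∈ Set.range Y := Set.mem_range_self r
    rw [hYran] at h; exact h
  have hFZ : ∀ r, F (Z r) = 0 := fun r => by
    have h : Z r ∈ Set.range Z := Set.mem_range_self r
    rw [hZran] at h; exact h
  have hYZ : ∀ r s, Y r ≠ Z s := fun r s h => by
    have h1 := hFY r; rw [h, hFZ s] at h1; exact absurd h1 (by decide)
  have hYsurj : ∀ x, F x = 1 → ∃ r, Y r = x := fun x hx => by
    have h : x ∈ Set.range Y := by rw [hYran]; exact hx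
    exact h
  have hZsurj : ∀ x, F x = 0 → ∃ r, Z r = x := fun x hx => by
    have h : x ∈ Set.range Z := by rw [hZran]; exact hx
    exact h
  -- values of f
  have hfZi : ∀ a, f (Z (i a)) = 1 := fun a => by
    rw [hfdef]; simp only
    rw [if_pos (Or.inl ⟨a, rfl⟩), hFZ (i a), zero_add]
  have hfYj : ∀ a, f (Y (j a)) = 0 := fun a => by
    rw [hfdef]; simp only
    rw [if_pos (Or.inr ⟨a, rfl⟩), hFY (j a)]; decide
  have hfY : ∀ r, (¬ ∃ a, j a = r) → f (Y r) = 1 := fun r hr => by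
    rw [hfdef]; simp only
    rw [if_neg, hFY r]
    rintro (⟨a, ha⟩ | ⟨a, ha⟩)
    · exact hYZ r (i a) ha.symm
    · exact hr ⟨a, hYinj ha⟩
  have hfZ : ∀ r, (¬ ∃ a, i a = r) → f (Z r) = 0 := fun r hr => by
    rw [hfdef]; simp only
    rw [if_neg, hFZ r]
    rintro (⟨a, ha⟩ | ⟨a, ha⟩)
    · exact hr ⟨a, hZinj ha⟩
    · exact hYZ (j a) r ha
  -- kernel of V(1_F)
  have hkerY : ∀ c : {S : Finset (Fin (2 * t + 1)) // S.card ≤ t} → ZMod 2,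
      (VEnum t Y).mulVec c = 0 → c = 0 :=
    fun c hc => Stmt6.ker_VEnum F (le_of_eq hF.symm) Y hYsurj c hc
  -- reindexed square matrices
  have cardP : Fintype.card {S : Finset (Fin (2 * t + 1)) // S.card ≤ t} = 2 ^ (2 * t + 1 - 1) := by
    rw [Fintype.card_subtype, Stmt6.card_filter_card_le t]; norm_num
  have e : {S : Finset (Fin (2 * t + 1)) // S.card ≤ t} ≃ Fin (2 ^ (2 * t + 1 - 1)) :=
    Fintype.equivOfCardEq (by rw [cardP, Fintype.card_fin])
  set A : Matrix (Fin (2 ^ (2 * t + 1 - 1))) (Fin (2 ^ (2 * t + 1 - 1))) (ZMod 2) :=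
    (VEnum t Y).submatrix id e.symm with hA
  set B : Matrix (Fin (2 ^ (2 * t + 1 - 1))) (Fin (2 ^ (2 * t + 1 - 1))) (ZMod 2) :=
    (VEnum t Z).submatrix id e.symm with hB
  have hWA : W * A = B := by
    ext r p
    have h := congrFun (congrFun hW r) (e.symm p)
    simpa [Matrix.mul_apply, hA, hB, Matrix.submatrix_apply] using h
  have hAunit : IsUnit A := by
    rw [Matrix.isUnit_iff_isUnit_det]
    refine isUnit_iff_ne_zero.2 fun hdet => ?_
    obtain ⟨v, hv0, hv⟩ := (Matrix.exists_mulVec_eq_zero_iff).2 hdet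
    apply hv0
    have hsum : (VEnum t Y).mulVec (fun S => v (e S)) = 0 := by
      funext r
      have h1 := congrFun hv r
      have h2 : (A.mulVec v) r = ((VEnum t Y).mulVec (fun S => v (e S))) r := by
        show ∑ p, A r p * v p = ∑ S, VEnum t Y r S * (fun S => v (e S)) S
        rw [← Equiv.sum_comp e (fun p => A r p * v p)]
        exact Finset.sum_congr rfl fun S _ => by simp [hA]
      rw [← h2]; simpa using h1
    have hz := hkerY _ hsum
    funext p
    have hz2 := congrFun hz (e.symm p)
    rw [Equiv.apply_symm_apply] at hz2
    simpa using hz2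
  have hAt : IsUnit Aᵀ := by
    rw [Matrix.isUnit_iff_isUnit_det, Matrix.det_transpose,
      ← Matrix.isUnit_iff_isUnit_det]
    exact hAunit
  have hgram : Aᵀ * A = Bᵀ * B := by
    ext p q
    have h := Stmt6.gram_aux rfl F Y Z hYinj hYran hZinj hZran
      (e.symm p).1 (e.symm q).1 (e.symm p).2 (e.symm q).2
    have h2 : ∀ a b : ZMod 2, a + b = 0 → a = b := by decide
    rw [Matrix.mul_apply, Matrix.mul_apply]
    simp only [Matrix.transpose_apply, hA, hB, Matrix.submatrix_apply, VEnum, id]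
    exact h2 _ _ h
  have hWW : Wᵀ * W = 1 := by
    have h1 : Aᵀ * ((1 : Matrix _ _ (ZMod 2)) * A) = Aᵀ * ((Wᵀ * W) * A) := by
      rw [Matrix.one_mul]
      calc Aᵀ * A = Bᵀ * B := hgram
        _ = (W * A)ᵀ * (W * A) := by rw [hWA]
        _ = Aᵀ * ((Wᵀ * W) * A) := by
            rw [Matrix.transpose_mul, Matrix.mul_assoc, Matrix.mul_assoc]
    have h2 := hAt.mul_left_cancel h1
    exact (hAunit.mul_right_cancel h2).symm
  -- inverting small matrices
  have hMinv : ∀ (M : Matrix (Fin k) (Fin k) (ZMod 2)), IsUnit M.det →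
      ∀ d : Fin k → ZMod 2, M.mulVec d = 0 → d = 0 := by
    intro M hM d hd
    have h := congrArg (M⁻¹.mulVec) hd
    rwa [Matrix.mulVec_mulVec, Matrix.nonsing_inv_mul M hM, Matrix.one_mulVec,
      Matrix.mulVec_zero] at h
  -- the key lower bound
  have key : ∀ g : (Fin (2 * t + 1) → ZMod 2) → ZMod 2,
      (IsAnnihilator f g ∨ IsAnnihilator (fun x => f x + 1) g) → t + 1 ≤ degB g := by
    intro g hann
    by_contra hlt
    have hdeg : degB g ≤ t := by omega
    set c : {S : Finset (Fin (2 * t + 1)) // S.card ≤ t} → ZMod 2 :=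
      fun S => anfCoeff g S.1 with hc
    have hgc : g = Stmt6.polyOf t c := Stmt6.eq_polyOf_of_degB_le hdeg
    set u := (VEnum t Y).mulVec c with hu
    set w := (VEnum t Z).mulVec c with hw
    have hwu : w = W.mulVec u := by rw [hu, hw, Matrix.mulVec_mulVec, hW]
    have hevalY : ∀ r, g (Y r) = u r := by
      intro r; rw [hgc, hu]
      simp [Stmt6.polyOf, Matrix.mulVec, dotProduct, VEnum, mul_comm]
    have hevalZ : ∀ r, g (Z r) = w r := by
      intro r; rw [hgc, hw]
      simp [Stmt6.polyOf, Matrix.mulVec, dotProduct, VEnum, mul_comm]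
    have hgzero : g ≠ 0 := by rcases hann with ⟨h, _⟩ | ⟨h, _⟩ <;> exact h
    have hcancel : u ≠ 0 := by
      intro hu0
      have hcz : c = 0 := hkerY c (by rw [← hu]; exact hu0)
      rw [hcz] at hgc
      apply hgzero
      rw [hgc]; funext x; simp [Stmt6.polyOf]
    rcases hann with ⟨_, hvan⟩ | ⟨_, hvan⟩
    · -- g vanishes on the onset of f
      have hg1 : ∀ x, f x = 1 → g x = 0 := fun x hx => by
        have h := hvan x; rw [hx, one_mul] at h; exact h
      have hu0 : ∀ r, (¬ ∃ a, j a = r) → u r = 0 := fun r hr => by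
        rw [← hevalY r]; exact hg1 _ (hfY r hr)
      have hw0 : ∀ a, w (i a) = 0 := fun a => by
        rw [← hevalZ (i a)]; exact hg1 _ (hfZi a)
      have hsubv : (W.submatrix i j).mulVec (fun b => u (j b)) = 0 := by
        funext a
        show ∑ b, W.submatrix i j a b * u (j b) = 0
        have h1 : w (i a) = ∑ s, W (i a) s * u s := by rw [hwu]; rfl
        have h2 : ∑ s ∈ Finset.univ.image j, W (i a) s * u s
            = ∑ s, W (i a) s * u s := by
          refine Finset.sum_subset (Finset.subset_univ _) fun s _ hs => ?_
          have : ¬ ∃ b, j b = s := fun ⟨b, hb⟩ =>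
            hs (Finset.mem_image.2 ⟨b, Finset.mem_univ _, hb⟩)
          rw [hu0 s this, mul_zero]
        have h3 : ∑ s ∈ Finset.univ.image j, W (i a) s * u s
            = ∑ b, W (i a) (j b) * u (j b) :=
          Finset.sum_image (fun x _ y _ hxy => hj.injective hxy)
        have h4 := hw0 a
        rw [h1, ← h2, h3] at h4
        simpa [Matrix.submatrix_apply] using h4
      have hjzero := hMinv _ hsub _ hsubv
      apply hcancel
      funext r
      by_cases hr : ∃ a, j a = r
      · obtain ⟨a, rfl⟩ := hr; exact congrFun hjzero a
      · exact hu0 r hr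
    · -- g vanishes on the offset of f
      have hg0 : ∀ x, f x = 0 → g x = 0 := fun x hx => by
        have h := hvan x; simp only at h
        rw [hx, zero_add, one_mul] at h; exact h
      have hu0 : ∀ a, u (j a) = 0 := fun a => by
        rw [← hevalY]; exact hg0 _ (hfYj a)
      have hw0 : ∀ r, (¬ ∃ a, i a = r) → w r = 0 := fun r hr => by
        rw [← hevalZ]; exact hg0 _ (hfZ r hr)
      have huw : u = Wᵀ.mulVec w := by
        rw [hwu, Matrix.mulVec_mulVec, hWW, Matrix.one_mulVec]
      have hsubv : (W.submatrix i j)ᵀ.mulVec (fun a => w (i a)) = 0 := by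
        funext b
        show ∑ a, (W.submatrix i j)ᵀ b a * w (i a) = 0
        have h1 : u (j b) = ∑ r, W r (j b) * w r := by
          rw [huw]
          show ∑ r, Wᵀ (j b) r * w r = ∑ r, W r (j b) * w r
          exact Finset.sum_congr rfl fun r _ => by rw [Matrix.transpose_apply]
        have h2 : ∑ r ∈ Finset.univ.image i, W r (j b) * w r
            = ∑ r, W r (j b) * w r := by
          refine Finset.sum_subset (Finset.subset_univ _) fun r _ hr => ?_
          have : ¬ ∃ a, i a = r := fun ⟨a, ha⟩ =>
            hr (Finset.mem_image.2 ⟨a, Finset.mem_univ _, ha⟩)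
          rw [hw0 r this, mul_zero]
        have h3 : ∑ r ∈ Finset.univ.image i, W r (j b) * w r
            = ∑ a, W (i a) (j b) * w (i a) :=
          Finset.sum_image (fun x _ y _ hxy => hi.injective hxy)
        have h4 := hu0 b
        rw [h1, ← h2, h3] at h4
        simpa [Matrix.submatrix_apply, Matrix.transpose_apply] using h4
      have hdet' : IsUnit ((W.submatrix i j)ᵀ).det := by
        rw [Matrix.det_transpose]; exact hsub
      have hizero := hMinv _ hdet' _ hsubv
      have hwzero : w = 0 := funext fun r => by
        by_cases hr : ∃ a, i a = r
        · obtain ⟨a, rfl⟩ := hr; exact congrFun hizero a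
        · exact hw0 r hr
      exact hcancel (by rw [huw, hwzero, Matrix.mulVec_zero])
  -- conclusion
  obtain ⟨g₀, hg₀ann, hg₀deg⟩ := Stmt6.exists_ann rfl f
  have hmem : degB g₀ ∈ {d | ∃ g, (IsAnnihilator f g ∨
      IsAnnihilator (fun x => f x + 1) g) ∧ degB g = d} := ⟨g₀, hg₀ann, rfl⟩
  have hg₀eq : degB g₀ = t + 1 := le_antisymm hg₀deg (key g₀ hg₀ann)
  show AI f = t + 1
  unfold AI
  refine le_antisymm (Nat.sInf_le ?_) (le_csInf ⟨_, hmem⟩ ?_)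
  · rw [← hg₀eq]; exact hmem
  · rintro d ⟨g, hann, rfl⟩; exact key g hann
end

section
/- Let n = 2t+1 be an odd positive integer, let F be a Boolean function of n variables with AI(F) = t+1, enumerate 1_F = {Y_1,…,Y_{2^{n−1}}} and 0_F = {Z_1,…,Z_{2^{n−1}}}, and set W = V(0_F)·V(1_F)^{−1}. Then every Boolean function f of n variables with AI(f) = t+1 arises as follows: there exist an integer 0 ≤ k ≤ 2^{n−1}, integers 1 ≤ i_1 < … < i_k ≤ 2^{n−1} and 1 ≤ j_1 < … < j_k ≤ 2^{n−1} such that the k × k submatrix of W with rows i_1,…,i_k and columns j_1,…,j_k is invertible (the empty 0×0 matrix being invertible by convention), and f is obtained from F by flipping the values at the points Z_{i_1},…,Z_{i_k}, Y_{j_1},…,Y_{j_k} (i.e., f(X) = F(X)⊕1 on these points and f(X) = F(X) elsewhere). -/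
namespace S7

lemma z2 (x : ZMod 2) (h : x ≠ 1) : x = 0 := by revert x; decide

def chi {n : ℕ} (U : Finset (Fin n)) : Fin n → ZMod 2 := fun i => if i ∈ U then 1 else 0

lemma anf_eq_powerset {n : ℕ} (f : (Fin n → ZMod 2) → ZMod 2) (S : Finset (Fin n)) :
    anfCoeff f S = ∑ U ∈ S.powerset, f (chi U) := by
  rw [anfCoeff]
  refine Finset.sum_nbij' (fun x => Finset.univ.filter (fun i => x i = 1)) chi ?_ ?_ ?_ ?_ ?_
  · intro x hx
    simp only [Finset.mem_filter, Finset.mem_univ, true_and] at hx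
    simp only [Finset.mem_powerset]
    intro i hi
    simp only [Finset.mem_filter, Finset.mem_univ, true_and] at hi
    exact hx i hi
  · intro U hU
    simp only [Finset.mem_powerset] at hU
    simp only [Finset.mem_filter, Finset.mem_univ, true_and]
    intro i hi
    apply hU
    by_contra h
    simp [chi, h] at hi
  · intro x hx
    funext i
    by_cases h : x i = 1
    · simp [chi, h]
    · simp [chi, h, z2 _ h]
  · intro U hU
    ext i
    simp only [Finset.mem_filter, Finset.mem_univ, true_and, chi]
    by_cases h : i ∈ U <;> simp [h]
  · intro x hx
    congr 1
    funext i
    by_cases h : x i = 1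
    · simp [chi, h]
    · simp [chi, h, z2 _ h]

lemma anf_mon {n : ℕ} (T S : Finset (Fin n)) :
    anfCoeff (fun x => ∏ i ∈ T, x i) S = if S = T then 1 else 0 := by
  rw [anf_eq_powerset]
  have hprod : ∀ U : Finset (Fin n), (∏ i ∈ T, chi U i) = if T ⊆ U then 1 else 0 := by
    intro U
    by_cases h : T ⊆ U
    · rw [if_pos h]
      apply Finset.prod_eq_one
      intro i hi
      simp [chi, h hi]
    · rw [if_neg h]
      obtain ⟨i, hiT, hiU⟩ := Finset.not_subset.1 h
      apply Finset.prod_eq_zero hiT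
      simp [chi, hiU]
  simp only [hprod]
  simp only [Finset.sum_boole]
  have : S.powerset.filter (fun U => T ⊆ U) = Finset.Icc T S := by
    ext U
    simp [Finset.mem_Icc, Finset.mem_powerset, and_comm, Finset.le_iff_subset]
  rw [this]
  by_cases hTS : T ⊆ S
  · rw [Finset.card_Icc_finset hTS]
    by_cases hST : S = T
    · subst hST; simp
    · rw [if_neg hST]
      have hlt : T.card < S.card := Finset.card_lt_card (lt_of_le_of_ne hTS (Ne.symm hST))
      obtain ⟨m, hm⟩ : ∃ m, S.card - T.card = m + 1 := ⟨S.card - T.card - 1, by omega⟩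
      rw [hm, pow_succ, Nat.cast_mul]
      have : ((2:ℕ) : ZMod 2) = 0 := by decide
      rw [this, mul_zero]
  · have : Finset.Icc T S = ∅ := by
      rw [Finset.Icc_eq_empty]
      intro h
      exact hTS h
    rw [this]
    simp only [Finset.card_empty]
    have hST : S ≠ T := by rintro rfl; exact hTS le_rfl
    simp [hST]

end S7



namespace S7

lemma z2or (x : ZMod 2) : x = 0 ∨ x = 1 := by revert x; decide

def gfun {n : ℕ} (t : ℕ) (c : {S : Finset (Fin n) // S.card ≤ t} → ZMod 2) :
    (Fin n → ZMod 2) → ZMod 2 :=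
  fun x => ∑ S : {S : Finset (Fin n) // S.card ≤ t}, c S * ∏ i ∈ S.1, x i

lemma anf_gfun {n t : ℕ} (c : {S : Finset (Fin n) // S.card ≤ t} → ZMod 2) (S : Finset (Fin n)) :
    anfCoeff (gfun t c) S = if h : S.card ≤ t then c ⟨S, h⟩ else 0 := by
  unfold anfCoeff gfun
  rw [Finset.sum_comm]
  have key : ∀ S' : {S : Finset (Fin n) // S.card ≤ t},
      (∑ x ∈ Finset.univ.filter (fun x : Fin n → ZMod 2 => ∀ i, x i = 1 → i ∈ S),
        c S' * ∏ i ∈ S'.1, x i)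
      = c S' * (if S = S'.1 then 1 else 0) := by
    intro S'
    rw [← Finset.mul_sum]
    congr 1
    exact anf_mon S'.1 S
  rw [Finset.sum_congr rfl (fun S' _ => key S')]
  by_cases h : S.card ≤ t
  · rw [dif_pos h]
    rw [Fintype.sum_eq_single (⟨S, h⟩ : {S : Finset (Fin n) // S.card ≤ t})]
    · simp
    · intro b hb
      rw [if_neg, mul_zero]
      intro hSb
      exact hb (Subtype.ext hSb.symm)
  · rw [dif_neg h]
    apply Finset.sum_eq_zero
    intro S' _
    rw [if_neg, mul_zero]
    intro hSS'
    exact h (hSS' ▸ S'.2)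

lemma gfun_props {n t : ℕ} (c : {S : Finset (Fin n) // S.card ≤ t} → ZMod 2) (hc : c ≠ 0) :
    gfun t c ≠ 0 ∧ degB (gfun t c) ≤ t := by
  constructor
  · obtain ⟨S', hS'⟩ := Function.ne_iff.1 hc
    intro h0
    apply hS'
    have := anf_gfun c S'.1
    rw [h0] at this
    simp only [anfCoeff, Pi.zero_apply, Finset.sum_const_zero] at this
    rw [dif_pos S'.2] at this
    simpa using this.symm
  · apply Finset.sup_le
    intro S hS
    simp only [Finset.mem_filter, Finset.mem_univ, true_and] at hS
    by_contra h
    exact hS (by rw [anf_gfun, dif_neg (fun h' => h h')])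

lemma AI_le {n : ℕ} (f g : (Fin n → ZMod 2) → ZMod 2)
    (h : IsAnnihilator f g ∨ IsAnnihilator (fun x => f x + 1) g) : AI f ≤ degB g :=
  Nat.sInf_le ⟨g, h, rfl⟩

lemma kernel1 {n t : ℕ} (f : (Fin n → ZMod 2) → ZMod 2) (hf : AI f = t + 1)
    (c : {S : Finset (Fin n) // S.card ≤ t} → ZMod 2)
    (hvan : ∀ x, f x = 1 → gfun t c x = 0) : c = 0 := by
  by_contra hc
  obtain ⟨hg0, hdeg⟩ := gfun_props c hc
  have hann : IsAnnihilator f (gfun t c) := by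
    refine ⟨hg0, fun x => ?_⟩
    rcases z2or (f x) with h | h
    · rw [h, zero_mul]
    · rw [h, one_mul, hvan x h]
  have := AI_le f _ (Or.inl hann)
  omega

lemma kernel0 {n t : ℕ} (f : (Fin n → ZMod 2) → ZMod 2) (hf : AI f = t + 1)
    (c : {S : Finset (Fin n) // S.card ≤ t} → ZMod 2)
    (hvan : ∀ x, f x = 0 → gfun t c x = 0) : c = 0 := by
  by_contra hc
  obtain ⟨hg0, hdeg⟩ := gfun_props c hc
  have hann : IsAnnihilator (fun x => f x + 1) (gfun t c) := by
    refine ⟨hg0, fun x => ?_⟩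
    show (f x + 1) * gfun t c x = 0
    rcases z2or (f x) with h | h
    · rw [h, hvan x h, mul_zero]
    · rw [h]
      have h11 : (1 : ZMod 2) + 1 = 0 := by decide
      rw [h11, zero_mul]
  have := AI_le f _ (Or.inr hann)
  omega

lemma card_mon (n t : ℕ) (hn : n = 2 * t + 1) :
    Fintype.card {S : Finset (Fin n) // S.card ≤ t} = 2 ^ (n - 1) := by
  rw [Fintype.card_subtype]
  have hab : (Finset.univ.filter (fun S : Finset (Fin n) => S.card ≤ t)).card
      + (Finset.univ.filter (fun S : Finset (Fin n) => ¬ S.card ≤ t)).card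
      = 2 ^ n := by
    rw [Finset.card_filter_add_card_filter_not, Finset.card_univ,
      Fintype.card_finset, Fintype.card_fin]
  have heq : (Finset.univ.filter (fun S : Finset (Fin n) => S.card ≤ t)).card
      = (Finset.univ.filter (fun S : Finset (Fin n) => ¬ S.card ≤ t)).card := by
    apply Finset.card_bij (fun S _ => Sᶜ)
    · intro S hS
      simp only [Finset.mem_filter, Finset.mem_univ, true_and] at hS ⊢
      rw [Finset.card_compl, Fintype.card_fin]
      omega
    · intro S hS S' hS' h
      have := congrArg (·ᶜ) h
      simpa using this
    · intro U hU
      simp only [Finset.mem_filter, Finset.mem_univ, true_and] at hU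
      refine ⟨Uᶜ, ?_, by simp⟩
      simp only [Finset.mem_filter, Finset.mem_univ, true_and]
      rw [Finset.card_compl, Fintype.card_fin]
      have h2 : U.card ≤ n := by
        simpa using Finset.card_le_univ U
      omega
  subst hn
  simp only [Nat.add_sub_cancel]
  rw [pow_succ] at hab
  omega

end S7
namespace S7

lemma z2add (a : ZMod 2) : a + a = 0 := by revert a; decide

lemma z2cancel (a b : ZMod 2) (h : a + b = 0) : a = b := by revert a b; decide

lemma gfun_add {n t : ℕ} (c c' : {S : Finset (Fin n) // S.card ≤ t} → ZMod 2)
    (x : Fin n → ZMod 2) : gfun t (c + c') x = gfun t c x + gfun t c' x := by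
  unfold gfun
  rw [← Finset.sum_add_distrib]
  exact Finset.sum_congr rfl (fun S _ => by rw [Pi.add_apply, add_mul])

lemma onset_ge {n t : ℕ} (hn : n = 2 * t + 1) (p : (Fin n → ZMod 2) → Prop)
    [DecidablePred p]
    (hker : ∀ c : {S : Finset (Fin n) // S.card ≤ t} → ZMod 2,
      (∀ x, p x → gfun t c x = 0) → c = 0) :
    2 ^ (n - 1) ≤ (Finset.univ.filter p).card := by
  set Φ : ({S : Finset (Fin n) // S.card ≤ t} → ZMod 2) → ({x // p x} → ZMod 2) :=
    fun c x => gfun t c x.1 with hΦ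
  have hinj : Function.Injective Φ := by
    intro c c' h
    have hz : c + c' = 0 := by
      apply hker
      intro x hx
      rw [gfun_add]
      have := congrFun h (⟨x, hx⟩ : {x // p x})
      simp only [hΦ] at this
      rw [this, z2add]
    funext S
    exact z2cancel _ _ (congrFun hz S)
  have hcard := Fintype.card_le_of_injective Φ hinj
  rw [Fintype.card_fun, Fintype.card_fun, card_mon n t hn] at hcard
  rw [Fintype.card_subtype] at hcard
  have h2 : (1 : ℕ) < 2 := by norm_num
  exact (Nat.pow_le_pow_iff_right h2).1 (by simpa using hcard)

lemma balanced {n t : ℕ} (hn : n = 2 * t + 1) (f : (Fin n → ZMod 2) → ZMod 2)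
    (hf : AI f = t + 1) :
    (Finset.univ.filter (fun x : Fin n → ZMod 2 => f x = 1)).card = 2 ^ (n - 1) ∧
    (Finset.univ.filter (fun x : Fin n → ZMod 2 => f x = 0)).card = 2 ^ (n - 1) := by
  have h1 : 2 ^ (n - 1) ≤ (Finset.univ.filter (fun x : Fin n → ZMod 2 => f x = 1)).card :=
    onset_ge hn _ (fun c h => kernel1 f hf c h)
  have h0 : 2 ^ (n - 1) ≤ (Finset.univ.filter (fun x : Fin n → ZMod 2 => f x = 0)).card :=
    onset_ge hn _ (fun c h => kernel0 f hf c h)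
  have hsum : (Finset.univ.filter (fun x : Fin n → ZMod 2 => f x = 1)).card
      + (Finset.univ.filter (fun x : Fin n → ZMod 2 => f x = 0)).card = 2 ^ n := by
    have : (Finset.univ.filter (fun x : Fin n → ZMod 2 => f x = 0))
        = (Finset.univ.filter (fun x : Fin n → ZMod 2 => ¬ f x = 1)) := by
      apply Finset.filter_congr
      intro x _
      constructor
      · intro h; rw [h]; decide
      · intro h; exact z2 _ h
    rw [this, Finset.card_filter_add_card_filter_not, Finset.card_univ]
    rw [Fintype.card_fun, Fintype.card_fin]
    norm_num
  have hpow : 2 ^ n = 2 ^ (n - 1) + 2 ^ (n - 1) := by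
    subst hn
    simp only [Nat.add_sub_cancel]
    rw [pow_succ]
    omega
  omega

end S7

namespace S7

lemma isUnit_VEnum {n t N : ℕ} (e : {S : Finset (Fin n) // S.card ≤ t} ≃ Fin N)
    (f : (Fin n → ZMod 2) → ZMod 2) (hf : AI f = t + 1)
    (E : Fin N → (Fin n → ZMod 2)) (hE : ∀ x, f x = 1 → ∃ r, E r = x) :
    IsUnit (Matrix.det (fun r s => VEnum t E r (e.symm s))) := by
  rw [isUnit_iff_ne_zero]
  intro hdet
  obtain ⟨v, hv0, hv⟩ := Matrix.exists_mulVec_eq_zero_iff.2 hdet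
  apply hv0
  have hc : (v ∘ e) = 0 := by
    apply kernel1 f hf
    intro x hx
    obtain ⟨r, rfl⟩ := hE x hx
    have h0 := congrFun hv r
    simp only [Matrix.mulVec, dotProduct, Pi.zero_apply] at h0
    rw [← h0]
    unfold gfun
    rw [← Equiv.sum_comp e.symm
      (fun S => (v ∘ e) S * ∏ i ∈ S.1, E r i)]
    apply Finset.sum_congr rfl
    intro s _
    simp only [Function.comp_apply, Equiv.apply_symm_apply, VEnum]
    rw [mul_comm]
  funext s
  have := congrFun hc (e.symm s)
  simpa using this

lemma det_flip {N k : ℕ} (W : Matrix (Fin N) (Fin N) (ZMod 2)) (B : Finset (Fin N))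
    (hB : B.card = k) (i : Fin k → Fin N) :
    Matrix.det (fun r s => if hr : r ∈ B then W (i ((B.orderIsoOfFin hB).symm ⟨r, hr⟩)) s
        else if r = s then (1:ZMod 2) else 0)
      = (W.submatrix i (fun a => ((B.orderIsoOfFin hB a : Fin N)))).det := by
  classical
  set M : Matrix (Fin N) (Fin N) (ZMod 2) :=
    fun r s => if hr : r ∈ B then W (i ((B.orderIsoOfFin hB).symm ⟨r, hr⟩)) s
        else if r = s then (1:ZMod 2) else 0 with hM
  set j : Fin k → Fin N := fun a => ((B.orderIsoOfFin hB a : Fin N)) with hj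
  have hjB : ∀ a, j a ∈ B := fun a => (B.orderIsoOfFin hB a).2
  let e2 : Fin k ⊕ {x : Fin N // x ∉ B} ≃ Fin N := by
    apply Equiv.ofBijective (Sum.elim j Subtype.val)
    constructor
    · rintro (a | x) (b | y) h
      · simp only [Sum.elim_inl] at h
        congr
        exact (B.orderIsoOfFin hB).injective (Subtype.ext h)
      · simp only [Sum.elim_inl, Sum.elim_inr] at h
        exact absurd (h ▸ hjB a) y.2
      · simp only [Sum.elim_inl, Sum.elim_inr] at h
        exact absurd (h.symm ▸ hjB b) x.2
      · simp only [Sum.elim_inr] at h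
        exact congrArg Sum.inr (Subtype.ext h)
    · intro r
      by_cases hr : r ∈ B
      · refine ⟨Sum.inl ((B.orderIsoOfFin hB).symm ⟨r, hr⟩), ?_⟩
        show j ((B.orderIsoOfFin hB).symm ⟨r, hr⟩) = r
        show ((B.orderIsoOfFin hB) ((B.orderIsoOfFin hB).symm ⟨r, hr⟩) : Fin N) = r
        rw [OrderIso.apply_symm_apply]
      · exact ⟨Sum.inr ⟨r, hr⟩, rfl⟩
  have hsub : M.submatrix e2 e2 =
      Matrix.fromBlocks (W.submatrix i j)
        (fun a (x : {x : Fin N // x ∉ B}) => W (i a) x.1)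
        0 1 := by
    ext rr ss
    rcases rr with a | x <;> rcases ss with b | y
    · show M (j a) (j b) = W (i a) (j b)
      have hsymm : (B.orderIsoOfFin hB).symm ⟨j a, hjB a⟩ = a := by
        have : (⟨j a, hjB a⟩ : {x // x ∈ B}) = B.orderIsoOfFin hB a := Subtype.ext rfl
        rw [this, OrderIso.symm_apply_apply]
      show (if hr : j a ∈ B then W (i ((B.orderIsoOfFin hB).symm ⟨j a, hr⟩)) (j b)
        else if j a = j b then (1:ZMod 2) else 0) = W (i a) (j b)
      rw [dif_pos (hjB a), hsymm]
    · show (if hr : j a ∈ B then W (i ((B.orderIsoOfFin hB).symm ⟨j a, hr⟩)) y.1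
        else if j a = y.1 then (1:ZMod 2) else 0) = W (i a) y.1
      have hsymm : (B.orderIsoOfFin hB).symm ⟨j a, hjB a⟩ = a := by
        have : (⟨j a, hjB a⟩ : {x // x ∈ B}) = B.orderIsoOfFin hB a := Subtype.ext rfl
        rw [this, OrderIso.symm_apply_apply]
      rw [dif_pos (hjB a), hsymm]
    · show (if hr : x.1 ∈ B then W (i ((B.orderIsoOfFin hB).symm ⟨x.1, hr⟩)) (j b)
        else if x.1 = j b then (1:ZMod 2) else 0) = 0
      rw [dif_neg x.2, if_neg]
      intro h
      exact x.2 (h ▸ hjB b)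
    · show (if hr : x.1 ∈ B then W (i ((B.orderIsoOfFin hB).symm ⟨x.1, hr⟩)) y.1
        else if x.1 = y.1 then (1:ZMod 2) else 0) = (1 : Matrix _ _ (ZMod 2)) x y
      rw [dif_neg x.2]
      by_cases h : x = y
      · rw [if_pos (congrArg Subtype.val h), h, Matrix.one_apply_eq]
      · rw [if_neg (fun h' => h (Subtype.ext h')), Matrix.one_apply_ne h]
  have := Matrix.det_submatrix_equiv_self e2 M
  rw [← this, hsub]
  exact (Matrix.det_fromBlocks_zero₂₁ _ _ _).trans (by rw [Matrix.det_one, mul_one])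

end S7
namespace S7
lemma z2' (x : ZMod 2) (h : x ≠ 0) : x = 1 := by revert x; decide
end S7

/-- every `f` with `AI(f) = t+1` is obtained from `F` by flipping the values at
`Z_{i₁},…,Z_{i_k},Y_{j₁},…,Y_{j_k}` for some `0 ≤ k ≤ 2^{n-1}` and indices
`i₁ < … < i_k`, `j₁ < … < j_k` for which the corresponding `k × k` submatrix of
`W = V(0_F) · V(1_F)⁻¹` is invertible. -/
theorem stmt_7 (n t : ℕ) (hn : n = 2 * t + 1)
    (F : (Fin n → ZMod 2) → ZMod 2) (hF : AI F = t + 1)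
    (Y Z : Fin (2 ^ (n - 1)) → (Fin n → ZMod 2))
    (hYinj : Function.Injective Y) (hYran : Set.range Y = {x | F x = 1})
    (hZinj : Function.Injective Z) (hZran : Set.range Z = {x | F x = 0})
    (W : Matrix (Fin (2 ^ (n - 1))) (Fin (2 ^ (n - 1))) (ZMod 2))
    (hW : W * VEnum t Y = VEnum t Z)
    (f : (Fin n → ZMod 2) → ZMod 2) (hf : AI f = t + 1) :
    ∃ k ≤ 2 ^ (n - 1), ∃ i j : Fin k → Fin (2 ^ (n - 1)),
      StrictMono i ∧ StrictMono j ∧ IsUnit (W.submatrix i j).det ∧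
      f = fun X => if (∃ a, Z (i a) = X) ∨ (∃ a, Y (j a) = X) then F X + 1 else F X := by
  classical
  -- basic range facts
  have hFY : ∀ r, F (Y r) = 1 := fun r => by
    have h : Y r ∈ Set.range Y := ⟨r, rfl⟩
    rw [hYran] at h; exact h
  have hFZ : ∀ r, F (Z r) = 0 := fun r => by
    have h : Z r ∈ Set.range Z := ⟨r, rfl⟩
    rw [hZran] at h; exact h
  have hYcov : ∀ x, F x = 1 → ∃ r, Y r = x := fun x hx => by
    have h : x ∈ Set.range Y := by rw [hYran]; exact hx
    exact h
  have hZcov : ∀ x, F x = 0 → ∃ r, Z r = x := fun x hx => by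
    have h : x ∈ Set.range Z := by rw [hZran]; exact hx
    exact h
  set B : Finset (Fin (2 ^ (n - 1))) := Finset.univ.filter (fun r => f (Y r) = 0) with hBdef
  set A : Finset (Fin (2 ^ (n - 1))) := Finset.univ.filter (fun r => f (Z r) = 1) with hAdef
  -- cardinality bookkeeping
  have hcard1 : (Finset.univ.filter (fun x : Fin n → ZMod 2 => f x = 1)).card = 2 ^ (n - 1) :=
    (S7.balanced hn f hf).1
  have hsplit : ((Finset.univ.filter (fun x : Fin n → ZMod 2 => f x = 1)).filter
        (fun x => F x = 1)).card
      + ((Finset.univ.filter (fun x : Fin n → ZMod 2 => f x = 1)).filter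
        (fun x => ¬ F x = 1)).card = 2 ^ (n - 1) := by
    rw [Finset.card_filter_add_card_filter_not, hcard1]
  have hY1 : ((Finset.univ.filter (fun x : Fin n → ZMod 2 => f x = 1)).filter
        (fun x => F x = 1)).card
      = (Finset.univ.filter (fun r : Fin (2 ^ (n - 1)) => f (Y r) = 1)).card := by
    symm
    apply Finset.card_bij (fun r _ => Y r)
    · intro r hr
      simp only [Finset.mem_filter, Finset.mem_univ, true_and] at hr ⊢
      exact ⟨hr, hFY r⟩
    · intro r _ r' _ h
      exact hYinj h
    · intro x hx
      simp only [Finset.mem_filter, Finset.mem_univ, true_and] at hx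
      obtain ⟨r, rfl⟩ := hYcov x hx.2
      exact ⟨r, by simp only [Finset.mem_filter, Finset.mem_univ, true_and]; exact hx.1, rfl⟩
  have hZ1 : ((Finset.univ.filter (fun x : Fin n → ZMod 2 => f x = 1)).filter
        (fun x => ¬ F x = 1)).card = A.card := by
    symm
    apply Finset.card_bij (fun r _ => Z r)
    · intro r hr
      rw [hAdef] at hr
      simp only [Finset.mem_filter, Finset.mem_univ, true_and] at hr ⊢
      refine ⟨hr, ?_⟩
      rw [hFZ r]
      decide
    · intro r _ r' _ h
      exact hZinj h
    · intro x hx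
      simp only [Finset.mem_filter, Finset.mem_univ, true_and] at hx
      have hx0 : F x = 0 := S7.z2 _ hx.2
      obtain ⟨r, rfl⟩ := hZcov x hx0
      refine ⟨r, ?_, rfl⟩
      rw [hAdef]
      simp only [Finset.mem_filter, Finset.mem_univ, true_and]
      exact hx.1
  have hYB : B.card + (Finset.univ.filter (fun r : Fin (2 ^ (n - 1)) => f (Y r) = 1)).card
      = 2 ^ (n - 1) := by
    have h := Finset.card_filter_add_card_filter_not
      (s := (Finset.univ : Finset (Fin (2 ^ (n - 1)))))
      (p := fun r => f (Y r) = 0)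
    rw [Finset.card_univ, Fintype.card_fin] at h
    have heq : (Finset.univ.filter (fun r : Fin (2 ^ (n - 1)) => ¬ f (Y r) = 0))
        = (Finset.univ.filter (fun r : Fin (2 ^ (n - 1)) => f (Y r) = 1)) := by
      apply Finset.filter_congr
      intro r _
      constructor
      · intro hne; exact S7.z2' _ hne
      · intro h1; rw [h1]; decide
    rw [heq] at h
    rw [hBdef]
    exact h
  have hAB : A.card = B.card := by omega
  -- the selection data
  refine ⟨B.card, ?_, ?_⟩
  · simpa using Finset.card_le_univ B
  have hBk : B.card = B.card := rfl
  set σA := A.orderIsoOfFin hAB with hσA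
  set σB := B.orderIsoOfFin hBk with hσB
  set i : Fin B.card → Fin (2 ^ (n - 1)) := fun a => (σA a : Fin (2 ^ (n - 1))) with hidef
  set j : Fin B.card → Fin (2 ^ (n - 1)) := fun a => (σB a : Fin (2 ^ (n - 1))) with hjdef
  have hiA : ∀ a, i a ∈ A := fun a => (σA a).2
  have hjB : ∀ a, j a ∈ B := fun a => (σB a).2
  have hAi : ∀ r, r ∈ A → ∃ a, i a = r := by
    intro r hr
    refine ⟨σA.symm ⟨r, hr⟩, ?_⟩
    show ((σA (σA.symm ⟨r, hr⟩)) : Fin (2 ^ (n - 1))) = r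
    rw [OrderIso.apply_symm_apply]
  have hBj : ∀ r, r ∈ B → ∃ a, j a = r := by
    intro r hr
    refine ⟨σB.symm ⟨r, hr⟩, ?_⟩
    show ((σB (σB.symm ⟨r, hr⟩)) : Fin (2 ^ (n - 1))) = r
    rw [OrderIso.apply_symm_apply]
  have hsymmB : ∀ a (h : j a ∈ B), σB.symm ⟨j a, h⟩ = a := by
    intro a h
    have h1 : (⟨j a, h⟩ : {x // x ∈ B}) = σB a := Subtype.ext rfl
    rw [h1, OrderIso.symm_apply_apply]
  have hmonoi : StrictMono i := by
    intro a b hab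
    exact Subtype.coe_lt_coe.2 (σA.lt_iff_lt.2 hab)
  have hmonoj : StrictMono j := by
    intro a b hab
    exact Subtype.coe_lt_coe.2 (σB.lt_iff_lt.2 hab)
  refine ⟨i, j, hmonoi, hmonoj, ?_, ?_⟩
  · -- the determinant condition
    have hcardmon : Fintype.card {S : Finset (Fin n) // S.card ≤ t} = 2 ^ (n - 1) :=
      S7.card_mon n t hn
    set e : {S : Finset (Fin n) // S.card ≤ t} ≃ Fin (2 ^ (n - 1)) :=
      Fintype.equivFinOfCardEq hcardmon with hedef
    set Y' : Fin (2 ^ (n - 1)) → (Fin n → ZMod 2) :=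
      fun r => if hr : r ∈ B then Z (i (σB.symm ⟨r, hr⟩)) else Y r with hY'def
    set M : Matrix (Fin (2 ^ (n - 1))) (Fin (2 ^ (n - 1))) (ZMod 2) :=
      fun r s => if hr : r ∈ B then W (i ((B.orderIsoOfFin hBk).symm ⟨r, hr⟩)) s
        else if r = s then (1 : ZMod 2) else 0 with hMdef
    set VYq : Matrix (Fin (2 ^ (n - 1))) (Fin (2 ^ (n - 1))) (ZMod 2) :=
      fun r s => VEnum t Y r (e.symm s) with hVYqdef
    set VY'q : Matrix (Fin (2 ^ (n - 1))) (Fin (2 ^ (n - 1))) (ZMod 2) :=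
      fun r s => VEnum t Y' r (e.symm s) with hVY'qdef
    have hdetY : IsUnit VYq.det := S7.isUnit_VEnum e F hF Y hYcov
    have hY'cov : ∀ x, f x = 1 → ∃ r, Y' r = x := by
      intro x hx
      rcases S7.z2or (F x) with hFx | hFx
      · obtain ⟨s, rfl⟩ := hZcov x hFx
        have hsA : s ∈ A := by
          rw [hAdef]
          simp only [Finset.mem_filter, Finset.mem_univ, true_and]
          exact hx
        obtain ⟨a, ha⟩ := hAi s hsA
        refine ⟨j a, ?_⟩
        show (if hr : j a ∈ B then Z (i (σB.symm ⟨j a, hr⟩)) else Y (j a)) = Z s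
        rw [dif_pos (hjB a), hsymmB a (hjB a), ha]
      · obtain ⟨r, rfl⟩ := hYcov x hFx
        refine ⟨r, ?_⟩
        have hrB : r ∉ B := by
          intro h
          rw [hBdef] at h
          simp only [Finset.mem_filter, Finset.mem_univ, true_and] at h
          rw [hx] at h
          exact absurd h (by decide)
        show (if hr : r ∈ B then Z (i (σB.symm ⟨r, hr⟩)) else Y r) = Y r
        rw [dif_neg hrB]
    have hdetY' : IsUnit VY'q.det := S7.isUnit_VEnum e f hf Y' hY'cov
    have hWq : ∀ r s, (∑ u, W r u * VEnum t Y u (e.symm s)) = VEnum t Z r (e.symm s) := by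
      intro r s
      have h := congrFun (congrFun hW r) (e.symm s)
      rw [Matrix.mul_apply] at h
      exact h
    have hMV : M * VYq = VY'q := by
      ext r s
      rw [Matrix.mul_apply]
      by_cases hr : r ∈ B
      · have hM : ∀ u, M r u = W (i (σB.symm ⟨r, hr⟩)) u := fun u => by
          show (if h : r ∈ B then W (i (σB.symm ⟨r, h⟩)) u else if r = u then (1:ZMod 2) else 0)
            = W (i (σB.symm ⟨r, hr⟩)) u
          rw [dif_pos hr]
        calc ∑ u, M r u * VYq u s
            = ∑ u, W (i (σB.symm ⟨r, hr⟩)) u * VEnum t Y u (e.symm s) := by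
              apply Finset.sum_congr rfl
              intro u _
              rw [hM u]
          _ = VEnum t Z (i (σB.symm ⟨r, hr⟩)) (e.symm s) := hWq _ s
          _ = VY'q r s := by
              show _ = VEnum t Y' r (e.symm s)
              unfold VEnum
              have hYr : Y' r = Z (i (σB.symm ⟨r, hr⟩)) := by
                show (if h : r ∈ B then Z (i (σB.symm ⟨r, h⟩)) else Y r) = _
                rw [dif_pos hr]
              rw [hYr]
      · have hM : ∀ u, M r u * VYq u s = if r = u then VYq u s else 0 := fun u => by
          show (if h : r ∈ B then W (i (σB.symm ⟨r, h⟩)) u else if r = u then (1:ZMod 2) else 0)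
              * VYq u s = if r = u then VYq u s else 0
          rw [dif_neg hr]
          by_cases h : r = u
          · rw [if_pos h, if_pos h, one_mul]
          · rw [if_neg h, if_neg h, zero_mul]
        rw [Finset.sum_congr rfl (fun u _ => hM u), Finset.sum_ite_eq, if_pos (Finset.mem_univ r)]
        show VYq r s = VY'q r s
        have hYr : Y' r = Y r := by
          show (if h : r ∈ B then Z (i (σB.symm ⟨r, h⟩)) else Y r) = Y r
          rw [dif_neg hr]
        show VEnum t Y r (e.symm s) = VEnum t Y' r (e.symm s)
        unfold VEnum
        rw [hYr]
    have hdetmul : VY'q.det = M.det * VYq.det := by rw [← hMV, Matrix.det_mul]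
    have hMdet : IsUnit M.det := by
      rw [hdetmul] at hdetY'
      exact isUnit_of_mul_isUnit_left hdetY'
    have hflip := S7.det_flip W B hBk i
    rw [hMdef] at hMdet
    rw [hflip] at hMdet
    exact hMdet
  · -- the function formula
    funext X
    rcases S7.z2or (F X) with hFX | hFX
    · obtain ⟨s, rfl⟩ := hZcov X hFX
      have hnoy : ¬ ∃ a, Y (j a) = Z s := by
        rintro ⟨a, ha⟩
        have h := hFY (j a)
        rw [ha, hFX] at h
        exact absurd h (by decide)
      by_cases hs : f (Z s) = 1
      · have hsA : s ∈ A := by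
          rw [hAdef]; simp only [Finset.mem_filter, Finset.mem_univ, true_and]; exact hs
        obtain ⟨a, ha⟩ := hAi s hsA
        rw [if_pos (Or.inl ⟨a, by rw [ha]⟩), hFX, hs]
        decide
      · have hcond : ¬ ((∃ a, Z (i a) = Z s) ∨ ∃ a, Y (j a) = Z s) := by
          rintro (⟨a, ha⟩ | h)
          · have hia : i a = s := hZinj ha
            have := hiA a
            rw [hia, hAdef] at this
            simp only [Finset.mem_filter, Finset.mem_univ, true_and] at this
            exact hs this
          · exact hnoy h
        rw [if_neg hcond, hFX]
        exact S7.z2 _ hs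
    · obtain ⟨r, rfl⟩ := hYcov X hFX
      have hnoz : ¬ ∃ a, Z (i a) = Y r := by
        rintro ⟨a, ha⟩
        have h := hFZ (i a)
        rw [ha, hFX] at h
        exact absurd h (by decide)
      by_cases hs : f (Y r) = 0
      · have hrB : r ∈ B := by
          rw [hBdef]; simp only [Finset.mem_filter, Finset.mem_univ, true_and]; exact hs
        obtain ⟨a, ha⟩ := hBj r hrB
        rw [if_pos (Or.inr ⟨a, by rw [ha]⟩), hFX, hs]
        decide
      · have hcond : ¬ ((∃ a, Z (i a) = Y r) ∨ ∃ a, Y (j a) = Y r) := by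
          rintro (h | ⟨a, ha⟩)
          · exact hnoz h
          · have hja : j a = r := hYinj ha
            have := hjB a
            rw [hja, hBdef] at this
            simp only [Finset.mem_filter, Finset.mem_univ, true_and] at this
            exact hs this
        rw [if_neg hcond, hFX]
        exact S7.z2' _ hs
end

section
/- Let n = 2t+1 be an odd positive integer, let F be a Boolean function of n variables with AI(F) = t+1, enumerate 1_F = {Y_1,…,Y_{2^{n−1}}} and 0_F = {Z_1,…,Z_{2^{n−1}}}, and set W = V(0_F)·V(1_F)^{−1}. Fix 1 ≤ k ≤ 2^{n−1}, indices 1 ≤ i_1 < … < i_k ≤ 2^{n−1} and 1 ≤ j_1 < … < j_k ≤ 2^{n−1}, and let f be the Boolean function obtained from F by flipping the values at Z_{i_1},…,Z_{i_k}, Y_{j_1},…,Y_{j_k}. Then the 2^{n−1} × 2^{n−1} matrix V(1_f), whose rows are v(Z_{i_1}),…,v(Z_{i_k}) together with v(Y) for Y ∈ 1_F \ {Y_{j_1},…,Y_{j_k}}, is invertible over F_2 if and only if the k × k submatrix of W with rows i_1,…,i_k and columns j_1,…,j_k is invertible over F_2. -/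
lemma anf_inner {n : ℕ} (S T : Finset (Fin n)) :
    ∑ x ∈ Finset.univ.filter (fun x : Fin n → ZMod 2 => ∀ i, x i = 1 → i ∈ S),
      ∏ i ∈ T, x i = if T = S then 1 else 0 := by
  have hset : Finset.univ.filter (fun x : Fin n → ZMod 2 => ∀ i, x i = 1 → i ∈ S)
      = Fintype.piFinset (fun i => if i ∈ S then (Finset.univ : Finset (ZMod 2)) else {0}) := by
    ext x
    simp only [Finset.mem_filter, Finset.mem_univ, true_and, Fintype.mem_piFinset]
    constructor
    · intro h i
      by_cases hi : i ∈ S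
      · simp [hi]
      · simp only [hi, if_false, Finset.mem_singleton]
        have := h i
        revert this
        rcases (by decide : ∀ v : ZMod 2, v = 0 ∨ v = 1) (x i) with h0 | h1
        · simp [h0]
        · simp [h1, hi]
    · intro h i hx
      by_contra hi
      have := h i
      simp [hi, hx] at this
  rw [hset]
  have := (Finset.prod_univ_sum (fun i => if i ∈ S then (Finset.univ : Finset (ZMod 2)) else {0})
    (fun i v => if i ∈ T then v else 1)).symm
  calc ∑ x ∈ Fintype.piFinset (fun i => if i ∈ S then (Finset.univ : Finset (ZMod 2)) else {0}),
        ∏ i ∈ T, x i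
      = ∑ x ∈ Fintype.piFinset (fun i => if i ∈ S then (Finset.univ : Finset (ZMod 2)) else {0}),
        ∏ i, (if i ∈ T then x i else 1) := by
        refine Finset.sum_congr rfl fun x _ => ?_
        rw [Finset.prod_ite_mem, Finset.univ_inter]
    _ = ∏ i, ∑ v ∈ (if i ∈ S then (Finset.univ : Finset (ZMod 2)) else {0}),
          (if i ∈ T then v else 1) := this
    _ = ∏ i, (if (i ∈ T ↔ i ∈ S) then (1 : ZMod 2) else 0) := by
        refine Finset.prod_congr rfl fun x _ => ?_
        by_cases hS : x ∈ S <;> by_cases hT : x ∈ T <;> simp [hS, hT] <;> decide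
    _ = if T = S then 1 else 0 := by
        by_cases h : T = S
        · simp [h]
        · rw [if_neg h]
          obtain ⟨x, hx⟩ : ∃ x, ¬(x ∈ T ↔ x ∈ S) := by
            by_contra hc
            push_neg at hc
            exact h (Finset.ext hc)
          exact Finset.prod_eq_zero (Finset.mem_univ x) (by simp [hx])

lemma anf_sum {n : ℕ} (c : Finset (Fin n) → ZMod 2) (S : Finset (Fin n)) :
    anfCoeff (fun x => ∑ T : Finset (Fin n), c T * ∏ i ∈ T, x i) S = c S := by
  unfold anfCoeff
  rw [Finset.sum_comm]
  calc ∑ T : Finset (Fin n), ∑ x ∈ Finset.univ.filter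
        (fun x : Fin n → ZMod 2 => ∀ i, x i = 1 → i ∈ S), c T * ∏ i ∈ T, x i
      = ∑ T : Finset (Fin n), c T * (if T = S then 1 else 0) := by
        refine Finset.sum_congr rfl fun T _ => ?_
        rw [← Finset.mul_sum, anf_inner]
    _ = c S := by simp


lemma card_monomials (n t : ℕ) (hn : n = 2 * t + 1) :
    Fintype.card {S : Finset (Fin n) // S.card ≤ t} = 2 ^ (n - 1) := by
  rw [Fintype.card_subtype]
  have hset : Finset.univ.filter (fun S : Finset (Fin n) => S.card ≤ t)
      = (Finset.range (t + 1)).biUnion (fun d => Finset.powersetCard d Finset.univ) := by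
    ext S
    simp [Finset.mem_powersetCard, Nat.lt_succ_iff, eq_comm]
  rw [hset, Finset.card_biUnion]
  · have : ∀ d, (Finset.powersetCard d (Finset.univ : Finset (Fin n))).card = n.choose d := by
      intro d; rw [Finset.card_powersetCard, Finset.card_univ, Fintype.card_fin]
    simp_rw [this]
    subst hn
    rw [Nat.sum_range_choose_halfway t]
    have : 2 * t + 1 - 1 = 2 * t := by omega
    rw [this, pow_mul]
    norm_num
  · intro a _ b _ hab
    refine Finset.disjoint_left.mpr fun S hS hS' => ?_
    rw [Finset.mem_powersetCard] at hS hS'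
    exact hab (hS.2 ▸ hS'.2 ▸ rfl)

lemma sq_bij {σ : Type*} [Fintype σ] [DecidableEq σ] (M : Matrix σ σ (ZMod 2)) :
    Function.Bijective M.mulVecLin ↔ IsUnit M.det := by
  constructor
  · intro h
    rw [← Matrix.isUnit_iff_isUnit_det, ← Matrix.mulVec_injective_iff_isUnit]
    exact h.injective
  · intro h
    rw [← Matrix.isUnit_iff_isUnit_det, ← Matrix.mulVec_injective_iff_isUnit] at h
    exact ⟨h, (LinearMap.injective_iff_surjective).mp h⟩

section AuxBij

variable {R : Type*} [CommRing R]

lemma bij_row {l m k : Type*} [Fintype l] (M : Matrix k l R) (f : m → k)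
    (hf : Function.Bijective f) :
    Function.Bijective (M.submatrix f id).mulVecLin ↔ Function.Bijective M.mulVecLin := by
  have hcomp : (fun v => (M.submatrix f id).mulVecLin v)
      = (fun g : k → R => g ∘ f) ∘ (fun v => M.mulVecLin v) := by
    funext v; funext r
    simp [Matrix.mulVecLin_apply, Matrix.mulVec, dotProduct, Matrix.submatrix]
  have hE : Function.Bijective (fun g : k → R => g ∘ f) := by
    have : (fun g : k → R => g ∘ f)
        = ⇑((Equiv.ofBijective f hf).symm.arrowCongr (Equiv.refl R)) := by
      funext g; funext r
      simp [Equiv.arrowCongr]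
    rw [this]
    exact (Equiv.ofBijective f hf).symm.arrowCongr (Equiv.refl R) |>.bijective
  constructor
  · intro h
    have := (Function.Bijective.of_comp_iff' hE (fun v => M.mulVecLin v)).mp (by
      rw [← hcomp]; exact h)
    exact this
  · intro h
    show Function.Bijective (fun v => (M.submatrix f id).mulVecLin v)
    rw [hcomp]
    exact hE.comp h

lemma bij_col {l m k : Type*} [Fintype l] [Fintype m] (M : Matrix k l R) (f : m ≃ l) :
    Function.Bijective (M.submatrix id ⇑f).mulVecLin ↔ Function.Bijective M.mulVecLin := by
  have hcomp : (fun v => (M.submatrix id ⇑f).mulVecLin v)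
      = (fun v => M.mulVecLin v) ∘ (fun v : m → R => v ∘ ⇑f.symm) := by
    funext v; funext r
    simp only [Function.comp, Matrix.mulVecLin_apply, Matrix.mulVec, dotProduct,
      Matrix.submatrix_apply, id_eq]
    exact Fintype.sum_equiv f (fun c => M r (f c) * v c)
      (fun c' => M r c' * v (f.symm c')) (fun x => by simp)
  have hE : Function.Bijective (fun v : m → R => v ∘ ⇑f.symm) := by
    have : (fun v : m → R => v ∘ ⇑f.symm)
        = ⇑(f.arrowCongr (Equiv.refl R)) := by
      funext g; funext r
      simp [Equiv.arrowCongr]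
    rw [this]
    exact (f.arrowCongr (Equiv.refl R)).bijective
  constructor
  · intro h
    have := (Function.Bijective.of_comp_iff (fun v => M.mulVecLin v) hE).mp (by
      rw [← hcomp]; exact h)
    exact this
  · intro h
    show Function.Bijective (fun v => (M.submatrix id ⇑f).mulVecLin v)
    rw [hcomp]
    exact h.comp hE

lemma bij_mul {l m k : Type*} [Fintype l] [Fintype m] (B : Matrix k m R) (A : Matrix m l R)
    (hA : Function.Bijective A.mulVecLin) :
    Function.Bijective (B * A).mulVecLin ↔ Function.Bijective B.mulVecLin := by
  have : ⇑(B * A).mulVecLin = ⇑B.mulVecLin ∘ ⇑A.mulVecLin := by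
    rw [Matrix.mulVecLin_mul]; rfl
  rw [show Function.Bijective (B * A).mulVecLin
      ↔ Function.Bijective (⇑B.mulVecLin ∘ ⇑A.mulVecLin) from by rw [← this]]
  exact Function.Bijective.of_comp_iff _ hA

end AuxBij

lemma VEnum_bij (n t : ℕ) (hn : n = 2 * t + 1)
    (F : (Fin n → ZMod 2) → ZMod 2) (hF : AI F = t + 1)
    (Y : Fin (2 ^ (n - 1)) → (Fin n → ZMod 2)) (hYran : Set.range Y = {x | F x = 1}) :
    Function.Bijective (VEnum t Y).mulVecLin := by
  have hinj : Function.Injective (VEnum t Y).mulVecLin := by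
    rw [← LinearMap.ker_eq_bot, Matrix.ker_mulVecLin_eq_bot_iff]
    intro v hv
    by_contra hv0
    set c : Finset (Fin n) → ZMod 2 := fun T => if h : T.card ≤ t then v ⟨T, h⟩ else 0 with hc
    set g : (Fin n → ZMod 2) → ZMod 2 := fun x => ∑ T : Finset (Fin n), c T * ∏ i ∈ T, x i
      with hg
    have hanf : ∀ S, anfCoeff g S = c S := fun S => anf_sum c S
    have hgeval : ∀ x, g x = ∑ S : {S : Finset (Fin n) // S.card ≤ t}, v S * ∏ i ∈ S.1, x i := by
      intro x
      have h1 : g x = ∑ T ∈ Finset.univ.filter (fun T : Finset (Fin n) => T.card ≤ t),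
          c T * ∏ i ∈ T, x i := by
        symm
        apply Finset.sum_subset (Finset.filter_subset _ _)
        intro T _ hT
        simp only [Finset.mem_filter, Finset.mem_univ, true_and] at hT
        simp [hc, dif_neg hT]
      rw [h1, Finset.sum_subtype (p := fun T : Finset (Fin n) => T.card ≤ t)
        (Finset.univ.filter (fun T : Finset (Fin n) => T.card ≤ t))
        (by simp) (fun T => c T * ∏ i ∈ T, x i)]
      refine Finset.sum_congr rfl fun S _ => ?_
      simp [hc, dif_pos S.2]
    -- g is nonzero
    obtain ⟨S0, hS0⟩ := Function.ne_iff.mp hv0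
    have hcS0 : c S0.1 ≠ 0 := by simpa [hc, dif_pos S0.2] using hS0
    have hgne : g ≠ 0 := by
      intro hg0
      apply hcS0
      rw [← hanf S0.1, hg0]
      simp [anfCoeff]
    -- g annihilates F
    have hann : ∀ x, F x * g x = 0 := by
      intro x
      rcases (by decide : ∀ u : ZMod 2, u = 0 ∨ u = 1) (F x) with h0 | h1
      · rw [h0, zero_mul]
      · have hx : x ∈ Set.range Y := by rw [hYran]; exact h1
        obtain ⟨r, rfl⟩ := hx
        have : g (Y r) = 0 := by
          rw [hgeval]
          have h2 : (VEnum t Y).mulVec v r = 0 := by rw [hv]; rfl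
          rw [← h2]
          simp [Matrix.mulVec, dotProduct, VEnum, mul_comm]
        rw [this, mul_zero]
    -- degree bound
    have hdeg : degB g ≤ t := by
      apply Finset.sup_le
      intro S hS
      simp only [Finset.mem_filter, Finset.mem_univ, true_and] at hS
      rw [hanf] at hS
      by_contra hcard
      exact hS (by simp [hc, dif_neg (fun h => hcard h)])
    have hAI : AI F ≤ degB g := Nat.sInf_le ⟨g, Or.inl ⟨hgne, hann⟩, rfl⟩
    rw [hF] at hAI
    omega
  refine ⟨hinj, ?_⟩
  exact (LinearMap.injective_iff_surjective_of_finrank_eq_finrank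
    (by rw [Module.finrank_fintype_fun_eq_card, Module.finrank_fintype_fun_eq_card,
      card_monomials n t hn, Fintype.card_fin])).mp hinj

lemma main_aux (n t : ℕ) (hn : n = 2 * t + 1)
    (F : (Fin n → ZMod 2) → ZMod 2) (hF : AI F = t + 1)
    (Y Z : Fin (2 ^ (n - 1)) → (Fin n → ZMod 2))
    (hYinj : Function.Injective Y) (hYran : Set.range Y = {x | F x = 1})
    (hZinj : Function.Injective Z) (hZran : Set.range Z = {x | F x = 0})
    (W : Matrix (Fin (2 ^ (n - 1))) (Fin (2 ^ (n - 1))) (ZMod 2))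
    (hW : W * VEnum t Y = VEnum t Z)
    (k : ℕ) (i j : Fin k → Fin (2 ^ (n - 1)))
    (hiinj : Function.Injective i) (hjinj : Function.Injective j)
    (T : Set (Fin n → ZMod 2))
    (hT : ∀ x, x ∈ T ↔ (∃ a, Z (i a) = x) ∨ (∃ b, (∀ a, j a ≠ b) ∧ Y b = x)) :
    Function.Bijective (Matrix.mulVecLin (VSet t T)) ↔ IsUnit (W.submatrix i j).det := by
  classical
  have hFZ : ∀ r, F (Z r) = 0 := fun r => by
    have : Z r ∈ Set.range Z := ⟨r, rfl⟩
    rwa [hZran] at this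
  have hFY : ∀ r, F (Y r) = 1 := fun r => by
    have : Y r ∈ Set.range Y := ⟨r, rfl⟩
    rwa [hYran] at this
  have hZY : ∀ r s, Z r ≠ Y s := by
    intro r s h
    have h0 := hFZ r
    rw [h, hFY s] at h0
    exact one_ne_zero h0
  -- the index type for the rows of V(1_f)
  have hmem : ∀ x : (Fin k) ⊕ {b : Fin (2 ^ (n - 1)) // ∀ a, j a ≠ b},
      Sum.elim (fun a => Z (i a)) (fun b => Y b.1) x ∈ T := by
    intro x
    rw [hT]
    cases x with
    | inl a => exact Or.inl ⟨a, rfl⟩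
    | inr b => exact Or.inr ⟨b.1, b.2, rfl⟩
  have heT : Function.Bijective (fun x : (Fin k) ⊕ {b : Fin (2 ^ (n - 1)) // ∀ a, j a ≠ b} =>
      (⟨Sum.elim (fun a => Z (i a)) (fun b => Y b.1) x, hmem x⟩ : T)) := by
    constructor
    · intro x y hxy
      have h := congrArg Subtype.val hxy
      cases x with
      | inl a => cases y with
        | inl a' => exact congrArg Sum.inl (hiinj (hZinj h))
        | inr b' => exact absurd h (hZY _ _)
      | inr b => cases y with
        | inl a' => exact absurd h.symm (hZY _ _)
        | inr b' => exact congrArg Sum.inr (Subtype.ext (hYinj h))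
    · rintro ⟨x, hx⟩
      rw [hT] at hx
      rcases hx with ⟨a, ha⟩ | ⟨b, hb1, hb2⟩
      · exact ⟨Sum.inl a, Subtype.ext ha⟩
      · exact ⟨Sum.inr ⟨b, hb1⟩, Subtype.ext hb2⟩
  set e : ((Fin k) ⊕ {b : Fin (2 ^ (n - 1)) // ∀ a, j a ≠ b}) ≃ T :=
    Equiv.ofBijective _ heT with he
  -- the coefficient matrix B
  set B : Matrix ((Fin k) ⊕ {b : Fin (2 ^ (n - 1)) // ∀ a, j a ≠ b}) (Fin (2 ^ (n - 1)))
      (ZMod 2) :=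
    Matrix.of (Sum.elim (fun a => W (i a)) (fun b c => if (b : Fin (2 ^ (n - 1))) = c then 1
      else 0)) with hB
  have hVT : VSet t T = (B * VEnum t Y).submatrix (fun x : T => e.symm x) id := by
    funext x S
    have hx : Sum.elim (fun a => Z (i a)) (fun b => Y b.1) (e.symm x)
        = (x : Fin n → ZMod 2) := congrArg Subtype.val (e.apply_symm_apply x)
    rw [Matrix.submatrix_apply, id_eq]
    cases h : e.symm x with
    | inl a =>
      rw [h] at hx
      simp only [Sum.elim_inl] at hx
      have : (B * VEnum t Y) (Sum.inl a) S = (W * VEnum t Y) (i a) S := by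
        rw [Matrix.mul_apply, Matrix.mul_apply]
        exact Finset.sum_congr rfl fun c _ => by rw [hB]; rfl
      rw [this, hW]
      show (∏ m ∈ S.1, (x : Fin n → ZMod 2) m) = ∏ m ∈ S.1, Z (i a) m
      rw [hx]
    | inr b =>
      rw [h] at hx
      simp only [Sum.elim_inr] at hx
      have : (B * VEnum t Y) (Sum.inr b) S = VEnum t Y b.1 S := by
        rw [Matrix.mul_apply]
        simp [hB, Matrix.of_apply, ite_mul, Finset.sum_ite_eq]
      rw [this]
      show (∏ m ∈ S.1, (x : Fin n → ZMod 2) m) = ∏ m ∈ S.1, Y b.1 m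
      rw [hx]
  rw [hVT]
  rw [bij_row (B * VEnum t Y) (fun x : T => e.symm x) e.symm.bijective]
  rw [bij_mul B (VEnum t Y) (VEnum_bij n t hn F hF Y hYran)]
  -- column reindexing
  have hecb : Function.Bijective (Sum.elim j (fun b : {b : Fin (2 ^ (n - 1)) // ∀ a, j a ≠ b} =>
      (b : Fin (2 ^ (n - 1))))) := by
    constructor
    · intro x y hxy
      cases x with
      | inl a => cases y with
        | inl a' => exact congrArg Sum.inl (hjinj hxy)
        | inr b' => exact absurd hxy (b'.2 a)
      | inr b => cases y with
        | inl a' => exact absurd hxy.symm (b.2 a')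
        | inr b' => exact congrArg Sum.inr (Subtype.ext hxy)
    · intro b
      by_cases hb : ∃ a, j a = b
      · obtain ⟨a, ha⟩ := hb
        exact ⟨Sum.inl a, ha⟩
      · push_neg at hb
        exact ⟨Sum.inr ⟨b, hb⟩, rfl⟩
  set ec : ((Fin k) ⊕ {b : Fin (2 ^ (n - 1)) // ∀ a, j a ≠ b}) ≃ Fin (2 ^ (n - 1)) :=
    Equiv.ofBijective _ hecb with hec
  rw [← bij_col B ec]
  have hblocks : B.submatrix id ⇑ec
      = Matrix.fromBlocks (W.submatrix i j)
          (Matrix.of fun (a : Fin k) (b : {b : Fin (2 ^ (n - 1)) // ∀ a, j a ≠ b}) => W (i a) b.1)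
          0 1 := by
    funext r c
    cases r with
    | inl a => cases c with
      | inl a' => rfl
      | inr b' => rfl
    | inr b => cases c with
      | inl a' =>
        show (if (b : Fin (2 ^ (n - 1))) = j a' then (1 : ZMod 2) else 0) = 0
        rw [if_neg (fun h => b.2 a' h.symm)]
      | inr b' =>
        show (if (b : Fin (2 ^ (n - 1))) = (b' : Fin (2 ^ (n - 1))) then (1 : ZMod 2) else 0)
          = (1 : Matrix _ _ (ZMod 2)) b b'
        rw [Matrix.one_apply]
        by_cases h : b = b'
        · rw [if_pos h, if_pos (congrArg Subtype.val h)]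
        · rw [if_neg h, if_neg (fun h' => h (Subtype.ext h'))]
  rw [sq_bij, hblocks, Matrix.det_fromBlocks_zero₂₁, Matrix.det_one, mul_one]

/-- with `W = V(0_F) · V(1_F)⁻¹` and `f` obtained from `F` by flipping the
values at `Z_{i₁},…,Z_{i_k},Y_{j₁},…,Y_{j_k}`, the matrix `V(1_f)` is invertible over `F_2`
iff the `k × k` submatrix of `W` with rows `i₁,…,i_k` and columns `j₁,…,j_k` is invertible. -/
theorem stmt_8 (n t : ℕ) (hn : n = 2 * t + 1)
    (F : (Fin n → ZMod 2) → ZMod 2) (hF : AI F = t + 1)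
    (Y Z : Fin (2 ^ (n - 1)) → (Fin n → ZMod 2))
    (hYinj : Function.Injective Y) (hYran : Set.range Y = {x | F x = 1})
    (hZinj : Function.Injective Z) (hZran : Set.range Z = {x | F x = 0})
    (W : Matrix (Fin (2 ^ (n - 1))) (Fin (2 ^ (n - 1))) (ZMod 2))
    (hW : W * VEnum t Y = VEnum t Z)
    (k : ℕ) (hk1 : 1 ≤ k) (hk2 : k ≤ 2 ^ (n - 1))
    (i j : Fin k → Fin (2 ^ (n - 1))) (hi : StrictMono i) (hj : StrictMono j) :
    Function.Bijective (Matrix.mulVecLin (VSet t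
        {X | (if (∃ a, Z (i a) = X) ∨ (∃ a, Y (j a) = X) then F X + 1 else F X) = 1}))
      ↔ IsUnit (W.submatrix i j).det := by
  have hFZ : ∀ r, F (Z r) = 0 := fun r => by
    have : Z r ∈ Set.range Z := ⟨r, rfl⟩
    rwa [hZran] at this
  have hFY : ∀ r, F (Y r) = 1 := fun r => by
    have : Y r ∈ Set.range Y := ⟨r, rfl⟩
    rwa [hYran] at this
  apply main_aux n t hn F hF Y Z hYinj hYran hZinj hZran W hW k i j hi.injective hj.injective
  intro x
  show (if (∃ a, Z (i a) = x) ∨ (∃ a, Y (j a) = x) then F x + 1 else F x) = 1 ↔ _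
  by_cases hc : (∃ a, Z (i a) = x) ∨ (∃ a, Y (j a) = x)
  · rw [if_pos hc]
    constructor
    · intro h1
      have hFx : F x = 0 := by
        rcases (by decide : ∀ u : ZMod 2, u = 0 ∨ u = 1) (F x) with h | h
        · exact h
        · rw [h] at h1
          exact absurd h1 (by decide)
      rcases hc with h | ⟨a, ha⟩
      · exact Or.inl h
      · rw [← ha, hFY] at hFx
        exact absurd hFx (by decide)
    · rintro (⟨a, ha⟩ | ⟨b, hb1, hb2⟩)
      · rw [← ha, hFZ]
        decide
      · exfalso
        rcases hc with ⟨a, ha⟩ | ⟨a, ha⟩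
        · have := hFZ (i a)
          rw [ha, ← hb2, hFY] at this
          exact absurd this (by decide)
        · rw [← hb2] at ha
          exact hb1 a (hYinj ha)
  · rw [if_neg hc]
    constructor
    · intro h1
      have : x ∈ Set.range Y := by rw [hYran]; exact h1
      obtain ⟨b, rfl⟩ := this
      exact Or.inr ⟨b, fun a hab => hc (Or.inr ⟨a, by rw [hab]⟩), rfl⟩
    · rintro (⟨a, ha⟩ | ⟨b, hb1, hb2⟩)
      · exact absurd (Or.inl ⟨a, ha⟩) hc
      · rw [← hb2, hFY]
end
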